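/- arXiv:1607.03587 — 6 statements merged into one kernel-verified Lean document; each statement's English description precedes it below -/
import Mathlib

section
/- Let (e_i) be a normalized spreading Schauder basis of a Banach space X which is not weakly null. Then the summing functional is bounded: there exists a constant C such that |Σ_i a_i| ≤ C‖Σ_i a_i e_i‖ for every finitely supported scalar sequence (a_i); equivalently the linear functional S determined by S(e_i) = 1 for all i extends to a bounded linear functional on X. -/
open Filter Finset Topology NormedSpace
open scoped NNReal

/-- `e` is a Schauder basis of `X`: every vector has a unique expansion whose partial
sums converge in norm. -/
def IsSchauderBasis {X : Type} [NormedAddCommGroup X] [NormedSpace ℝ X] (e : ℕ → X) : Prop :=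
  ∀ x : X, ∃! a : ℕ → ℝ,
    Tendsto (fun n => ∑ i ∈ Finset.range n, a i • e i) atTop (𝓝 x)

/-- A sequence is weakly null if it tends to `0` in the weak topology. -/
def WeaklyNull {X : Type} [NormedAddCommGroup X] [NormedSpace ℝ X] (z : ℕ → X) : Prop :=
  ∀ f : X →L[ℝ] ℝ, Tendsto (fun n => f (z n)) atTop (𝓝 (0 : ℝ))

/-- `e` is spreading: it is equivalent to each of its subsequences. -/
def IsSpreading {X : Type} [NormedAddCommGroup X] [NormedSpace ℝ X] (e : ℕ → X) : Prop :=
  ∀ n : ℕ → ℕ, StrictMono n → ∃ C : ℝ, 1 ≤ C ∧ ∀ (k : ℕ) (a : ℕ → ℝ),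
    ‖∑ i ∈ Finset.range k, a i • e i‖ ≤ C * ‖∑ i ∈ Finset.range k, a i • e (n i)‖ ∧
    ‖∑ i ∈ Finset.range k, a i • e (n i)‖ ≤ C * ‖∑ i ∈ Finset.range k, a i • e i‖

lemma pad_sum {X : Type} [NormedAddCommGroup X] [NormedSpace ℝ X]
    (p k : ℕ) (a : ℕ → ℝ) (g : ℕ → X) :
    ∑ i ∈ Finset.range (p + k), (if i < p then (0:ℝ) else a (i - p)) • g i
      = ∑ i ∈ Finset.range k, a i • g (p + i) := by
  rw [← Finset.sum_range_add_sum_Ico _ (Nat.le_add_right p k)]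
  rw [Finset.sum_Ico_eq_sum_range]
  simp only [Nat.add_sub_cancel_left]
  have h1 : ∑ i ∈ Finset.range p, (if i < p then (0:ℝ) else a (i - p)) • g i = 0 := by
    apply Finset.sum_eq_zero
    intro i hi
    simp [Finset.mem_range.1 hi]
  rw [h1, zero_add]
  apply Finset.sum_congr rfl
  intro i _
  simp

theorem summing_functional_bounded
    {X : Type} [NormedAddCommGroup X] [NormedSpace ℝ X] [CompleteSpace X]
    (e : ℕ → X) (hnorm : ∀ i, ‖e i‖ = 1) (hbasis : IsSchauderBasis e)
    (hspread : IsSpreading e) (hnwn : ¬ WeaklyNull e) :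
    (∃ C : ℝ, 0 < C ∧ ∀ (k : ℕ) (a : ℕ → ℝ),
        |∑ i ∈ Finset.range k, a i| ≤ C * ‖∑ i ∈ Finset.range k, a i • e i‖) ∧
    ∃ S : StrongDual ℝ X, ∀ i, S (e i) = 1 := by
  classical
  have part1 : ∃ C : ℝ, 0 < C ∧ ∀ (k : ℕ) (a : ℕ → ℝ),
      |∑ i ∈ Finset.range k, a i| ≤ C * ‖∑ i ∈ Finset.range k, a i • e i‖ := by
    by_contra hcon
    push_neg at hcon
    -- a functional witnessing non-weak-nullity
    simp only [WeaklyNull, not_forall] at hnwn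
    obtain ⟨f, hf⟩ := hnwn
    have hfreq : ∃ δ > (0:ℝ), ∃ᶠ i in atTop, δ ≤ |f (e i)| := by
      by_contra h
      push_neg at h
      apply hf
      rw [NormedAddCommGroup.tendsto_nhds_zero]
      intro ε hε
      have h2 := h (ε/2) (by positivity)
      refine h2.mono fun i hi => ?_
      rw [Real.norm_eq_abs]
      linarith
    obtain ⟨δ, hδ, hfreq⟩ := hfreq
    obtain ⟨n₀, hn₀mono, hn₀⟩ := Filter.extraction_of_frequently_atTop hfreq
    have hbdd : ∀ i, f (e (n₀ i)) ∈ Set.Icc (-‖f‖) ‖f‖ := by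
      intro i
      have h := f.le_opNorm (e (n₀ i))
      rw [hnorm, mul_one, Real.norm_eq_abs] at h
      exact abs_le.1 h
    obtain ⟨L, _, φ, hφmono, hφtend⟩ :=
      tendsto_subseq_of_bounded (Metric.isBounded_Icc (-‖f‖) ‖f‖) hbdd
    set n : ℕ → ℕ := n₀ ∘ φ with hn_def
    have hnmono : StrictMono n := hn₀mono.comp hφmono
    set t : ℕ → ℝ := fun i => f (e (n i)) with ht_def
    have htL : Tendsto t atTop (𝓝 L) := hφtend
    have hLδ : δ ≤ |L| :=
      ge_of_tendsto htL.abs (Eventually.of_forall fun i => hn₀ (φ i))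
    have hL0 : 0 < |L| := lt_of_lt_of_le hδ hLδ
    have hf0 : 0 < ‖f‖ := by
      have h := f.le_opNorm (e (n₀ 0))
      rw [hnorm, mul_one, Real.norm_eq_abs] at h
      have := hn₀ 0
      linarith
    -- shift constant
    obtain ⟨C₁, hC₁1, hC₁⟩ := hspread (fun i => i + 1) (fun a b h => by simpa)
    have hC₁0 : (0:ℝ) < C₁ := zero_lt_one.trans_le hC₁1
    -- shift lemma
    have Sh : ∀ (p k : ℕ) (a : ℕ → ℝ),
        ‖∑ i ∈ Finset.range k, a i • e (p + i)‖ ≤ C₁ ^ p * ‖∑ i ∈ Finset.range k, a i • e i‖ := by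
      intro p
      induction p with
      | zero => intro k a; simp
      | succ p ih =>
        intro k a
        have h1 := (hC₁ (p + k) (fun i => if i < p then (0:ℝ) else a (i - p))).2
        have e1 : ∑ i ∈ Finset.range (p + k),
            (if i < p then (0:ℝ) else a (i - p)) • e (i + 1)
            = ∑ i ∈ Finset.range k, a i • e (p + 1 + i) := by
          rw [pad_sum p k a (fun j => e (j + 1))]
          exact Finset.sum_congr rfl fun i _ => by rw [Nat.add_right_comm]
        have e2 : ∑ i ∈ Finset.range (p + k),
            (if i < p then (0:ℝ) else a (i - p)) • e i
            = ∑ i ∈ Finset.range k, a i • e (p + i) := pad_sum p k a e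
        rw [e1, e2] at h1
        calc ‖∑ i ∈ Finset.range k, a i • e (p + 1 + i)‖
            ≤ C₁ * ‖∑ i ∈ Finset.range k, a i • e (p + i)‖ := h1
          _ ≤ C₁ * (C₁ ^ p * ‖∑ i ∈ Finset.range k, a i • e i‖) := by
              exact mul_le_mul_of_nonneg_left (ih k a) hC₁0.le
          _ = C₁ ^ (p + 1) * ‖∑ i ∈ Finset.range k, a i • e i‖ := by ring
    -- normalized bad pairs
    have bad : ∀ C : ℝ, ∃ (k : ℕ) (a : ℕ → ℝ), 0 < C →
        (∑ i ∈ Finset.range k, a i) = 1 ∧ ‖∑ i ∈ Finset.range k, a i • e i‖ < 1 / C := by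
      intro C
      by_cases hCpos : 0 < C
      · obtain ⟨k, a, hka⟩ := hcon C hCpos
        have hnn : 0 ≤ C * ‖∑ i ∈ Finset.range k, a i • e i‖ := by positivity
        have hs0 : (∑ i ∈ Finset.range k, a i) ≠ 0 := by
          intro h
          rw [h, abs_zero] at hka
          linarith
        set s := ∑ i ∈ Finset.range k, a i with hs
        refine ⟨k, fun i => s⁻¹ * a i, fun _ => ⟨?_, ?_⟩⟩
        · rw [← Finset.mul_sum, ← hs, inv_mul_cancel₀ hs0]
        · have hv : ∑ i ∈ Finset.range k, (s⁻¹ * a i) • e i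
              = s⁻¹ • ∑ i ∈ Finset.range k, a i • e i := by
            rw [Finset.smul_sum]
            exact Finset.sum_congr rfl fun i _ => (smul_smul _ _ _).symm
          rw [hv, norm_smul, Real.norm_eq_abs, abs_inv]
          rw [inv_mul_lt_iff₀ (abs_pos.2 hs0), one_div]
          rw [← div_eq_mul_inv, lt_div_iff₀ hCpos]
          nlinarith [hka]
      · exact ⟨0, 0, fun h => absurd h hCpos⟩
    choose K A hbad using bad
    -- choose far positions along t
    have jex : ∀ (ε : ℝ) (jmin : ℕ), ∃ j, jmin ≤ j ∧ (0 < ε → ∀ i, |t (j + i) - L| ≤ ε) := by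
      intro ε jmin
      by_cases hε : 0 < ε
      · obtain ⟨N, hN⟩ := Metric.tendsto_atTop.1 htL ε hε
        refine ⟨max jmin N, le_max_left _ _, fun _ i => ?_⟩
        have := hN (max jmin N + i) (le_trans (le_max_right _ _) (Nat.le_add_right _ _))
        rw [Real.dist_eq] at this
        exact this.le
      · exact ⟨jmin, le_rfl, fun h => absurd h hε⟩
    choose J hJ1 hJ2 using jex
    -- block data
    set Cc : ℕ → ℕ → ℝ := fun r p => ((r:ℝ) + 1) * C₁ ^ p with hCc_def
    have hCcpos : ∀ r p, 0 < Cc r p := fun r p => by positivity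
    set kf : ℕ → ℕ → ℕ := fun r p => K (Cc r p) with hkf_def
    set af : ℕ → ℕ → ℕ → ℝ := fun r p => A (Cc r p) with haf_def
    set εf : ℕ → ℕ → ℝ :=
      fun r p => |L| / (2 * ((∑ i ∈ Finset.range (kf r p), |af r p i|) + 1)) with hεf_def
    have hεfpos : ∀ r p, 0 < εf r p := by
      intro r p
      have h1 : (0:ℝ) ≤ ∑ i ∈ Finset.range (kf r p), |af r p i| :=
        Finset.sum_nonneg fun i _ => abs_nonneg _
      have h2 : (0:ℝ) < 2 * ((∑ i ∈ Finset.range (kf r p), |af r p i|) + 1) := by linarith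
      exact div_pos hL0 h2
    set p : ℕ → ℕ := fun r => Nat.rec 0 (fun r pr => pr + kf r pr) r with hp_def
    set k : ℕ → ℕ := fun r => kf r (p r) with hk_def
    have hps : ∀ r, p (r + 1) = p r + k r := fun r => rfl
    set a : ℕ → ℕ → ℝ := fun r => af r (p r) with ha_def
    set ε : ℕ → ℝ := fun r => εf r (p r) with hε_def
    set j : ℕ → ℕ := fun r => Nat.rec (J (ε 0) 0) (fun r jr => J (ε (r + 1)) (jr + k r)) r
      with hj_def
    have hjs : ∀ r, j (r + 1) = J (ε (r + 1)) (j r + k r) := fun r => rfl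
    have hbad' : ∀ r, (∑ i ∈ Finset.range (k r), a r i) = 1 ∧
        ‖∑ i ∈ Finset.range (k r), a r i • e i‖ < 1 / Cc r (p r) :=
      fun r => hbad (Cc r (p r)) (hCcpos r (p r))
    have hk1 : ∀ r, 1 ≤ k r := by
      intro r
      by_contra h
      have hk0 : k r = 0 := by omega
      have h1 := (hbad' r).1
      rw [hk0] at h1
      simp at h1
    have hsum1 : ∀ r, ∑ i ∈ Finset.range (k r), a r i = 1 := fun r => (hbad' r).1
    have hsmall : ∀ r, ‖∑ i ∈ Finset.range (k r), a r i • e i‖ < 1 / Cc r (p r) :=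
      fun r => (hbad' r).2
    have hjt : ∀ r i, |t (j r + i) - L| ≤ ε r := by
      intro r i
      cases r with
      | zero => exact hJ2 (ε 0) 0 (hεfpos 0 (p 0)) i
      | succ r => exact hJ2 (ε (r + 1)) (j r + k r) (hεfpos (r + 1) (p (r + 1))) i
    have hjk : ∀ r, j r + k r ≤ j (r + 1) := fun r => hJ1 (ε (r + 1)) (j r + k r)
    have hppos : ∀ r, r ≤ p r := by
      intro r
      induction r with
      | zero => exact Nat.zero_le _
      | succ r ih =>
        have := hk1 r
        have := hps r
        omega
    have hpmono : StrictMono p :=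
      strictMono_nat_of_lt_succ fun r => by have := hk1 r; have := hps r; omega
    set blk : ℕ → ℕ := fun q => Nat.findGreatest (fun r => p r ≤ q) q with hblk_def
    have hblk_le : ∀ q, p (blk q) ≤ q := fun q =>
      Nat.findGreatest_spec (P := fun r => p r ≤ q) (m := 0) (n := q)
        (Nat.zero_le q) (Nat.zero_le q)
    have hblk_lt : ∀ q, q < p (blk q + 1) := by
      intro q
      by_cases h : blk q + 1 ≤ q
      · by_contra hq
        push_neg at hq
        exact Nat.findGreatest_is_greatest (lt_add_one _) h hq
      · have h1 : blk q ≤ q := Nat.findGreatest_le q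
        have h2 : q = blk q := by omega
        have h3 := hppos (blk q + 1)
        omega
    have hblk_eq : ∀ r q, p r ≤ q → q < p (r + 1) → blk q = r := by
      intro r q h1 h2
      have hrq : r ≤ q := le_trans (hppos r) h1
      have hle : r ≤ blk q := Nat.le_findGreatest hrq h1
      have hlt : blk q < r + 1 := by
        by_contra hh
        push_neg at hh
        have h3 := hpmono.monotone hh
        have h4 := hblk_le q
        omega
      omega
    set m : ℕ → ℕ := fun q => n (j (blk q) + (q - p (blk q))) with hm_def
    have hmblock : ∀ r i, i < k r → m (p r + i) = n (j r + i) := by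
      intro r i hi
      have hb : blk (p r + i) = r :=
        hblk_eq r _ (Nat.le_add_right _ _) (by rw [hps]; omega)
      rw [hm_def]
      simp only [hb, Nat.add_sub_cancel_left]
    have hmmono : StrictMono m := by
      apply strictMono_nat_of_lt_succ
      intro q
      by_cases hcase : q + 1 < p (blk q + 1)
      · have hb : blk (q + 1) = blk q :=
          hblk_eq _ _ (le_trans (hblk_le q) (by omega)) hcase
        rw [hm_def]
        simp only [hb]
        apply hnmono
        have := hblk_le q
        omega
      · have hq1 : q + 1 = p (blk q + 1) := by have := hblk_lt q; omega
        have hb : blk (q + 1) = blk q + 1 := by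
          apply hblk_eq
          · omega
          · have h5 := hps (blk q + 1)
            have h6 := hk1 (blk q + 1)
            omega
        rw [hm_def]
        simp only [hb]
        apply hnmono
        have h1 : q - p (blk q) < k (blk q) := by
          have := hblk_le q
          have := hblk_lt q
          have := hps (blk q)
          omega
        have h2 := hjk (blk q)
        omega
    obtain ⟨Cm, hCm1, hCmspec⟩ := hspread m hmmono
    have hCm0 : (0:ℝ) < Cm := zero_lt_one.trans_le hCm1
    -- key estimate
    have key : ∀ r : ℕ, |L| / 2 * ((r:ℝ) + 1) ≤ ‖f‖ * Cm := by
      intro r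
      set b : ℕ → ℝ := fun i => if i < p r then 0 else a r (i - p r) with hb_def
      set v : X := ∑ i ∈ Finset.range (k r), a r i • e (n (j r + i)) with hv_def
      have hv1 : ∑ i ∈ Finset.range (p r + k r), b i • e (m i) = v := by
        rw [hb_def, pad_sum (p r) (k r) (a r) (fun q => e (m q))]
        exact Finset.sum_congr rfl fun i hi => by
          rw [hmblock r i (Finset.mem_range.1 hi)]
      have hv2 : ∑ i ∈ Finset.range (p r + k r), b i • e i
          = ∑ i ∈ Finset.range (k r), a r i • e (p r + i) := pad_sum (p r) (k r) (a r) e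
      -- upper bound on ‖v‖
      have hup : ‖v‖ < Cm / ((r:ℝ) + 1) := by
        have h1 := (hCmspec (p r + k r) b).2
        rw [hv1, hv2] at h1
        have h2 := Sh (p r) (k r) (a r)
        have h3 := hsmall r
        have hpow : (0:ℝ) < C₁ ^ p r := pow_pos hC₁0 _
        calc ‖v‖ ≤ Cm * ‖∑ i ∈ Finset.range (k r), a r i • e (p r + i)‖ := h1
          _ ≤ Cm * (C₁ ^ p r * ‖∑ i ∈ Finset.range (k r), a r i • e i‖) :=
              mul_le_mul_of_nonneg_left h2 hCm0.le
          _ < Cm * (C₁ ^ p r * (1 / Cc r (p r))) := by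
              apply mul_lt_mul_of_pos_left _ hCm0
              exact mul_lt_mul_of_pos_left h3 hpow
          _ = Cm / ((r:ℝ) + 1) := by
              rw [hCc_def]
              field_simp
      -- lower bound via f
      have hfv : f v = ∑ i ∈ Finset.range (k r), a r i * t (j r + i) := by
        rw [hv_def, map_sum]
        exact Finset.sum_congr rfl fun i _ => by
          rw [map_smul, smul_eq_mul]
      have hdiff : f v - L = ∑ i ∈ Finset.range (k r), a r i * (t (j r + i) - L) := by
        have : ∑ i ∈ Finset.range (k r), a r i * (t (j r + i) - L)
            = (∑ i ∈ Finset.range (k r), a r i * t (j r + i))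
              - (∑ i ∈ Finset.range (k r), a r i) * L := by
          rw [Finset.sum_mul, ← Finset.sum_sub_distrib]
          exact Finset.sum_congr rfl fun i _ => by ring
        rw [this, hsum1 r, one_mul, hfv]
      have habs : |f v - L| ≤ |L| / 2 := by
        rw [hdiff]
        set Sa := ∑ i ∈ Finset.range (k r), |a r i| with hSa_def
        have hSa0 : 0 ≤ Sa := Finset.sum_nonneg fun i _ => abs_nonneg _
        have hεval : ε r = |L| / (2 * (Sa + 1)) := rfl
        calc |∑ i ∈ Finset.range (k r), a r i * (t (j r + i) - L)|
            ≤ ∑ i ∈ Finset.range (k r), |a r i * (t (j r + i) - L)| :=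
              Finset.abs_sum_le_sum_abs _ _
          _ ≤ ∑ i ∈ Finset.range (k r), |a r i| * ε r := by
              apply Finset.sum_le_sum
              intro i _
              rw [abs_mul]
              exact mul_le_mul_of_nonneg_left (hjt r i) (abs_nonneg _)
          _ = Sa * ε r := by rw [hSa_def, Finset.sum_mul]
          _ ≤ |L| / 2 := by
              have h2 : Sa * (|L| / (2 * (Sa + 1))) = Sa * |L| / (2 * (Sa + 1)) := by ring
              rw [hεval, h2, div_le_div_iff₀ (by linarith) (by norm_num : (0:ℝ) < 2)]
              nlinarith [abs_nonneg L]
      have hlow : |L| / 2 ≤ |f v| := by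
        have h1 : |L| - |f v| ≤ |L - f v| := abs_sub_abs_le_abs_sub L (f v)
        rw [abs_sub_comm] at h1
        linarith
      have hfb : |f v| ≤ ‖f‖ * ‖v‖ := by
        have := f.le_opNorm v
        rwa [Real.norm_eq_abs] at this
      have : |L| / 2 ≤ ‖f‖ * (Cm / ((r:ℝ) + 1)) :=
        le_trans hlow (le_trans hfb (mul_le_mul_of_nonneg_left hup.le (norm_nonneg f)))
      have hr1 : (0:ℝ) < (r:ℝ) + 1 := by positivity
      have h9 : ‖f‖ * (Cm / ((r:ℝ) + 1)) = ‖f‖ * Cm / ((r:ℝ) + 1) := by ring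
      rw [h9, le_div_iff₀ hr1] at this
      exact this
    -- contradiction
    obtain ⟨r, hr⟩ := exists_nat_gt (‖f‖ * Cm / (|L| / 2))
    have hk2 := key r
    have hpos : (0:ℝ) < |L| / 2 := by linarith
    have h3 : ‖f‖ * Cm / (|L| / 2) < (r:ℝ) + 1 := lt_of_lt_of_le hr (by linarith)
    rw [div_lt_iff₀ hpos] at h3
    nlinarith
  obtain ⟨C, hC0, hC⟩ := part1
  refine ⟨⟨C, hC0, hC⟩, ?_⟩
  -- linear independence
  have hli : LinearIndependent ℝ e := by
    rw [linearIndependent_iff']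
    intro s g hg i hi
    set a : ℕ → ℝ := fun i => if i ∈ s then g i else 0 with ha_def
    have hconst : ∀ nn : ℕ, (∀ i ∈ s, i < nn) →
        ∑ i ∈ Finset.range nn, a i • e i = 0 := by
      intro nn hnn
      have h1 : ∑ i ∈ Finset.range nn, a i • e i
          = ∑ i ∈ Finset.range nn ∩ s, g i • e i := by
        rw [← Finset.sum_ite_mem]
        simp only [ha_def, ite_smul, zero_smul]
      rw [h1, Finset.inter_eq_right.2 (fun i hi' => Finset.mem_range.2 (hnn i hi')), hg]
    have h0 : Tendsto (fun nn => ∑ i ∈ Finset.range nn, a i • e i) atTop (𝓝 0) := by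
      apply Tendsto.congr' _ tendsto_const_nhds
      filter_upwards [Filter.eventually_ge_atTop ((s.sup id) + 1)] with nn hnn
      exact (hconst nn (fun i hi' => by
        have h8 : i ≤ s.sup id := Finset.le_sup (f := id) hi'
        omega)).symm
    have h0' : Tendsto (fun nn => ∑ i ∈ Finset.range nn, (0:ℝ) • e i) atTop (𝓝 0) := by
      simp only [zero_smul, Finset.sum_const, smul_zero]
      exact tendsto_const_nhds
    have heq : a = fun _ => (0:ℝ) := (hbasis 0).unique h0 h0'
    have := congrFun heq i
    simpa [ha_def, hi] using this
  set V := Submodule.span ℝ (Set.range e) with hV_def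
  set bV : Module.Basis ℕ ℝ V := Module.Basis.span hli with hbV_def
  have hbVe : ∀ i, (bV i : X) = e i := fun i => congrArg Subtype.val (Module.Basis.span_apply hli i)
  set S₀ : V →ₗ[ℝ] ℝ := bV.constr ℝ (fun _ => (1:ℝ)) with hS₀_def
  have hS₀basis : ∀ i, S₀ (bV i) = 1 := fun i => Module.Basis.constr_basis bV ℝ (fun _ => 1) i
  -- bound for S₀
  have hbound : ∀ y : V, ‖S₀ y‖ ≤ C * ‖y‖ := by
    intro y
    set c := bV.repr y with hc_def
    set kk := (c.support.sup id) + 1 with hkk_def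
    set A : ℕ → ℝ := fun i => if i ∈ c.support then c i else 0 with hA_def
    have hsupp : c.support ⊆ Finset.range kk := fun i hi =>
      Finset.mem_range.2 (by
        have h8 : i ≤ c.support.sup id := Finset.le_sup (f := id) hi
        omega)
    have hAsum : ∀ (g : ℕ → ℝ → X),
        True := fun _ => trivial
    have h1 : ∑ i ∈ Finset.range kk, A i • e i = (y : X) := by
      have e1 : ∑ i ∈ Finset.range kk, A i • e i
          = ∑ i ∈ Finset.range kk ∩ c.support, (c i) • e i := by
        rw [← Finset.sum_ite_mem]
        simp only [hA_def, ite_smul, zero_smul]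
      rw [e1, Finset.inter_eq_right.2 hsupp]
      -- y = Σ c i • e i
      have e2 := bV.linearCombination_repr y
      have e3 := congrArg (Subtype.val : V → X) e2
      simp only [Finsupp.linearCombination_apply, Finsupp.sum,
        AddSubmonoidClass.coe_finset_sum, SetLike.val_smul] at e3
      rw [← e3]
      exact Finset.sum_congr rfl fun i _ => by rw [hbVe i]
    have h2 : ∑ i ∈ Finset.range kk, A i = S₀ y := by
      have e1 : ∑ i ∈ Finset.range kk, A i
          = ∑ i ∈ Finset.range kk ∩ c.support, c i := by
        rw [← Finset.sum_ite_mem]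
      rw [e1, Finset.inter_eq_right.2 hsupp]
      rw [hS₀_def, Module.Basis.constr_apply, Finsupp.sum]
      exact Finset.sum_congr rfl fun i _ => by simp [hc_def]
    have h3 := hC kk A
    rw [h1, h2] at h3
    rw [Real.norm_eq_abs]
    have h4 : ‖(y:X)‖ = ‖y‖ := rfl
    rw [h4] at h3
    exact h3
  set S₀c : V →L[ℝ] ℝ := LinearMap.mkContinuous S₀ C hbound with hS₀c_def
  set ι : V →L[ℝ] X := V.subtypeL with hι_def
  have hdense : DenseRange ι := by
    have hcl : Dense (V : Set X) := by
      rw [dense_iff_closure_eq]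
      apply Set.eq_univ_of_forall
      intro x
      obtain ⟨ax, hax, _⟩ := hbasis x
      apply mem_closure_of_tendsto hax
      filter_upwards with nn
      exact Submodule.sum_mem V fun i _ =>
        Submodule.smul_mem V _ (Submodule.subset_span ⟨i, rfl⟩)
    have : Set.range ι = (V : Set X) := Subtype.range_coe
    rw [DenseRange, this]
    exact hcl
  have hui : IsUniformInducing ι := isometry_subtype_coe.isUniformInducing
  refine ⟨S₀c.extend ι, fun i => ?_⟩
  have hei : e i ∈ V := Submodule.subset_span ⟨i, rfl⟩
  have h5 : (⟨e i, hei⟩ : V) = bV i := Subtype.ext (hbVe i).symm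
  have h6 := ContinuousLinearMap.extend_eq (f := S₀c) (e := ι) hdense hui (⟨e i, hei⟩ : V)
  have h7 : ι (⟨e i, hei⟩ : V) = e i := rfl
  rw [h7] at h6
  rw [h6, h5]
  show S₀ (bV i) = 1
  exact hS₀basis i
end

section
/- Let (e_i) be a normalized, 1-spreading, bimonotone Schauder basis of a Banach space X which is not weakly null, and let S be the summing functional. If (x_i) is a normalized block basis of (e_i) with S(x_i) = 0 for all i, then (x_i) is suppression 1-unconditional: for every n, all scalars a_1,…,a_n, and every subset F ⊆ {1,…,n}, ‖Σ_{i∈F} a_i x_i‖ ≤ ‖Σ_{i=1}^n a_i x_i‖. -/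
open Filter Finset Topology NormedSpace
open scoped NNReal

/-- `e` is `1`-spreading. -/
def IsOneSpreading {X : Type} [NormedAddCommGroup X] [NormedSpace ℝ X] (e : ℕ → X) : Prop :=
  ∀ (k : ℕ) (a : ℕ → ℝ) (n : ℕ → ℕ), StrictMono n →
    ‖∑ i ∈ Finset.range k, a i • e (n i)‖ = ‖∑ i ∈ Finset.range k, a i • e i‖

/-- `e` is bimonotone: interval projections of (finitely supported) expansions have norm
at most the norm of the whole vector. -/
def IsBimonotone {X : Type} [NormedAddCommGroup X] [NormedSpace ℝ X] (e : ℕ → X) : Prop :=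
  ∀ (N m n : ℕ) (a : ℕ → ℝ),
    ‖∑ i ∈ (Finset.range N).filter (fun i => m ≤ i ∧ i ≤ n), a i • e i‖ ≤
      ‖∑ i ∈ Finset.range N, a i • e i‖

/-- `x` is a block basis of `e`: each `x j` is a nonzero vector finitely supported on an
interval of indices, with successive supports strictly increasing. -/
def IsBlockBasis {X : Type} [NormedAddCommGroup X] [NormedSpace ℝ X]
    (e : ℕ → X) (x : ℕ → X) : Prop :=
  ∃ (a : ℕ → ℕ → ℝ) (p q : ℕ → ℕ),
    (∀ j, x j = ∑ i ∈ Finset.Icc (p j) (q j), a j i • e i) ∧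
    (∀ j, x j ≠ 0) ∧ (∀ j, p j ≤ q j) ∧ (∀ j, q j < p (j + 1))

section Core
variable {X : Type} [NormedAddCommGroup X] [NormedSpace ℝ X]

/-- Abel-summation bound: if the coefficients sum to zero and consecutive values of `h`
are `ε'`-close, then the weighted sum is small. -/
lemma abel_bound (a h : ℕ → ℝ) (r : ℕ) (ha : ∑ t ∈ Finset.range r, a t = 0)
    (ε' : ℝ) (hε' : 0 ≤ ε')
    (hh : ∀ i, i + 1 < r → |h (i + 1) - h i| ≤ ε') :
    |∑ t ∈ Finset.range r, a t * h t| ≤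
      ε' * ∑ i ∈ Finset.range (r - 1), |∑ j ∈ Finset.range (i + 1), a j| := by
  have key : ∑ t ∈ Finset.range r, a t * h t
      = - ∑ i ∈ Finset.range (r - 1), (h (i + 1) - h i) * (∑ j ∈ Finset.range (i + 1), a j) := by
    have := Finset.sum_range_by_parts h a r
    simp only [smul_eq_mul] at this
    have h2 : ∑ t ∈ Finset.range r, a t * h t = ∑ t ∈ Finset.range r, h t * a t := by
      apply Finset.sum_congr rfl; intro t _; ring
    rw [h2, this, ha, mul_zero, zero_sub]
  rw [key, abs_neg]
  calc |∑ i ∈ Finset.range (r - 1), (h (i + 1) - h i) * (∑ j ∈ Finset.range (i + 1), a j)|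
      ≤ ∑ i ∈ Finset.range (r - 1), |(h (i + 1) - h i) * (∑ j ∈ Finset.range (i + 1), a j)| :=
        Finset.abs_sum_le_sum_abs _ _
    _ ≤ ∑ i ∈ Finset.range (r - 1), ε' * |∑ j ∈ Finset.range (i + 1), a j| := by
        apply Finset.sum_le_sum
        intro i hi
        rw [abs_mul]
        apply mul_le_mul_of_nonneg_right _ (abs_nonneg _)
        have := Finset.mem_range.mp hi
        exact hh i (by omega)
    _ = ε' * ∑ i ∈ Finset.range (r - 1), |∑ j ∈ Finset.range (i + 1), a j| := by
        rw [Finset.mul_sum]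

end Core


section Core2
variable {X : Type} [NormedAddCommGroup X] [NormedSpace ℝ X]

/-- Pigeonhole: among `r * B` consecutive positions one can find `r` positions (in
increasing order) where a `[-1,1]`-valued function has pairwise `ε'`-close values. -/
lemma pigeon (g : ℕ → ℝ) (hg : ∀ t, |g t| ≤ 1) {ε' : ℝ} (hε' : 0 < ε') (s r : ℕ) (hr : 0 < r) :
    ∃ τ : ℕ → ℕ,
      (∀ t, t + 1 < r → τ t < τ (t + 1)) ∧
      (∀ t, t < r → s ≤ τ t ∧ τ t < s + r * (⌈2 / ε'⌉₊ + 1)) ∧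
      (∀ t u, t < r → u < r → |g (τ t) - g (τ u)| ≤ ε') := by
  set B := ⌈2 / ε'⌉₊ + 1 with hB
  set M := r * B with hM
  set T := Finset.Ico s (s + M) with hT
  set bin : ℕ → ℕ := fun t => ⌊(g t + 1) / ε'⌋₊ with hbin
  have hval : ∀ t, -1 ≤ g t ∧ g t ≤ 1 := fun t => abs_le.mp (hg t)
  have hnn : ∀ t, (0:ℝ) ≤ (g t + 1) / ε' := by
    intro t; have := (hval t).1
    apply div_nonneg (by linarith) hε'.le
  have hmaps : ∀ t ∈ T, bin t ∈ Finset.range B := by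
    intro t _
    rw [Finset.mem_range, hbin, Nat.floor_lt (hnn t)]
    have h2 : (g t + 1) / ε' ≤ 2 / ε' := by
      gcongr
      linarith [(hval t).2]
    have h3 : (2:ℝ) / ε' ≤ (⌈2 / ε'⌉₊ : ℝ) := Nat.le_ceil _
    have h4 : ((⌈2 / ε'⌉₊ : ℝ)) < (B : ℝ) := by rw [hB]; push_cast; linarith
    linarith
  obtain ⟨b0, _, hfib⟩ :=
    Finset.exists_le_card_fiber_of_mul_le_card_of_maps_to (n := r) hmaps ⟨0, by simp [hB]⟩
      (by simp only [Finset.card_range, hT, Nat.card_Ico, hM, Nat.add_sub_cancel_left,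
            Nat.mul_comm r B]; exact le_rfl)
  obtain ⟨Φ, hΦsub, hΦcard⟩ := Finset.exists_subset_card_eq hfib
  set τfin := Φ.orderEmbOfFin hΦcard with hτfin
  refine ⟨fun t => if h : t < r then τfin ⟨t, h⟩ else 0, ?_, ?_, ?_⟩
  · intro t ht
    simp only []
    rw [dif_pos (by omega : t < r), dif_pos ht]
    exact (Φ.orderEmbOfFin hΦcard).strictMono (by simp [Fin.lt_def])
  · intro t ht
    simp only []
    rw [dif_pos ht]
    have hmem : τfin ⟨t, ht⟩ ∈ Φ := Finset.orderEmbOfFin_mem Φ hΦcard _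
    have := hΦsub hmem
    have hT' := Finset.mem_filter.mp this |>.1
    rw [hT, Finset.mem_Ico] at hT'
    exact ⟨hT'.1, hT'.2⟩
  · intro t u ht hu
    simp only []
    rw [dif_pos ht, dif_pos hu]
    have key : ∀ v : ℕ, v ∈ Φ → (b0 : ℝ) ≤ (g v + 1) / ε' ∧ (g v + 1) / ε' < b0 + 1 := by
      intro v hv
      have hfv := (Finset.mem_filter.mp (hΦsub hv)).2
      have hfloor : ⌊(g v + 1) / ε'⌋₊ = b0 := hfv
      constructor
      · rw [← hfloor]; exact Nat.floor_le (hnn v)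
      · rw [← hfloor]; push_cast; exact Nat.lt_floor_add_one _
    have h1 := key _ (Finset.orderEmbOfFin_mem Φ hΦcard ⟨t, ht⟩)
    have h2 := key _ (Finset.orderEmbOfFin_mem Φ hΦcard ⟨u, hu⟩)
    set v1 := g (τfin ⟨t, ht⟩)
    set v2 := g (τfin ⟨u, hu⟩)
    rw [abs_le]
    constructor
    · have := h1.1; have := h2.2
      rw [div_lt_iff₀ hε'] at *
      rw [le_div_iff₀ hε'] at *
      nlinarith
    · have := h2.1; have := h1.2
      rw [div_lt_iff₀ hε'] at *
      rw [le_div_iff₀ hε'] at *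
      nlinarith

end Core2

section Core3
variable {X : Type} [NormedAddCommGroup X] [NormedSpace ℝ X]

lemma core_lemma (e : ℕ → X) (hnorm : ∀ i, ‖e i‖ = 1) (hspread : IsOneSpreading e)
    (c : ℕ → ℝ) (k s r : ℕ) (hsr : s + r ≤ k)
    (hc0 : ∑ i ∈ Finset.Ico s (s + r), c i = 0) :
    ‖(∑ i ∈ Finset.range s, c i • e i) + ∑ i ∈ Finset.Ico (s + r) k, c i • e i‖ ≤
      ‖∑ i ∈ Finset.range k, c i • e i‖ := by
  rcases Nat.eq_zero_or_pos r with hr | hr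
  · subst hr
    apply le_of_eq
    congr 1
    rw [add_zero]
    exact Finset.sum_range_add_sum_Ico _ (by omega)
  -- main case
  set m := k - r with hm
  set cc : ℕ → ℝ := fun i => if i < s then c i else c (i + r) with hcc
  set place : ℕ → X := fun M => ∑ i ∈ Finset.range m,
      cc i • e (if i < s then i else i + M) with hplace
  have hmono : ∀ M : ℕ, StrictMono (fun i => if i < s then i else i + M) := by
    intro M
    apply strictMono_nat_of_lt_succ
    intro i
    split_ifs <;> omega
  have hplace_norm : ∀ M, ‖place M‖ = ‖∑ i ∈ Finset.range m, cc i • e i‖ := by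
    intro M
    exact hspread m cc _ (hmono M)
  have hplace_eq : ∀ M, place M = (∑ i ∈ Finset.range s, c i • e i) +
      ∑ i ∈ Finset.range (k - (s + r)), c (s + r + i) • e (s + M + i) := by
    intro M
    rw [hplace]
    simp only []
    rw [← Finset.sum_range_add_sum_Ico _ (show s ≤ m by omega)]
    congr 1
    · apply Finset.sum_congr rfl
      intro i hi
      have : i < s := Finset.mem_range.mp hi
      rw [hcc]
      simp only [if_pos this]
    · rw [Finset.sum_Ico_eq_sum_range]
      apply Finset.sum_congr (by congr 1; omega)
      intro i hi
      have : ¬ (s + i < s) := by omega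
      rw [hcc]
      simp only [if_neg this]
      have e1 : s + i + r = s + r + i := by omega
      have e2 : s + i + M = s + M + i := by omega
      rw [e1, e2]
  have hA : (∑ i ∈ Finset.range s, c i • e i) + ∑ i ∈ Finset.Ico (s + r) k, c i • e i
      = place r := by
    rw [hplace_eq r]
    congr 1
    rw [Finset.sum_Ico_eq_sum_range]
  rw [hA]
  -- it suffices to prove the bound up to ε
  apply le_of_forall_pos_le_add
  intro ε hε
  -- set up the quantities
  set A : ℕ → ℝ := fun t => ∑ j ∈ Finset.range (t + 1), c (s + j) with hAdef
  set D : ℝ := (∑ t ∈ Finset.range r, |A t|) + 1 with hD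
  have hDpos : 0 < D := by
    rw [hD]
    have : (0:ℝ) ≤ ∑ t ∈ Finset.range r, |A t| :=
      Finset.sum_nonneg fun t _ => abs_nonneg _
    linarith
  set ε' : ℝ := ε / D with hε'def
  have hε'pos : 0 < ε' := div_pos hε hDpos
  set B := ⌈2 / ε'⌉₊ + 1 with hB
  set M := r * B with hM
  set y := place M with hy
  have hynorm : ‖place r‖ = ‖y‖ := by rw [hy, hplace_norm, hplace_norm]
  rcases eq_or_ne y 0 with hy0 | hy0
  · rw [hynorm, hy0, norm_zero]
    positivity
  obtain ⟨f, hf1, hfy⟩ := exists_dual_vector ℝ y (norm_ne_zero_iff.mpr hy0)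
  -- pigeonhole for g = f ∘ e
  have hgb : ∀ t, |f (e t)| ≤ 1 := by
    intro t
    calc |f (e t)| ≤ ‖f‖ * ‖e t‖ := f.le_opNorm _
      _ = 1 := by rw [hf1, hnorm, one_mul]
  obtain ⟨τ, hτmono, hτmem, hτclose⟩ := pigeon (fun t => f (e t)) hgb hε'pos s r hr
  -- the full placement
  set ν : ℕ → ℕ := fun i => if i < s then i else if i < s + r then τ (i - s) else i - r + M
    with hν
  have hνmono : StrictMono ν := by
    apply strictMono_nat_of_lt_succ
    intro i
    rw [hν]
    simp only []
    by_cases h1 : i + 1 < s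
    · rw [if_pos (by omega : i < s), if_pos h1]; omega
    · by_cases h2 : i < s
      · rw [if_pos h2, if_neg h1, if_pos (by omega : i + 1 < s + r)]
        have := hτmem (i + 1 - s) (by omega)
        omega
      · by_cases h3 : i + 1 < s + r
        · rw [if_neg h2, if_neg (by omega : ¬ i + 1 < s), if_pos (by omega : i < s + r),
            if_pos h3]
          have := hτmono (i - s) (by omega)
          have heq : i + 1 - s = i - s + 1 := by omega
          rw [heq]
          exact this
        · by_cases h4 : i < s + r
          · rw [if_neg h2, if_neg (by omega : ¬ i + 1 < s), if_pos h4, if_neg h3]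
            have := hτmem (i - s) (by omega)
            have hM' : M = r * (⌈2 / ε'⌉₊ + 1) := rfl
            omega
          · rw [if_neg h2, if_neg (by omega : ¬ i + 1 < s), if_neg h3, if_neg h4]
            omega
  have hRHS : ‖∑ i ∈ Finset.range k, c i • e i‖ = ‖∑ i ∈ Finset.range k, c i • e (ν i)‖ :=
    (hspread k c ν hνmono).symm
  -- split the ν-placed sum
  have hsplit : ∑ i ∈ Finset.range k, c i • e (ν i)
      = y + ∑ t ∈ Finset.range r, c (s + t) • e (τ t) := by
    have e1 : ∑ i ∈ Finset.range k, c i • e (ν i)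
        = (∑ i ∈ Finset.range s, c i • e (ν i))
          + (∑ i ∈ Finset.Ico s (s + r), c i • e (ν i))
          + (∑ i ∈ Finset.Ico (s + r) k, c i • e (ν i)) := by
      rw [← Finset.sum_range_add_sum_Ico (fun i => c i • e (ν i)) (show s + r ≤ k by omega),
        ← Finset.sum_range_add_sum_Ico (fun i => c i • e (ν i)) (show s ≤ s + r by omega)]
    rw [e1, hy, hplace_eq M]
    have p1 : ∑ i ∈ Finset.range s, c i • e (ν i) = ∑ i ∈ Finset.range s, c i • e i := by
      apply Finset.sum_congr rfl
      intro i hi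
      have : i < s := Finset.mem_range.mp hi
      rw [hν]; simp only [if_pos this]
    have p2 : ∑ i ∈ Finset.Ico s (s + r), c i • e (ν i)
        = ∑ t ∈ Finset.range r, c (s + t) • e (τ t) := by
      rw [Finset.sum_Ico_eq_sum_range]
      apply Finset.sum_congr (by congr 1; omega)
      intro t ht
      have ht' : t < r := by have := Finset.mem_range.mp ht; omega
      rw [hν]
      simp only [if_neg (by omega : ¬ s + t < s), if_pos (by omega : s + t < s + r)]
      have e3 : s + t - s = t := by omega
      rw [e3]
    have p3 : ∑ i ∈ Finset.Ico (s + r) k, c i • e (ν i)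
        = ∑ i ∈ Finset.range (k - (s + r)), c (s + r + i) • e (s + M + i) := by
      rw [Finset.sum_Ico_eq_sum_range]
      apply Finset.sum_congr (by congr 1)
      intro i _
      rw [hν]
      simp only [if_neg (by omega : ¬ s + r + i < s), if_neg (by omega : ¬ s + r + i < s + r)]
      have e4 : s + r + i - r + M = s + M + i := by omega
      rw [e4]
    rw [p1, p2, p3]
    abel
  -- bound |f u'|
  have hc0' : ∑ t ∈ Finset.range r, c (s + t) = 0 := by
    rw [Finset.sum_Ico_eq_sum_range] at hc0
    simpa using hc0
  have hfu : |f (∑ t ∈ Finset.range r, c (s + t) • e (τ t))| ≤ ε := by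
    have e2 : f (∑ t ∈ Finset.range r, c (s + t) • e (τ t))
        = ∑ t ∈ Finset.range r, c (s + t) * f (e (τ t)) := by
      rw [map_sum]
      apply Finset.sum_congr rfl
      intro t _
      rw [f.map_smul, smul_eq_mul]
    rw [e2]
    have := abel_bound (fun t => c (s + t)) (fun t => f (e (τ t))) r hc0' ε' hε'pos.le
      (fun i hi => hτclose (i + 1) i (by omega) (by omega))
    calc |∑ t ∈ Finset.range r, c (s + t) * f (e (τ t))|
        ≤ ε' * ∑ i ∈ Finset.range (r - 1), |∑ j ∈ Finset.range (i + 1), c (s + j)| := this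
      _ ≤ ε' * D := by
          apply mul_le_mul_of_nonneg_left _ hε'pos.le
          rw [hD]
          have h1 : ∑ i ∈ Finset.range (r - 1), |A i| ≤ ∑ i ∈ Finset.range r, |A i| :=
            Finset.sum_le_sum_of_subset_of_nonneg
              (Finset.range_subset_range.mpr (by omega)) (fun i _ _ => abs_nonneg _)
          exact le_trans h1 (by linarith)
      _ = ε := by rw [hε'def]; field_simp
  -- conclude
  have hfinal : ‖y‖ ≤ ‖∑ i ∈ Finset.range k, c i • e (ν i)‖ + ε := by
    have h5 : f (∑ i ∈ Finset.range k, c i • e (ν i))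
        = ‖y‖ + f (∑ t ∈ Finset.range r, c (s + t) • e (τ t)) := by
      have hfy' : f y = ‖y‖ := by exact_mod_cast hfy
      rw [hsplit, map_add, hfy']
    have h6 : f (∑ i ∈ Finset.range k, c i • e (ν i))
        ≤ ‖∑ i ∈ Finset.range k, c i • e (ν i)‖ := by
      calc f (∑ i ∈ Finset.range k, c i • e (ν i))
          ≤ |f (∑ i ∈ Finset.range k, c i • e (ν i))| := le_abs_self _
        _ ≤ ‖f‖ * ‖∑ i ∈ Finset.range k, c i • e (ν i)‖ := f.le_opNorm _
        _ = ‖∑ i ∈ Finset.range k, c i • e (ν i)‖ := by rw [hf1, one_mul]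
    have h7 : -ε ≤ f (∑ t ∈ Finset.range r, c (s + t) • e (τ t)) := by
      have := abs_le.mp hfu
      linarith [this.1]
    linarith
  rw [hynorm, hRHS]
  exact hfinal

end Core3


theorem zero_sum_blocks_suppression_unconditional
    {X : Type} [NormedAddCommGroup X] [NormedSpace ℝ X] [CompleteSpace X]
    (e : ℕ → X) (hnorm : ∀ i, ‖e i‖ = 1) (hbasis : IsSchauderBasis e)
    (hspread : IsOneSpreading e) (hbi : IsBimonotone e) (hnwn : ¬ WeaklyNull e)
    (S : StrongDual ℝ X) (hS : ∀ i, S (e i) = 1)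
    (x : ℕ → X) (hblock : IsBlockBasis e x) (hxnorm : ∀ j, ‖x j‖ = 1)
    (hSx : ∀ j, S (x j) = 0) :
    ∀ (n : ℕ) (a : ℕ → ℝ) (F : Finset ℕ), F ⊆ Finset.range n →
      ‖∑ i ∈ F, a i • x i‖ ≤ ‖∑ i ∈ Finset.range n, a i • x i‖ := by
  obtain ⟨w, p, q, hxw, hne, hpq, hqp⟩ := hblock
  -- blocks are in increasing position
  have hblt : ∀ t t' : ℕ, t < t' → q t < p t' := by
    have key : ∀ d t, q t < p (t + d + 1) := by
      intro d
      induction d with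
      | zero => intro t; simpa using hqp t
      | succ d ih =>
          intro t
          have h1 := ih t
          have h2 := hpq (t + d + 1)
          have h3 := hqp (t + d + 1)
          calc q t < p (t + d + 1) := h1
            _ ≤ q (t + d + 1) := h2
            _ < p (t + d + 1 + 1) := h3
            _ = p (t + (d + 1) + 1) := by ring_nf
    intro t t' htt'
    have := key (t' - t - 1) t
    have he : t + (t' - t - 1) + 1 = t' := by omega
    rwa [he] at this
  -- the value of S on each block
  have hSblock : ∀ t, ∑ i ∈ Finset.Icc (p t) (q t), w t i = 0 := by
    intro t
    have h1 : S (x t) = ∑ i ∈ Finset.Icc (p t) (q t), w t i := by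
      rw [hxw t, map_sum]
      apply Finset.sum_congr rfl
      intro i _
      rw [S.map_smul, hS, smul_eq_mul, mul_one]
    rw [← h1, hSx t]
  -- key single-block removal
  have hkey : ∀ (b : ℕ → ℝ) (G : Finset ℕ) (j : ℕ),
      ‖∑ i ∈ G.erase j, b i • x i‖ ≤ ‖∑ i ∈ G, b i • x i‖ := by
    intro b G j
    by_cases hjG : j ∈ G
    · set N := q (G.max' ⟨j, hjG⟩) + 1 with hN
      have hqN : ∀ t ∈ G, q t < N := by
        intro t ht
        have hle : t ≤ G.max' ⟨j, hjG⟩ := Finset.le_max' G t ht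
        rcases eq_or_lt_of_le hle with heq | hlt
        · rw [heq]; omega
        · have := hblt t _ hlt
          have := hpq (G.max' ⟨j, hjG⟩)
          omega
      set C : ℕ → ℝ := fun i => ∑ t ∈ G, (if p t ≤ i ∧ i ≤ q t then b t * w t i else 0)
        with hC
      have hpiece : ∀ I : Finset ℕ, ∑ i ∈ I, C i • e i
          = ∑ t ∈ G, ∑ i ∈ I.filter (fun i => p t ≤ i ∧ i ≤ q t), (b t * w t i) • e i := by
        intro I
        calc ∑ i ∈ I, C i • e i
            = ∑ i ∈ I, ∑ t ∈ G, (if p t ≤ i ∧ i ≤ q t then b t * w t i else 0) • e i := by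
              apply Finset.sum_congr rfl
              intro i _
              rw [hC]
              simp only []
              rw [Finset.sum_smul]
          _ = ∑ t ∈ G, ∑ i ∈ I, (if p t ≤ i ∧ i ≤ q t then b t * w t i else 0) • e i :=
              Finset.sum_comm
          _ = ∑ t ∈ G, ∑ i ∈ I.filter (fun i => p t ≤ i ∧ i ≤ q t), (b t * w t i) • e i := by
              apply Finset.sum_congr rfl
              intro t _
              rw [Finset.sum_filter]
              apply Finset.sum_congr rfl
              intro i _
              rw [ite_smul, zero_smul]
      have hpieceS : ∀ I : Finset ℕ, ∑ i ∈ I, C i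
          = ∑ t ∈ G, ∑ i ∈ I.filter (fun i => p t ≤ i ∧ i ≤ q t), b t * w t i := by
        intro I
        calc ∑ i ∈ I, C i
            = ∑ t ∈ G, ∑ i ∈ I, (if p t ≤ i ∧ i ≤ q t then b t * w t i else 0) :=
              Finset.sum_comm
          _ = ∑ t ∈ G, ∑ i ∈ I.filter (fun i => p t ≤ i ∧ i ≤ q t), b t * w t i := by
              apply Finset.sum_congr rfl
              intro t _
              rw [Finset.sum_filter]
      have hxsum : ∀ t, ∑ i ∈ Finset.Icc (p t) (q t), (b t * w t i) • e i = b t • x t := by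
        intro t
        rw [hxw t, Finset.smul_sum]
        apply Finset.sum_congr rfl
        intro i _
        rw [mul_smul]
      set s := p j with hs
      set r := q j + 1 - p j with hr
      have hsr : s + r = q j + 1 := by
        have := hpq j
        omega
      have hsrN : s + r ≤ N := by
        have := hqN j hjG
        omega
      -- Claim 1 : the full sum
      have claim1 : ∑ i ∈ Finset.range N, C i • e i = ∑ t ∈ G, b t • x t := by
        rw [hpiece]
        apply Finset.sum_congr rfl
        intro t ht
        have hfull : (Finset.range N).filter (fun i => p t ≤ i ∧ i ≤ q t)
            = Finset.Icc (p t) (q t) := by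
          ext i
          simp only [Finset.mem_filter, Finset.mem_range, Finset.mem_Icc]
          have := hqN t ht
          omega
        rw [hfull, hxsum]
      -- Claim 2 : the reduced sum
      have claim2 : (∑ i ∈ Finset.range s, C i • e i) + ∑ i ∈ Finset.Ico (s + r) N, C i • e i
          = ∑ t ∈ G.erase j, b t • x t := by
        rw [hpiece, hpiece, ← Finset.sum_add_distrib]
        have step : ∀ t ∈ G,
            (∑ i ∈ (Finset.range s).filter (fun i => p t ≤ i ∧ i ≤ q t), (b t * w t i) • e i)
            + ∑ i ∈ (Finset.Ico (s + r) N).filter (fun i => p t ≤ i ∧ i ≤ q t),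
                (b t * w t i) • e i
            = if t = j then 0 else b t • x t := by
          intro t ht
          rcases lt_trichotomy t j with h | h | h
          · have hd := hblt t j h
            have h1 : (Finset.range s).filter (fun i => p t ≤ i ∧ i ≤ q t)
                = Finset.Icc (p t) (q t) := by
              ext i
              simp only [Finset.mem_filter, Finset.mem_range, Finset.mem_Icc]
              omega
            have h2 : (Finset.Ico (s + r) N).filter (fun i => p t ≤ i ∧ i ≤ q t)
                = (∅ : Finset ℕ) := by
              ext i
              simp only [Finset.mem_filter, Finset.mem_Ico, Finset.notMem_empty, iff_false]
              omega
            rw [h1, h2, Finset.sum_empty, add_zero, hxsum, if_neg (by omega)]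
          · subst h
            have h1 : (Finset.range s).filter (fun i => p t ≤ i ∧ i ≤ q t)
                = (∅ : Finset ℕ) := by
              ext i
              simp only [Finset.mem_filter, Finset.mem_range, Finset.notMem_empty, iff_false]
              omega
            have h2 : (Finset.Ico (s + r) N).filter (fun i => p t ≤ i ∧ i ≤ q t)
                = (∅ : Finset ℕ) := by
              ext i
              simp only [Finset.mem_filter, Finset.mem_Ico, Finset.notMem_empty, iff_false]
              omega
            simp [h1, h2]
          · have hd := hblt j t h
            have h1 : (Finset.range s).filter (fun i => p t ≤ i ∧ i ≤ q t)
                = (∅ : Finset ℕ) := by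
              ext i
              simp only [Finset.mem_filter, Finset.mem_range, Finset.notMem_empty, iff_false]
              omega
            have h2 : (Finset.Ico (s + r) N).filter (fun i => p t ≤ i ∧ i ≤ q t)
                = Finset.Icc (p t) (q t) := by
              ext i
              simp only [Finset.mem_filter, Finset.mem_Ico, Finset.mem_Icc]
              have := hqN t ht
              omega
            rw [h1, h2, Finset.sum_empty, zero_add, hxsum, if_neg (by omega)]
        rw [Finset.sum_congr rfl step]
        have : ∑ t ∈ G.erase j, b t • x t
            = ∑ t ∈ G.erase j, (if t = j then 0 else b t • x t) := by
          apply Finset.sum_congr rfl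
          intro t ht
          rw [if_neg (Finset.ne_of_mem_erase ht)]
        rw [this]
        exact (Finset.sum_erase G (by rw [if_pos rfl])).symm
      -- Claim 3 : zero sum over the removed block
      have claim3 : ∑ i ∈ Finset.Ico s (s + r), C i = 0 := by
        rw [hpieceS]
        have step : ∀ t ∈ G,
            ∑ i ∈ (Finset.Ico s (s + r)).filter (fun i => p t ≤ i ∧ i ≤ q t), b t * w t i
            = if t = j then b j * ∑ i ∈ Finset.Icc (p j) (q j), w j i else 0 := by
          intro t ht
          rcases lt_trichotomy t j with h | h | h
          · have hd := hblt t j h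
            have h1 : (Finset.Ico s (s + r)).filter (fun i => p t ≤ i ∧ i ≤ q t)
                = (∅ : Finset ℕ) := by
              ext i
              simp only [Finset.mem_filter, Finset.mem_Ico, Finset.notMem_empty, iff_false]
              omega
            rw [h1, Finset.sum_empty, if_neg (by omega)]
          · subst h
            have h1 : (Finset.Ico s (s + r)).filter (fun i => p t ≤ i ∧ i ≤ q t)
                = Finset.Icc (p t) (q t) := by
              ext i
              simp only [Finset.mem_filter, Finset.mem_Ico, Finset.mem_Icc]
              omega
            rw [h1, if_pos rfl, Finset.mul_sum]
          · have hd := hblt j t h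
            have h1 : (Finset.Ico s (s + r)).filter (fun i => p t ≤ i ∧ i ≤ q t)
                = (∅ : Finset ℕ) := by
              ext i
              simp only [Finset.mem_filter, Finset.mem_Ico, Finset.notMem_empty, iff_false]
              omega
            rw [h1, Finset.sum_empty, if_neg (by omega)]
        rw [Finset.sum_congr rfl step, Finset.sum_ite_eq' G j
          (fun _ => b j * ∑ i ∈ Finset.Icc (p j) (q j), w j i)]
        rw [if_pos hjG, hSblock j, mul_zero]
      calc ‖∑ i ∈ G.erase j, b i • x i‖
          = ‖(∑ i ∈ Finset.range s, C i • e i) + ∑ i ∈ Finset.Ico (s + r) N, C i • e i‖ := by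
            rw [claim2]
        _ ≤ ‖∑ i ∈ Finset.range N, C i • e i‖ :=
            core_lemma e hnorm hspread C N s r hsrN claim3
        _ = ‖∑ i ∈ G, b i • x i‖ := by rw [claim1]
    · rw [Finset.erase_eq_of_notMem hjG]
  -- conclude by induction on the complement
  intro n a F hF
  have main2 : ∀ (H : Finset ℕ) (F' : Finset ℕ),
      ‖∑ i ∈ F', a i • x i‖ ≤ ‖∑ i ∈ F' ∪ H, a i • x i‖ := by
    intro H
    induction H using Finset.induction_on with
    | empty => intro F'; rw [Finset.union_empty]
    | @insert j H hj ih =>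
        intro F'
        have h1 := ih F'
        by_cases hjm : j ∈ F' ∪ H
        · rw [Finset.union_insert, Finset.insert_eq_self.mpr hjm]
          exact h1
        · rw [Finset.union_insert]
          refine h1.trans ?_
          have h2 := hkey a (insert j (F' ∪ H)) j
          rwa [Finset.erase_insert hjm] at h2
  have hmain := main2 (Finset.range n \ F) F
  rwa [Finset.union_sdiff_of_subset hF] at hmain
end

section
/- Let (e_i) be a normalized, 1-spreading, bimonotone Schauder basis of a Banach space X which is not weakly null, with summing functional S of norm 1, and let (x_i) be a normalized block basis of (e_i) with S(x_i) = 0 for all i. Then for every ε > 0 and every i_0 ∈ ℕ there exists m ∈ ℕ such that for every f ∈ X* with ‖f‖ = 1 there exists a vector x̃ which is a spread of x_{i_0} with supp(x̃) ⊆ [j, m], where j = min supp(x_{i_0}), such that |f(x̃)| < ε. -/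
open Filter Finset Topology NormedSpace
open scoped NNReal

theorem unconditionality_lemma
    {X : Type} [NormedAddCommGroup X] [NormedSpace ℝ X] [CompleteSpace X]
    (e : ℕ → X) (hnorm : ∀ i, ‖e i‖ = 1) (hbasis : IsSchauderBasis e)
    (hspread : IsOneSpreading e) (hbi : IsBimonotone e) (hnwn : ¬ WeaklyNull e)
    (S : StrongDual ℝ X) (hS : ∀ i, S (e i) = 1) (hSnorm : ‖S‖ = 1)
    -- `x` is a normalized block basis of `e` with coefficients `a` and supports in
    -- `[p j, q j]`, whose minimum is attained at `p j`
    (x : ℕ → X) (a : ℕ → ℕ → ℝ) (p q : ℕ → ℕ)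
    (hx : ∀ j, x j = ∑ i ∈ Finset.Icc (p j) (q j), a j i • e i)
    (hpq : ∀ j, p j ≤ q j) (hgap : ∀ j, q j < p (j + 1))
    (hminsupp : ∀ j, a j (p j) ≠ 0)
    (hxnorm : ∀ j, ‖x j‖ = 1) (hSx : ∀ j, S (x j) = 0) :
    ∀ ε : ℝ, 0 < ε → ∀ i₀ : ℕ, ∃ m : ℕ, ∀ f : StrongDual ℝ X, ‖f‖ = 1 →
      ∃ mm : ℕ → ℕ, StrictMonoOn mm (Set.Icc (p i₀) (q i₀)) ∧
        (∀ i ∈ Finset.Icc (p i₀) (q i₀), p i₀ ≤ mm i ∧ mm i ≤ m) ∧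
        |f (∑ i ∈ Finset.Icc (p i₀) (q i₀), a i₀ i • e (mm i))| < ε := by
  intro ε hε i₀
  set j := p i₀ with hj
  set qq := q i₀ with hqq
  have hjqq : j ≤ qq := hpq i₀
  have hzero : ∑ i ∈ Finset.Icc j qq, a i₀ i = 0 := by
    have h0 := hSx i₀
    rw [hx i₀, map_sum] at h0
    simpa [hS] using h0
  set C : ℝ := ∑ i ∈ Finset.Icc j qq, |a i₀ i| with hCdef
  have hC0 : 0 ≤ C := Finset.sum_nonneg fun i _ => abs_nonneg _
  set δ : ℝ := ε / (C + 1) with hδdef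
  have hδ : 0 < δ := div_pos hε (by linarith)
  set r : ℕ := qq + 1 - j with hrdef
  set K : ℕ := ⌊2 / δ⌋₊ + 1 with hKdef
  set m : ℕ := j + (r - 1) * K + 1 with hmdef
  refine ⟨m, fun f hf => ?_⟩
  have hfe : ∀ t : ℕ, |f (e t)| ≤ 1 := by
    intro t
    calc |f (e t)| ≤ ‖f‖ * ‖e t‖ := f.le_opNorm _
    _ = 1 := by rw [hf, hnorm]; ring
  set c : ℕ → ℕ := fun t => ⌊(f (e t) + 1) / δ⌋₊ with hcdef
  have hmaps : ∀ t ∈ Finset.Icc j m, c t ∈ Finset.range K := by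
    intro t _
    have hb := abs_le.mp (hfe t)
    have h1 : (f (e t) + 1) / δ ≤ 2 / δ := by gcongr; linarith [hb.2]
    have h2 : c t ≤ ⌊2 / δ⌋₊ := Nat.floor_le_floor h1
    simp only [Finset.mem_range, hKdef]
    omega
  have hcard : (Finset.range K).card * (r - 1) < (Finset.Icc j m).card := by
    rw [Finset.card_range, Nat.card_Icc]
    have : m + 1 - j = (r - 1) * K + 2 := by omega
    rw [this]; nlinarith [Nat.zero_le ((r-1)*K)]
  obtain ⟨b, hb, hbcard⟩ :=
    Finset.exists_lt_card_fiber_of_mul_lt_card_of_maps_to hmaps hcard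
  set F := {t ∈ Finset.Icc j m | c t = b} with hFdef
  have hrF : r ≤ F.card := by omega
  obtain ⟨F', hF'sub, hF'card⟩ := Finset.exists_subset_card_eq hrF
  set emb := F'.orderEmbOfFin hF'card with hembdef
  set mm : ℕ → ℕ := fun i => if h : i - j < r then emb ⟨i - j, h⟩ else 0 with hmmdef
  have hlt : ∀ i ∈ Set.Icc j qq, i - j < r := by
    intro i hi
    have := hi.1; have := hi.2
    omega
  have hmmF : ∀ i ∈ Finset.Icc j qq, mm i ∈ F := by
    intro i hi
    rw [Finset.mem_Icc] at hi
    have h : i - j < r := by omega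
    simp only [hmmdef, dif_pos h]
    exact hF'sub (F'.orderEmbOfFin_mem hF'card _)
  refine ⟨mm, ?_, ?_, ?_⟩
  · intro i1 h1 i2 h2 h12
    have l1 := hlt i1 h1
    have l2 := hlt i2 h2
    have hj1 : j ≤ i1 := h1.1
    have hj2 : j ≤ i2 := h2.1
    simp only [hmmdef, dif_pos l1, dif_pos l2]
    exact emb.strictMono (by exact Fin.mk_lt_mk.mpr (by omega))
  · intro i hi
    have := hmmF i hi
    rw [hFdef, Finset.mem_filter, Finset.mem_Icc] at this
    exact ⟨this.1.1, this.1.2⟩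
  · set lo : ℝ := (b : ℝ) * δ - 1 with hlodef
    have hclose : ∀ i ∈ Finset.Icc j qq, |f (e (mm i)) - lo| ≤ δ := by
      intro i hi
      have hmem := hmmF i hi
      rw [hFdef, Finset.mem_filter] at hmem
      have hcb : ⌊(f (e (mm i)) + 1) / δ⌋₊ = b := hmem.2
      have hnn : 0 ≤ (f (e (mm i)) + 1) / δ := by
        have h9 := (abs_le.mp (hfe (mm i))).1
        exact div_nonneg (by linarith) hδ.le
      rw [Nat.floor_eq_iff hnn] at hcb
      have hle : (b : ℝ) * δ ≤ f (e (mm i)) + 1 := by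
        have := hcb.1
        calc (b : ℝ) * δ ≤ ((f (e (mm i)) + 1) / δ) * δ := by nlinarith
        _ = f (e (mm i)) + 1 := by field_simp
      have hlt' : f (e (mm i)) + 1 < ((b : ℝ) + 1) * δ := by
        have := hcb.2
        calc f (e (mm i)) + 1 = ((f (e (mm i)) + 1) / δ) * δ := by field_simp
        _ < ((b : ℝ) + 1) * δ := by nlinarith
      rw [abs_le]
      constructor <;> [skip; skip] <;> simp only [hlodef] <;> nlinarith
    have heq : f (∑ i ∈ Finset.Icc j qq, a i₀ i • e (mm i))
        = ∑ i ∈ Finset.Icc j qq, a i₀ i * (f (e (mm i)) - lo) := by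
      rw [map_sum]
      have : ∑ i ∈ Finset.Icc j qq, a i₀ i * (f (e (mm i)) - lo)
          = ∑ i ∈ Finset.Icc j qq, a i₀ i * f (e (mm i))
            - (∑ i ∈ Finset.Icc j qq, a i₀ i) * lo := by
        rw [Finset.sum_mul, ← Finset.sum_sub_distrib]
        apply Finset.sum_congr rfl; intros; ring
      rw [this, hzero, zero_mul, sub_zero]
      apply Finset.sum_congr rfl
      intro i _
      simp
    rw [heq]
    calc |∑ i ∈ Finset.Icc j qq, a i₀ i * (f (e (mm i)) - lo)|
        ≤ ∑ i ∈ Finset.Icc j qq, |a i₀ i * (f (e (mm i)) - lo)| :=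
          Finset.abs_sum_le_sum_abs _ _
      _ ≤ ∑ i ∈ Finset.Icc j qq, |a i₀ i| * δ := by
          apply Finset.sum_le_sum
          intro i hi
          rw [abs_mul]
          exact mul_le_mul_of_nonneg_left (hclose i hi) (abs_nonneg _)
      _ = C * δ := by rw [← Finset.sum_mul]
      _ < ε := by
          rw [show C * δ = C * ε / (C + 1) from (mul_div_assoc _ _ _).symm,
            div_lt_iff₀ (by linarith : (0:ℝ) < C + 1)]
          nlinarith
end

section
/- Let (e_i) be a normalized, 1-spreading, bimonotone Schauder basis of a Banach space X which is not weakly null. Define the difference sequence (d_i) by d_1 = e_1 and d_i = e_i − e_{i−1} for i ≥ 2. Then (d_i) is a Schauder basis for X, and it is skipped unconditional: every skipped block basis of (d_i) is unconditional. -/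
open Filter Finset Topology NormedSpace
open scoped NNReal

/-- `x` is a skipped block basis of `e`: a block basis leaving a gap of at least one index
between consecutive supports. -/
def IsSkippedBlockBasis {X : Type} [NormedAddCommGroup X] [NormedSpace ℝ X]
    (e : ℕ → X) (x : ℕ → X) : Prop :=
  ∃ (a : ℕ → ℕ → ℝ) (p q : ℕ → ℕ),
    (∀ j, x j = ∑ i ∈ Finset.Icc (p j) (q j), a j i • e i) ∧
    (∀ j, x j ≠ 0) ∧ (∀ j, p j ≤ q j) ∧ (∀ j, q j + 1 < p (j + 1))

/-- A sequence is unconditional if sign changes of coefficients are uniformly bounded. -/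
def IsUnconditionalSeq {X : Type} [NormedAddCommGroup X] [NormedSpace ℝ X] (x : ℕ → X) : Prop :=
  ∃ C : ℝ, 0 < C ∧ ∀ (k : ℕ) (a ε : ℕ → ℝ), (∀ i, ε i = 1 ∨ ε i = -1) →
    ‖∑ i ∈ Finset.range k, (ε i * a i) • x i‖ ≤ C * ‖∑ i ∈ Finset.range k, a i • x i‖


section AuxDiffBasis
variable {X : Type} [NormedAddCommGroup X] [NormedSpace ℝ X]

def uvec (e : ℕ → X) (n : ℕ) : X := ∑ l ∈ Finset.range n, (e (2*l+1) - e (2*l))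

lemma spread_two (e : ℕ → X)
    (hspread : ∀ (k : ℕ) (a : ℕ → ℝ) (n : ℕ → ℕ), StrictMono n →
      ‖∑ i ∈ Finset.range k, a i • e (n i)‖ = ‖∑ i ∈ Finset.range k, a i • e i‖)
    (K : ℕ) (t : ℕ → ℝ) (σ τ : ℕ → ℕ) (hσ : StrictMono σ) (hτ : StrictMono τ) :
    ‖∑ i ∈ Finset.range K, t i • e (σ i)‖ = ‖∑ i ∈ Finset.range K, t i • e (τ i)‖ := by
  rw [hspread K t σ hσ, hspread K t τ hτ]

/-- Abel summation. -/
lemma abel_sum (φ : ℕ → ℝ) (v : ℕ → X) (r : ℕ) :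
    ∑ u ∈ Finset.range (r+1), φ u • v u
      = ∑ u ∈ Finset.range r, (∑ t ∈ Finset.range (u+1), φ t) • (v u - v (u+1))
        + (∑ t ∈ Finset.range (r+1), φ t) • v r := by
  induction r with
  | zero => simp
  | succ r ih =>
      rw [Finset.sum_range_succ (f := fun u => φ u • v u) (r+1), ih,
        Finset.sum_range_succ (f := fun u => (∑ t ∈ Finset.range (u+1), φ t) • (v u - v (u+1))) r,
        Finset.sum_range_succ (f := fun t => φ t) (r+1)]
      rw [smul_sub, add_smul]
      abel

/-- alternating-pair sums all have the same norm as `uvec`. -/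
lemma pairs_norm (e : ℕ → X)
    (hspread : ∀ (k : ℕ) (a : ℕ → ℝ) (n : ℕ → ℕ), StrictMono n →
      ‖∑ i ∈ Finset.range k, a i • e (n i)‖ = ‖∑ i ∈ Finset.range k, a i • e i‖)
    (s t : ℕ → ℕ) (hst : ∀ l, s l < t l) (hts : ∀ l, t l < s (l+1)) (n : ℕ) :
    ‖∑ l ∈ Finset.range n, (e (t l) - e (s l))‖ = ‖uvec e n‖ := by
  -- rewrite both as placements of the tuple T
  have key : ∀ (s t : ℕ → ℕ), (∀ l, s l < t l) → (∀ l, t l < s (l+1)) →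
      ∑ l ∈ Finset.range n, (e (t l) - e (s l))
        = ∑ m ∈ Finset.range (2*n),
            (if Even m then (-1:ℝ) else 1) • e (if Even m then s (m/2) else t (m/2)) := by
    intro s t hst hts
    induction n with
    | zero => simp
    | succ n ih =>
        rw [Finset.sum_range_succ, ih, Nat.mul_succ]
        rw [show 2*n+2 = (2*n+1)+1 by ring, Finset.sum_range_succ, Finset.sum_range_succ]
        have h1 : ¬ Even (2*n+1) := by simp [Nat.even_add_one]
        have h2 : Even (2*n) := even_two_mul n
        simp only [h1, h2, if_true, if_false, if_pos, if_neg]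
        rw [Nat.mul_add_div (by norm_num), Nat.mul_div_cancel_left n (by norm_num : 0 < 2)]
        simp
        abel
  have hmono : ∀ (s t : ℕ → ℕ), (∀ l, s l < t l) → (∀ l, t l < s (l+1)) →
      StrictMono (fun m => if Even m then s (m/2) else t (m/2)) := by
    intro s t hst hts
    have step : ∀ m, (fun m => if Even m then s (m/2) else t (m/2)) m
        < (fun m => if Even m then s (m/2) else t (m/2)) (m+1) := by
      intro m
      rcases Nat.even_or_odd m with he | ho
      · have h1 : ¬ Even (m+1) := by simp [Nat.even_add_one, he]
        simp only [he, if_true, h1, if_false]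
        obtain ⟨c, hc⟩ := he
        have : (m+1)/2 = m/2 := by omega
        rw [this]; exact hst _
      · obtain ⟨c, hc⟩ := ho
        have he1 : Even (m+1) := by exact ⟨c+1, by omega⟩
        have h1 : ¬ Even m := by rw [Nat.even_iff]; omega
        simp only [he1, if_true, h1, if_false]
        have : (m+1)/2 = m/2 + 1 := by omega
        rw [this]; exact hts _
    exact strictMono_nat_of_lt_succ step
  rw [key s t hst hts]
  have h2 : uvec e n = ∑ m ∈ Finset.range (2*n),
      (if Even m then (-1:ℝ) else 1) • e (if Even m then (fun l => 2*l) (m/2) else (fun l => 2*l+1) (m/2)) :=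
    key (fun l => 2*l) (fun l => 2*l+1) (fun l => by show 2*l < 2*l+1; omega)
      (fun l => by show 2*l+1 < 2*(l+1); omega)
  rw [h2]
  exact spread_two e hspread _ _ _ _ (hmono s t hst hts)
    (hmono (fun l => 2*l) (fun l => 2*l+1) (fun l => by show 2*l < 2*l+1; omega)
      (fun l => by show 2*l+1 < 2*(l+1); omega))

lemma l1_lower (e : ℕ → X) (hnorm : ∀ i, ‖e i‖ = 1)
    (hspread : ∀ (k : ℕ) (a : ℕ → ℝ) (n : ℕ → ℕ), StrictMono n →
      ‖∑ i ∈ Finset.range k, a i • e (n i)‖ = ‖∑ i ∈ Finset.range k, a i • e i‖)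
    (εδ : ℝ) (hεδ : 0 < εδ) (hB : ∀ n : ℕ, εδ * n ≤ ‖uvec e n‖)
    (K : ℕ) (t : ℕ → ℝ) :
    ∑ i ∈ Finset.range K, |t i| ≤ (4/εδ) * ‖∑ i ∈ Finset.range K, t i • e i‖ := by
  rcases Nat.eq_zero_or_pos K with hK0 | hKpos
  · subst hK0; simp
  -- pick n with K ≤ εδ * n / 4
  obtain ⟨n, hn⟩ : ∃ n : ℕ, (K : ℝ) ≤ εδ * n / 4 := by
    obtain ⟨n, hn⟩ := exists_nat_ge (4 * K / εδ)
    refine ⟨n, ?_⟩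
    rw [div_le_iff₀ hεδ] at hn
    linarith
  have hnpos : 0 < ‖uvec e n‖ := by
    have := hB n
    have hKr : (0:ℝ) < K := by exact_mod_cast hKpos
    nlinarith
  obtain ⟨F, hF1, hFu⟩ := exists_dual_vector ℝ (uvec e n) (by
    intro h; rw [h] at hnpos; exact lt_irrefl _ hnpos)
  have hFle : ∀ y : X, F y ≤ ‖y‖ := by
    intro y
    calc F y ≤ |F y| := le_abs_self _
      _ ≤ ‖F‖ * ‖y‖ := F.le_opNorm y
      _ = ‖y‖ := by rw [hF1, one_mul]
  have hh2 : ∀ i, F (e (2*i+1) - e (2*i)) ≤ 2 := by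
    intro i
    calc F (e (2*i+1) - e (2*i)) ≤ ‖e (2*i+1) - e (2*i)‖ := hFle _
      _ ≤ ‖e (2*i+1)‖ + ‖e (2*i)‖ := norm_sub_le _ _
      _ = 2 := by rw [hnorm, hnorm]; norm_num
  set S : Finset ℕ := (Finset.range n).filter (fun i => εδ/2 ≤ F (e (2*i+1) - e (2*i))) with hSdef
  have hcard : (K : ℝ) ≤ S.card := by
    have hsplit : F (uvec e n) = ∑ i ∈ Finset.range n, F (e (2*i+1) - e (2*i)) := by
      rw [uvec, map_sum]
    have hub : ∑ i ∈ Finset.range n, F (e (2*i+1) - e (2*i))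
        ≤ 2 * S.card + (εδ/2) * n := by
      rw [← Finset.sum_filter_add_sum_filter_not (Finset.range n)
        (fun i => εδ/2 ≤ F (e (2*i+1) - e (2*i)))]
      have h1 : ∑ i ∈ S, F (e (2*i+1) - e (2*i)) ≤ 2 * S.card := by
        calc ∑ i ∈ S, F (e (2*i+1) - e (2*i)) ≤ ∑ i ∈ S, 2 :=
              Finset.sum_le_sum (fun i _ => hh2 i)
          _ = 2 * S.card := by rw [Finset.sum_const]; push_cast; ring
      set T := (Finset.range n).filter (fun i => ¬ (εδ/2 ≤ F (e (2*i+1) - e (2*i)))) with hT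
      have h2 : ∑ i ∈ T, F (e (2*i+1) - e (2*i)) ≤ (εδ/2) * n := by
        have hc : ∑ i ∈ T, F (e (2*i+1) - e (2*i)) ≤ ∑ i ∈ T, (εδ/2) := by
          apply Finset.sum_le_sum
          intro i hi
          have hmem := (Finset.mem_filter.mp hi).2
          push_neg at hmem
          exact le_of_lt hmem
        have hconst : ∑ i ∈ T, (εδ/2) = (T.card : ℝ) * (εδ/2) := by
          rw [Finset.sum_const, nsmul_eq_mul]
        have hTn : (T.card : ℝ) ≤ (n : ℝ) := by
          have := Finset.card_filter_le (Finset.range n)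
            (fun i => ¬ (εδ/2 ≤ F (e (2*i+1) - e (2*i))))
          rw [Finset.card_range] at this
          exact_mod_cast this
        rw [hconst] at hc
        nlinarith
      exact add_le_add h1 h2
    have hlb : εδ * n ≤ F (uvec e n) := by rw [hFu]; exact hB n
    have : εδ * n ≤ 2 * S.card + (εδ/2) * n := by
      calc εδ * n ≤ F (uvec e n) := hlb
        _ = _ := hsplit
        _ ≤ _ := hub
    -- so εδ n / 4 ≤ S.card /2 *... : εδ*n/2 ≤ 2 |S| ⟹ K ≤ εδ n/4 ≤ |S|
    nlinarith [hn]
  have hKS : K ≤ S.card := by exact_mod_cast hcard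
  obtain ⟨S', hS'sub, hS'card⟩ := Finset.exists_subset_card_eq hKS
  set emb := S'.orderEmbOfFin hS'card with hemb
  have hembS : ∀ j : Fin K, (emb j : ℕ) ∈ S := fun j => hS'sub (S'.orderEmbOfFin_mem hS'card j)
  have hembn : ∀ j : Fin K, (emb j : ℕ) < n := by
    intro j
    have := hembS j
    rw [hSdef, Finset.mem_filter, Finset.mem_range] at this
    exact this.1
  have hembF : ∀ j : Fin K, εδ/2 ≤ F (e (2*(emb j)+1) - e (2*(emb j))) := by
    intro j
    have := hembS j
    rw [hSdef, Finset.mem_filter] at this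
    exact this.2
  -- placements
  have hplace : ∀ (u : ℕ → ℝ), StrictMono (fun j =>
      if h : j < K then (if 0 ≤ u j then 2*(emb ⟨j,h⟩ : ℕ)+1 else 2*(emb ⟨j,h⟩ : ℕ)) else 2*n + j) := by
    intro u
    intro j j' hjj'
    by_cases h1 : j < K <;> by_cases h2 : j' < K
    · simp only [dif_pos h1, dif_pos h2]
      have hlt : (emb ⟨j,h1⟩ : ℕ) < (emb ⟨j',h2⟩ : ℕ) := by
        have := emb.strictMono (show (⟨j,h1⟩ : Fin K) < ⟨j',h2⟩ by exact hjj')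
        exact this
      split <;> split <;> omega
    · simp only [dif_pos h1, dif_neg h2]
      have := hembn ⟨j,h1⟩
      split <;> omega
    · omega
    · simp only [dif_neg h1, dif_neg h2]; omega
  set σ : ℕ → ℕ := fun j =>
    if h : j < K then (if 0 ≤ t j then 2*(emb ⟨j,h⟩ : ℕ)+1 else 2*(emb ⟨j,h⟩ : ℕ)) else 2*n + j
    with hσdef
  set σ' : ℕ → ℕ := fun j =>
    if h : j < K then (if 0 ≤ -t j then 2*(emb ⟨j,h⟩ : ℕ)+1 else 2*(emb ⟨j,h⟩ : ℕ)) else 2*n + j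
    with hσ'def
  have hσ : StrictMono σ := hplace t
  have hσ' : StrictMono σ' := hplace (fun j => -t j)
  set w := ∑ i ∈ Finset.range K, t i • e i with hw
  have hb1 : F (∑ i ∈ Finset.range K, t i • e (σ i)) ≤ ‖w‖ := by
    calc F _ ≤ ‖∑ i ∈ Finset.range K, t i • e (σ i)‖ := hFle _
      _ = ‖w‖ := hspread K t σ hσ
  have hb2 : F (∑ i ∈ Finset.range K, (-t i) • e (σ' i)) ≤ ‖w‖ := by
    calc F _ ≤ ‖∑ i ∈ Finset.range K, (-t i) • e (σ' i)‖ := hFle _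
      _ = ‖∑ i ∈ Finset.range K, (-t i) • e i‖ := hspread K (fun i => -t i) σ' hσ'
      _ = ‖-w‖ := by
          rw [hw, ← Finset.sum_neg_distrib]
          congr 1
          exact Finset.sum_congr rfl (fun i _ => by rw [neg_smul])
      _ = ‖w‖ := norm_neg w
  have hkey : (εδ/2) * ∑ i ∈ Finset.range K, |t i| ≤ 2 * ‖w‖ := by
    have hsum : F (∑ i ∈ Finset.range K, t i • e (σ i))
        + F (∑ i ∈ Finset.range K, (-t i) • e (σ' i))
        = ∑ i ∈ Finset.range K, (t i * (F (e (σ i)) - F (e (σ' i)))) := by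
      rw [map_sum, map_sum, ← Finset.sum_add_distrib]
      apply Finset.sum_congr rfl
      intro i _
      rw [map_smul, map_smul]
      simp only [smul_eq_mul, neg_mul]
      ring
    have hterm : ∀ i ∈ Finset.range K, (εδ/2) * |t i| ≤ t i * (F (e (σ i)) - F (e (σ' i))) := by
      intro i hi
      have hiK : i < K := Finset.mem_range.mp hi
      rcases le_or_gt 0 (t i) with hpos | hneg
      · have hs : σ i = 2*(emb ⟨i,hiK⟩ : ℕ)+1 := by
          rw [hσdef]; simp only [dif_pos hiK, if_pos hpos]
        rcases eq_or_lt_of_le hpos with heq | hlt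
        · rw [← heq]; simp
        · have hs' : σ' i = 2*(emb ⟨i,hiK⟩ : ℕ) := by
            rw [hσ'def]; simp only [dif_pos hiK]
            rw [if_neg (by simp; linarith)]
          rw [hs, hs', abs_of_pos hlt]
          have := hembF ⟨i,hiK⟩
          have hFh : F (e (2*(emb ⟨i,hiK⟩ : ℕ)+1)) - F (e (2*(emb ⟨i,hiK⟩ : ℕ)))
              = F (e (2*(emb ⟨i,hiK⟩ : ℕ)+1) - e (2*(emb ⟨i,hiK⟩ : ℕ))) := by rw [map_sub]
          rw [hFh]
          calc εδ/2 * t i ≤ F (e (2*(emb ⟨i,hiK⟩:ℕ)+1) - e (2*(emb ⟨i,hiK⟩:ℕ))) * t i :=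
                mul_le_mul_of_nonneg_right this (le_of_lt hlt)
            _ = t i * F (e (2*(emb ⟨i,hiK⟩:ℕ)+1) - e (2*(emb ⟨i,hiK⟩:ℕ))) := mul_comm _ _
      · have hs : σ i = 2*(emb ⟨i,hiK⟩ : ℕ) := by
          rw [hσdef]; simp only [dif_pos hiK]
          rw [if_neg (by linarith)]
        have hs' : σ' i = 2*(emb ⟨i,hiK⟩ : ℕ)+1 := by
          rw [hσ'def]; simp only [dif_pos hiK]
          rw [if_pos (by linarith)]
        rw [hs, hs', abs_of_neg hneg]
        have := hembF ⟨i,hiK⟩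
        have hFh : F (e (2*(emb ⟨i,hiK⟩ : ℕ))) - F (e (2*(emb ⟨i,hiK⟩ : ℕ)+1))
            = -F (e (2*(emb ⟨i,hiK⟩ : ℕ)+1) - e (2*(emb ⟨i,hiK⟩ : ℕ))) := by
          rw [map_sub]; ring
        rw [hFh]
        nlinarith
    calc (εδ/2) * ∑ i ∈ Finset.range K, |t i|
        = ∑ i ∈ Finset.range K, (εδ/2) * |t i| := Finset.mul_sum _ _ _
      _ ≤ ∑ i ∈ Finset.range K, (t i * (F (e (σ i)) - F (e (σ' i)))) :=
          Finset.sum_le_sum hterm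
      _ = _ := hsum.symm
      _ ≤ 2 * ‖w‖ := by linarith
  rw [div_mul_eq_mul_div, le_div_iff₀ hεδ]
  nlinarith [hkey]

lemma sum_d_eq (e d : ℕ → X) (hd0 : d 0 = e 0) (hd : ∀ i, d (i + 1) = e (i + 1) - e i)
    (b : ℕ → ℝ) (n : ℕ) :
    ∑ i ∈ Finset.range (n+1), b i • d i
      = ∑ i ∈ Finset.range (n+1), (b i - b (i+1)) • e i + b (n+1) • e n := by
  induction n with
  | zero => simp [hd0, sub_smul]
  | succ n ih =>
      rw [Finset.sum_range_succ (f := fun i => b i • d i) (n+1), ih, hd,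
        Finset.sum_range_succ (f := fun i => (b i - b (i+1)) • e i) (n+1)]
      rw [smul_sub, sub_smul]
      abel

lemma part2 (e d : ℕ → X) (hnorm : ∀ i, ‖e i‖ = 1)
    (hspread : ∀ (k : ℕ) (a : ℕ → ℝ) (n : ℕ → ℕ), StrictMono n →
      ‖∑ i ∈ Finset.range k, a i • e (n i)‖ = ‖∑ i ∈ Finset.range k, a i • e i‖)
    (hbi : ∀ (N m n : ℕ) (a : ℕ → ℝ),
      ‖∑ i ∈ (Finset.range N).filter (fun i => m ≤ i ∧ i ≤ n), a i • e i‖ ≤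
        ‖∑ i ∈ Finset.range N, a i • e i‖)
    (hd0 : d 0 = e 0) (hd : ∀ i, d (i + 1) = e (i + 1) - e i)
    (x : ℕ → X) (a : ℕ → ℕ → ℝ) (p q : ℕ → ℕ)
    (hxe : ∀ j, x j = ∑ i ∈ Finset.Icc (p j) (q j), a j i • d i)
    (hpq : ∀ j, p j ≤ q j) (hqp : ∀ j, q j + 1 < p (j + 1)) :
    ∃ C : ℝ, 0 < C ∧ ∀ (k : ℕ) (c ε : ℕ → ℝ), (∀ i, ε i = 1 ∨ ε i = -1) →
      ‖∑ j ∈ Finset.range k, (ε j * c j) • x j‖ ≤ C * ‖∑ j ∈ Finset.range k, c j • x j‖ := by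
  classical
  -- ordering facts
  have hqq : ∀ j1 j2, j1 < j2 → q j1 + 1 < p j2 := by
    intro j1 j2 h
    induction j2 with
    | zero => omega
    | succ j2 ih =>
        rcases Nat.lt_succ_iff_lt_or_eq.mp h with h' | h'
        · have h1 := ih h'
          have h2 := hpq j2
          have h3 := hqp j2
          omega
        · subst h'; exact hqp j1
  have hdisj : ∀ i j1 j2, (p j1 ≤ i ∧ i ≤ q j1) → (p j2 ≤ i ∧ i ≤ q j2) → j1 = j2 := by
    intro i j1 j2 h1 h2
    rcases Nat.lt_trichotomy j1 j2 with h | h | h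
    · have := hqq j1 j2 h; omega
    · exact h
    · have := hqq j2 j1 h; omega
  -- the b-coefficient function
  set Bf : ℕ → (ℕ → ℝ) → ℕ → ℝ :=
    fun k c i => ∑ j ∈ Finset.range k, (if p j ≤ i ∧ i ≤ q j then c j * a j i else 0) with hBf
  have hBval : ∀ k (c : ℕ → ℝ) i j, j < k → (p j ≤ i ∧ i ≤ q j) → Bf k c i = c j * a j i := by
    intro k c i j hjk hij
    have h : (∑ j' ∈ Finset.range k, if p j' ≤ i ∧ i ≤ q j' then c j' * a j' i else 0)
        = (if p j ≤ i ∧ i ≤ q j then c j * a j i else 0) := by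
      apply Finset.sum_eq_single_of_mem j (Finset.mem_range.mpr hjk)
      intro j' _ hj'
      rw [if_neg (fun hcon => hj' (hdisj i j' j hcon hij))]
    show (∑ j' ∈ Finset.range k, if p j' ≤ i ∧ i ≤ q j' then c j' * a j' i else 0) = _
    rw [h, if_pos hij]
  have hBzero : ∀ k (c : ℕ → ℝ) i, (∀ j, j < k → ¬(p j ≤ i ∧ i ≤ q j)) → Bf k c i = 0 := by
    intro k c i h
    show (∑ j ∈ Finset.range k, if p j ≤ i ∧ i ≤ q j then c j * a j i else 0) = 0
    apply Finset.sum_eq_zero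
    intro j hj
    rw [if_neg (h j (Finset.mem_range.mp hj))]
  have hnb1 : ∀ j0, 1 ≤ p j0 → ∀ j, ¬(p j ≤ p j0 - 1 ∧ p j0 - 1 ≤ q j) := by
    intro j0 h1 j hcon
    rcases Nat.lt_trichotomy j j0 with h | h | h
    · have := hqq j j0 h; omega
    · subst h; omega
    · have := hqq j0 j h; have := hpq j0; omega
  have hnb2 : ∀ j0 j, ¬(p j ≤ q j0 + 1 ∧ q j0 + 1 ≤ q j) := by
    intro j0 j hcon
    rcases Nat.lt_trichotomy j j0 with h | h | h
    · have := hqq j j0 h; have := hpq j0; omega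
    · subst h; omega
    · have := hqq j0 j h; omega
  have hqmono : ∀ j1 j2, j1 ≤ j2 → q j1 ≤ q j2 := by
    intro j1 j2 h
    rcases Nat.eq_or_lt_of_le h with h' | h'
    · subst h'; exact le_refl _
    · have := hqq j1 j2 h'; have := hpq j2; omega
  -- sum representations
  have hwB : ∀ m (c : ℕ → ℝ), ∑ j ∈ Finset.range (m+1), c j • x j
      = ∑ i ∈ Finset.range (q m + 1), Bf (m+1) c i • d i := by
    intro m c
    have hstep : ∀ j, j < m + 1 → c j • x j
        = ∑ i ∈ Finset.range (q m + 1), (if p j ≤ i ∧ i ≤ q j then c j * a j i else 0) • d i := by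
      intro j hj
      rw [hxe j, Finset.smul_sum]
      have h1 : ∀ i, (if p j ≤ i ∧ i ≤ q j then c j * a j i else 0) • d i
          = if p j ≤ i ∧ i ≤ q j then (c j * a j i) • d i else 0 := by
        intro i
        split <;> simp
      rw [Finset.sum_congr rfl (fun i _ => h1 i), ← Finset.sum_filter]
      have h2 : (Finset.range (q m + 1)).filter (fun i => p j ≤ i ∧ i ≤ q j)
          = Finset.Icc (p j) (q j) := by
        ext i
        simp only [Finset.mem_filter, Finset.mem_range, Finset.mem_Icc]
        have := hqmono j m (by omega)
        omega
      rw [h2]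
      apply Finset.sum_congr rfl
      intro i _
      rw [mul_smul]
    rw [Finset.sum_congr rfl (fun j hj => hstep j (Finset.mem_range.mp hj)), Finset.sum_comm]
    apply Finset.sum_congr rfl
    intro i _
    rw [Finset.sum_smul]
  have hwE : ∀ m (c : ℕ → ℝ), ∑ j ∈ Finset.range (m+1), c j • x j
      = ∑ i ∈ Finset.range (q m + 1),
          (Bf (m+1) c i - Bf (m+1) c (i+1)) • e i := by
    intro m c
    rw [hwB m c]
    have h0 : Bf (m+1) c (q m + 1) = 0 :=
      hBzero _ _ _ (fun j _ hcon => hnb2 m j hcon)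
    rw [sum_d_eq e d hd0 hd (Bf (m+1) c) (q m), h0, zero_smul, add_zero]
  -- sign comparison
  have hsign : ∀ m (c ε : ℕ → ℝ), (∀ i, ε i = 1 ∨ ε i = -1) → ∀ i,
      |Bf (m+1) (fun j => ε j * c j) i - Bf (m+1) (fun j => ε j * c j) (i+1)|
        = |Bf (m+1) c i - Bf (m+1) c (i+1)| := by
    intro m c ε hε i
    have habs1 : ∀ j, |ε j| = 1 := by
      intro j; rcases hε j with h | h <;> rw [h] <;> norm_num
    have hs : ∃ s : ℝ, |s| = 1 ∧ Bf (m+1) (fun j => ε j * c j) i = s * Bf (m+1) c i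
        ∧ Bf (m+1) (fun j => ε j * c j) (i+1) = s * Bf (m+1) c (i+1) := by
      by_cases hi : ∃ j, j < m+1 ∧ (p j ≤ i ∧ i ≤ q j)
      · obtain ⟨j, hjk, hij⟩ := hi
        refine ⟨ε j, habs1 j, ?_, ?_⟩
        · rw [hBval _ _ _ _ hjk hij, hBval _ c _ _ hjk hij]; ring
        · by_cases hi1 : ∃ j', j' < m+1 ∧ (p j' ≤ i+1 ∧ i+1 ≤ q j')
          · obtain ⟨j', hjk', hij'⟩ := hi1
            have hjj : j' = j := by
              rcases Nat.lt_trichotomy j j' with h | h | h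
              · have := hqq j j' h; omega
              · omega
              · have := hqq j' j h; omega
            subst hjj
            rw [hBval _ _ _ _ hjk' hij', hBval _ c _ _ hjk' hij']; ring
          · have hi1' : ∀ j', j' < m+1 → ¬(p j' ≤ i+1 ∧ i+1 ≤ q j') :=
              fun j' h1 hcon => hi1 ⟨j', h1, hcon⟩
            rw [hBzero _ _ _ hi1', hBzero _ c _ hi1']
            ring
      · have hi' : ∀ j', j' < m+1 → ¬(p j' ≤ i ∧ i ≤ q j') :=
          fun j' h1 hcon => hi ⟨j', h1, hcon⟩
        by_cases hi1 : ∃ j', j' < m+1 ∧ (p j' ≤ i+1 ∧ i+1 ≤ q j')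
        · obtain ⟨j', hjk', hij'⟩ := hi1
          refine ⟨ε j', habs1 j', ?_, ?_⟩
          · rw [hBzero _ _ _ hi', hBzero _ c _ hi']
            ring
          · rw [hBval _ _ _ _ hjk' hij', hBval _ c _ _ hjk' hij']; ring
        · have hi1' : ∀ j', j' < m+1 → ¬(p j' ≤ i+1 ∧ i+1 ≤ q j') :=
            fun j' h1 hcon => hi1 ⟨j', h1, hcon⟩
          refine ⟨1, by norm_num, ?_, ?_⟩
          · rw [hBzero _ _ _ hi', hBzero _ c _ hi']
            ring
          · rw [hBzero _ _ _ hi1', hBzero _ c _ hi1']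
            ring
    obtain ⟨s, hs1, h1, h2⟩ := hs
    rw [h1, h2, ← mul_sub, abs_mul, hs1, one_mul]
  -- main case split
  by_cases hA : ∀ η : ℝ, 0 < η → ∃ n : ℕ, 1 ≤ n ∧ ‖uvec e n‖ ≤ η * n
  case neg =>
    push_neg at hA
    obtain ⟨η, hη, hBc⟩ := hA
    have hB' : ∀ n : ℕ, η * n ≤ ‖uvec e n‖ := by
      intro n
      rcases Nat.eq_zero_or_pos n with h | h
      · subst h; simp [uvec]
      · exact le_of_lt (hBc n (by omega))
    refine ⟨4/η, by positivity, ?_⟩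
    intro k c ε hε
    rcases k with _ | m
    · simp
    calc ‖∑ j ∈ Finset.range (m+1), (ε j * c j) • x j‖
        = ‖∑ i ∈ Finset.range (q m + 1),
            (Bf (m+1) (fun j => ε j * c j) i - Bf (m+1) (fun j => ε j * c j) (i+1)) • e i‖ := by
          rw [hwE m (fun j => ε j * c j)]
      _ ≤ ∑ i ∈ Finset.range (q m + 1),
            ‖(Bf (m+1) (fun j => ε j * c j) i - Bf (m+1) (fun j => ε j * c j) (i+1)) • e i‖ :=
          norm_sum_le _ _
      _ = ∑ i ∈ Finset.range (q m + 1),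
            |Bf (m+1) c i - Bf (m+1) c (i+1)| := by
          apply Finset.sum_congr rfl
          intro i _
          rw [norm_smul, hnorm i, mul_one, Real.norm_eq_abs, hsign m c ε hε i]
      _ ≤ (4/η) * ‖∑ i ∈ Finset.range (q m + 1),
            (fun i => Bf (m+1) c i - Bf (m+1) c (i+1)) i • e i‖ :=
          l1_lower e hnorm hspread η hη hB' (q m + 1) (fun i => Bf (m+1) c i - Bf (m+1) c (i+1))
      _ = (4/η) * ‖∑ j ∈ Finset.range (m+1), c j • x j‖ := by
          rw [← hwE m c]
  case pos =>
    -- Case A: averages of differences have arbitrarily small norm.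
    -- Key deletion lemma: removing one block (with p j0 ≥ 1) does not increase the norm.
    have hdel : ∀ m (c : ℕ → ℝ) (j0 : ℕ), j0 < m+1 → 1 ≤ p j0 →
        ‖∑ j ∈ Finset.range (m+1), Function.update c j0 0 j • x j‖
          ≤ ‖∑ j ∈ Finset.range (m+1), c j • x j‖ := by
    
      intro m c j0 hj0 hp0
      set N := q m + 1 with hN
      set b : ℕ → ℝ := Bf (m+1) c with hb
      set β : ℕ → ℝ := fun i => b i - b (i+1) with hβ
      set P := p j0 - 1 with hP
      set Q := q j0 with hQ
      set r := Q - P with hr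
      have hpj0 : p j0 = P + 1 := by omega
      have hPQ : P + 1 ≤ Q := by have := hpq j0; omega
      have hr1 : 1 ≤ r := by omega
      have hrPQ : P + r = Q := by omega
      have hQN : Q < N := by have := hqmono j0 m (by omega); omega
      have hbP : b P = 0 := hBzero _ _ _ (fun j _ => hnb1 j0 hp0 j)
      have hbQ1 : b (Q+1) = 0 := hBzero _ _ _ (fun j _ => hnb2 j0 j)
      set φ : ℕ → ℝ := fun u => β (P + u) with hφ
      have hφval : ∀ u, φ u = b (P + u) - b (P + u + 1) := fun u => rfl
      have hzs : ∑ u ∈ Finset.range (r+1), φ u = 0 := by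
        have h1 : ∑ u ∈ Finset.range (r+1), (b (P+u) - b (P+u+1))
            = b (P+0) - b (P+(r+1)) := by
          have := Finset.sum_range_sub' (fun u => b (P + u)) (r+1)
          simpa [add_assoc] using this
        rw [Finset.sum_congr rfl (fun u _ => hφval u), h1]
        have e1 : P + (r+1) = Q + 1 := by omega
        have e2 : P + 0 = P := by omega
        rw [e1, e2, hbP, hbQ1, sub_zero]
      set β' : ℕ → ℝ := fun i => if P ≤ i ∧ i ≤ Q then 0 else β i with hβ'
      have hβ'val : ∀ i, β' i = if P ≤ i ∧ i ≤ Q then 0 else β i := fun i => rfl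
      have hupd : ∀ i, Bf (m+1) (Function.update c j0 0) i
          = if p j0 ≤ i ∧ i ≤ q j0 then 0 else b i := by
        intro i
        by_cases hi : p j0 ≤ i ∧ i ≤ q j0
        · rw [if_pos hi]
          rw [hBval _ _ _ _ hj0 hi, Function.update_self, zero_mul]
        · rw [if_neg hi, hb]
          show (∑ j ∈ Finset.range (m+1),
              if p j ≤ i ∧ i ≤ q j then Function.update c j0 0 j * a j i else 0) = _
          show _ = (∑ j ∈ Finset.range (m+1), if p j ≤ i ∧ i ≤ q j then c j * a j i else 0)
          apply Finset.sum_congr rfl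
          intro j _
          by_cases hcond : p j ≤ i ∧ i ≤ q j
          · rw [if_pos hcond, if_pos hcond]
            have hjj0 : j ≠ j0 := fun h => hi (h ▸ hcond)
            rw [Function.update_of_ne hjj0]
          · rw [if_neg hcond, if_neg hcond]
      have hbval : ∀ i, b i = Bf (m+1) c i := fun i => rfl
      have hβd : ∀ i, Bf (m+1) (Function.update c j0 0) i
          - Bf (m+1) (Function.update c j0 0) (i+1) = β' i := by
        intro i
        have hβval : ∀ i, β i = b i - b (i+1) := fun _ => rfl
        rw [hupd i, hupd (i+1), hβ'val i, hβval i, hpj0]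
        split_ifs with h1 h2 h3 h4 h5 h6 h7
        · ring
        · omega
        · have hiQ : i + 1 = Q + 1 := by omega
          rw [hiQ, hbQ1]; ring
        · omega
        · have hiP : i = P := by omega
          rw [hiP, hbP]; ring
        · omega
        · omega
        · rfl
      have hwdelE : ∑ j ∈ Finset.range (m+1), Function.update c j0 0 j • x j
          = ∑ i ∈ Finset.range N, β' i • e i := by
        rw [hwE m (Function.update c j0 0)]
        exact Finset.sum_congr rfl (fun i _ => by rw [hβd i])
      have hwE' : ∑ j ∈ Finset.range (m+1), c j • x j = ∑ i ∈ Finset.range N, β i • e i :=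
        hwE m c
      apply le_of_forall_pos_le_add
      intro η hη
      set CΦ := ∑ u ∈ Finset.range (r+1), |∑ t ∈ Finset.range (u+1), φ t| with hCΦ
      have hCΦ0 : 0 ≤ CΦ := Finset.sum_nonneg (fun u _ => abs_nonneg _)
      obtain ⟨n, hn1, hun⟩ := hA (η / (CΦ + 1)) (by positivity)
      have hnr : (0:ℝ) < n := by exact_mod_cast hn1
      set σf : ℕ → ℕ → ℕ := fun l i =>
        if i < P then i else if i ≤ Q then P + l*(r+1) + (i - P) else i + n*(r+1) with hσf
      have hσval : ∀ l i, σf l i =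
          if i < P then i else if i ≤ Q then P + l*(r+1) + (i - P) else i + n*(r+1) :=
        fun l i => rfl
      have hσmono : ∀ l, l < n → StrictMono (σf l) := by
        intro l hl
        apply strictMono_nat_of_lt_succ
        intro i
        have hmul : l*(r+1) + (r+1) ≤ n*(r+1) := by
          have h := Nat.mul_le_mul_right (r+1) (show l+1 ≤ n by omega)
          rwa [Nat.succ_mul] at h
        rw [hσval l i, hσval l (i+1)]
        obtain ⟨L, hL⟩ : ∃ L, l*(r+1) = L := ⟨_, rfl⟩
        obtain ⟨M, hM⟩ : ∃ M, n*(r+1) = M := ⟨_, rfl⟩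
        rw [hL, hM] at hmul ⊢
        split_ifs <;> omega
      have hWnorm : ∀ l, l < n → ‖∑ i ∈ Finset.range N, β i • e (σf l i)‖
          = ‖∑ j ∈ Finset.range (m+1), c j • x j‖ := by
        intro l hl
        rw [hspread N β (σf l) (hσmono l hl), ← hwE']
      -- the averaged copies vector
      set Z := ∑ u ∈ Finset.range (r+1), φ u • (∑ l ∈ Finset.range n, e (P + l*(r+1) + u))
        with hZ
      have hsplit : ∑ l ∈ Finset.range n, (∑ i ∈ Finset.range N, β i • e (σf l i))
          = (n:ℝ) • (∑ i ∈ Finset.range N, β' i • e (σf 0 i)) + Z := by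
        rw [Finset.sum_comm]
        have hterm : ∀ i, ∑ l ∈ Finset.range n, β i • e (σf l i)
            = β i • (∑ l ∈ Finset.range n, e (σf l i)) := by
          intro i; rw [Finset.smul_sum]
        rw [Finset.sum_congr rfl (fun i _ => hterm i)]
        rw [← Finset.sum_filter_add_sum_filter_not (Finset.range N) (fun i => P ≤ i ∧ i ≤ Q)]
        have hfil : (Finset.range N).filter (fun i => P ≤ i ∧ i ≤ Q) = Finset.Icc P Q := by
          ext i
          simp only [Finset.mem_filter, Finset.mem_range, Finset.mem_Icc]
          omega
        have htrue : ∑ i ∈ (Finset.range N).filter (fun i => P ≤ i ∧ i ≤ Q),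
            β i • (∑ l ∈ Finset.range n, e (σf l i)) = Z := by
          rw [hfil, ← Finset.Ico_add_one_right_eq_Icc, Finset.sum_Ico_eq_sum_range]
          have hQP : Q + 1 - P = r + 1 := by omega
          rw [hQP, hZ]
          apply Finset.sum_congr rfl
          intro u hu
          have hu' : u ≤ r := by
            have := Finset.mem_range.mp hu; omega
          have hσPu : ∀ l, σf l (P + u) = P + l*(r+1) + u := by
            intro l
            rw [hσval]
            rw [if_neg (by omega), if_pos (by omega)]
            congr 1
            omega
          rw [Finset.sum_congr rfl (fun l _ => by rw [hσPu l])]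
        have hfalse : ∑ i ∈ (Finset.range N).filter (fun i => ¬(P ≤ i ∧ i ≤ Q)),
            β i • (∑ l ∈ Finset.range n, e (σf l i))
            = (n:ℝ) • (∑ i ∈ Finset.range N, β' i • e (σf 0 i)) := by
          have hconst : ∀ i, ¬(P ≤ i ∧ i ≤ Q) → ∀ l, σf l i = σf 0 i := by
            intro i hi l
            rw [hσval, hσval]
            rcases Nat.lt_or_ge i P with h1 | h1
            · rw [if_pos h1, if_pos h1]
            · rw [if_neg (by omega), if_neg (by omega), if_neg (by omega), if_neg (by omega)]
          have hstep : ∀ i, ¬(P ≤ i ∧ i ≤ Q) →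
              β i • (∑ l ∈ Finset.range n, e (σf l i)) = (n:ℝ) • (β i • e (σf 0 i)) := by
            intro i hi
            rw [Finset.sum_congr rfl (fun l _ => by rw [hconst i hi l]), Finset.sum_const,
              Finset.card_range, ← Nat.cast_smul_eq_nsmul ℝ, smul_comm]
          rw [Finset.sum_congr (rfl)
            (fun i hi => hstep i (Finset.mem_filter.mp hi).2), ← Finset.smul_sum]
          congr 1
          have hsplit2 : ∑ i ∈ Finset.range N, β' i • e (σf 0 i)
              = ∑ i ∈ (Finset.range N).filter (fun i => P ≤ i ∧ i ≤ Q), β' i • e (σf 0 i)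
                + ∑ i ∈ (Finset.range N).filter (fun i => ¬(P ≤ i ∧ i ≤ Q)), β' i • e (σf 0 i) :=
            (Finset.sum_filter_add_sum_filter_not _ _ _).symm
          rw [hsplit2]
          have hz1 : ∑ i ∈ (Finset.range N).filter (fun i => P ≤ i ∧ i ≤ Q),
              β' i • e (σf 0 i) = 0 := by
            apply Finset.sum_eq_zero
            intro i hi
            have := (Finset.mem_filter.mp hi).2
            rw [hβ'val i, if_pos this, zero_smul]
          have hz2 : ∀ i, ¬(P ≤ i ∧ i ≤ Q) → β' i = β i := by
            intro i hi; rw [hβ'val i, if_neg hi]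
          rw [hz1, zero_add]
          exact (Finset.sum_congr rfl
            (fun i hi => by rw [hz2 i (Finset.mem_filter.mp hi).2])).symm
        rw [htrue, hfalse]
        ring_nf
        abel
      -- norm of Z
      have hZnorm : ‖Z‖ ≤ CΦ * ‖uvec e n‖ := by
        rw [hZ]
        rw [abel_sum φ (fun u => ∑ l ∈ Finset.range n, e (P + l*(r+1) + u)) r]
        rw [hzs, zero_smul, add_zero]
        calc ‖∑ u ∈ Finset.range r, (∑ t ∈ Finset.range (u+1), φ t) •
                ((∑ l ∈ Finset.range n, e (P + l*(r+1) + u))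
                  - ∑ l ∈ Finset.range n, e (P + l*(r+1) + (u+1)))‖
            ≤ ∑ u ∈ Finset.range r, ‖(∑ t ∈ Finset.range (u+1), φ t) •
                ((∑ l ∈ Finset.range n, e (P + l*(r+1) + u))
                  - ∑ l ∈ Finset.range n, e (P + l*(r+1) + (u+1)))‖ := norm_sum_le _ _
          _ ≤ ∑ u ∈ Finset.range r, |∑ t ∈ Finset.range (u+1), φ t| * ‖uvec e n‖ := by
              apply Finset.sum_le_sum
              intro u _
              rw [norm_smul, Real.norm_eq_abs]
              apply mul_le_mul_of_nonneg_left _ (abs_nonneg _)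
              have hdiff : (∑ l ∈ Finset.range n, e (P + l*(r+1) + u))
                  - (∑ l ∈ Finset.range n, e (P + l*(r+1) + (u+1)))
                  = -(∑ l ∈ Finset.range n,
                      (e (P + l*(r+1) + (u+1)) - e (P + l*(r+1) + u))) := by
                rw [← Finset.sum_sub_distrib, ← Finset.sum_neg_distrib]
                apply Finset.sum_congr rfl
                intro l _
                abel
              rw [hdiff, norm_neg]
              have := pairs_norm e hspread (fun l => P + l*(r+1) + u)
                (fun l => P + l*(r+1) + (u+1))
                (fun l => by
                  show P + l*(r+1) + u < P + l*(r+1) + (u+1)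
                  omega)
                (fun l => by
                  show P + l*(r+1) + (u+1) < P + (l+1)*(r+1) + u
                  obtain ⟨L, hL⟩ : ∃ L, l*(r+1) = L := ⟨_, rfl⟩
                  rw [Nat.succ_mul, hL]
                  omega)
                n
              rw [this]
          _ ≤ ∑ u ∈ Finset.range (r+1), |∑ t ∈ Finset.range (u+1), φ t| * ‖uvec e n‖ := by
              apply Finset.sum_le_sum_of_subset_of_nonneg
                (Finset.range_subset_range.mpr (by omega))
              intro u _ _
              positivity
          _ = CΦ * ‖uvec e n‖ := by rw [hCΦ, Finset.sum_mul]
      -- assemble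
      have hZsumnorm : ‖∑ l ∈ Finset.range n, (∑ i ∈ Finset.range N, β i • e (σf l i))‖
          ≤ (n:ℝ) * ‖∑ j ∈ Finset.range (m+1), c j • x j‖ := by
        calc ‖∑ l ∈ Finset.range n, (∑ i ∈ Finset.range N, β i • e (σf l i))‖
            ≤ ∑ l ∈ Finset.range n, ‖∑ i ∈ Finset.range N, β i • e (σf l i)‖ := norm_sum_le _ _
          _ = ∑ l ∈ Finset.range n, ‖∑ j ∈ Finset.range (m+1), c j • x j‖ :=
              Finset.sum_congr rfl (fun l hl => hWnorm l (Finset.mem_range.mp hl))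
          _ = (n:ℝ) * ‖∑ j ∈ Finset.range (m+1), c j • x j‖ := by
              rw [Finset.sum_const, nsmul_eq_mul, Finset.card_range]
      have hdelnorm : ‖∑ j ∈ Finset.range (m+1), Function.update c j0 0 j • x j‖
          = ‖∑ i ∈ Finset.range N, β' i • e (σf 0 i)‖ := by
        rw [hwdelE, ← hspread N β' (σf 0) (hσmono 0 hn1)]
      rw [hdelnorm]
      have hfinal : (n:ℝ) * ‖∑ i ∈ Finset.range N, β' i • e (σf 0 i)‖
          ≤ (n:ℝ) * ‖∑ j ∈ Finset.range (m+1), c j • x j‖ + CΦ * ‖uvec e n‖ := by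
        have h1 : (n:ℝ) • (∑ i ∈ Finset.range N, β' i • e (σf 0 i))
            = (∑ l ∈ Finset.range n, (∑ i ∈ Finset.range N, β i • e (σf l i))) - Z := by
          rw [hsplit]; abel
        calc (n:ℝ) * ‖∑ i ∈ Finset.range N, β' i • e (σf 0 i)‖
            = ‖(n:ℝ) • (∑ i ∈ Finset.range N, β' i • e (σf 0 i))‖ := by
              rw [norm_smul, Real.norm_eq_abs, abs_of_pos hnr]
          _ = ‖(∑ l ∈ Finset.range n, (∑ i ∈ Finset.range N, β i • e (σf l i))) - Z‖ := by
              rw [h1]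
          _ ≤ ‖∑ l ∈ Finset.range n, (∑ i ∈ Finset.range N, β i • e (σf l i))‖ + ‖Z‖ :=
              norm_sub_le _ _
          _ ≤ (n:ℝ) * ‖∑ j ∈ Finset.range (m+1), c j • x j‖ + CΦ * ‖uvec e n‖ :=
              add_le_add hZsumnorm hZnorm
      have hunr : CΦ * ‖uvec e n‖ ≤ η * n := by
        calc CΦ * ‖uvec e n‖ ≤ CΦ * (η / (CΦ + 1) * n) :=
              mul_le_mul_of_nonneg_left hun hCΦ0
          _ = (CΦ / (CΦ + 1)) * η * n := by ring
          _ ≤ 1 * η * n := by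
              apply mul_le_mul_of_nonneg_right _ (le_of_lt hnr)
              apply mul_le_mul_of_nonneg_right _ (le_of_lt hη)
              rw [div_le_one (by positivity)]
              linarith
          _ = η * n := by ring
      nlinarith [hfinal, hunr]
    have hp1 : ∀ j, 1 ≤ j → 1 ≤ p j := by
      intro j hj
      have := hqq 0 j hj
      omega
    -- suppression: zeroing out any set of blocks (each with p j ≥ 1) does not increase norm
    have hsup : ∀ (T : Finset ℕ), (∀ j ∈ T, 1 ≤ p j) → ∀ m (c : ℕ → ℝ),
        ‖∑ j ∈ Finset.range (m+1), (if j ∈ T then 0 else c j) • x j‖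
          ≤ ‖∑ j ∈ Finset.range (m+1), c j • x j‖ := by
      intro T
      induction T using Finset.induction_on with
      | empty => intro _ m c; simp
      | @insert j0 T hj0T ih =>
          intro hT m c
          have hTsub : ∀ j ∈ T, 1 ≤ p j := fun j hj => hT j (Finset.mem_insert_of_mem hj)
          by_cases hj0m : j0 < m+1
          · have heq : ∀ j, (if j ∈ insert j0 T then 0 else c j)
                = Function.update (fun j => if j ∈ T then 0 else c j) j0 0 j := by
              intro j
              by_cases hjj0 : j = j0
              · subst hjj0
                rw [Function.update_self, if_pos (Finset.mem_insert_self _ _)]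
              · rw [Function.update_of_ne hjj0]
                by_cases hjT : j ∈ T
                · rw [if_pos (Finset.mem_insert_of_mem hjT), if_pos hjT]
                · rw [if_neg (by simp [hjj0, hjT]), if_neg hjT]
            calc ‖∑ j ∈ Finset.range (m+1), (if j ∈ insert j0 T then 0 else c j) • x j‖
                = ‖∑ j ∈ Finset.range (m+1),
                    Function.update (fun j => if j ∈ T then 0 else c j) j0 0 j • x j‖ := by
                  rw [Finset.sum_congr rfl (fun j _ => by rw [heq j])]
              _ ≤ ‖∑ j ∈ Finset.range (m+1), (if j ∈ T then 0 else c j) • x j‖ :=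
                  hdel m _ j0 hj0m (hT j0 (Finset.mem_insert_self _ _))
              _ ≤ ‖∑ j ∈ Finset.range (m+1), c j • x j‖ := ih hTsub m c
          · have heq : ∀ j, j ∈ Finset.range (m+1) → (if j ∈ insert j0 T then 0 else c j)
                = (if j ∈ T then 0 else c j) := by
              intro j hj
              have hne : j ≠ j0 := by
                intro h; subst h; exact hj0m (Finset.mem_range.mp hj)
              simp [Finset.mem_insert, hne]
            rw [Finset.sum_congr rfl (fun j hj => by rw [heq j hj])]
            exact ih hTsub m c
    -- projection onto block 0 via bimonotonicity
    have hblock0 : ∀ m (c : ℕ → ℝ),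
        ‖c 0 • x 0‖ ≤ ‖∑ j ∈ Finset.range (m+1), c j • x j‖ := by
      intro m c
      set c0v : ℕ → ℝ := fun j => if j = 0 then c 0 else 0 with hc0v
      have hc0val : ∀ j, c0v j = if j = 0 then c 0 else 0 := fun _ => rfl
      have h1 : c 0 • x 0 = ∑ j ∈ Finset.range (m+1), c0v j • x j := by
        symm
        rw [Finset.sum_eq_single_of_mem 0 (Finset.mem_range.mpr (by omega))
          (fun j _ hj => by rw [hc0val j, if_neg hj, zero_smul])]
        rw [hc0val 0, if_pos rfl]
      have hz : ∀ i, q 0 < i → Bf (m+1) c0v i = 0 := by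
        intro i hi
        show (∑ j ∈ Finset.range (m+1), if p j ≤ i ∧ i ≤ q j then c0v j * a j i else 0) = 0
        apply Finset.sum_eq_zero
        intro j _
        by_cases hcond : p j ≤ i ∧ i ≤ q j
        · rw [if_pos hcond]
          have hj0 : j ≠ 0 := by
            intro h; subst h; omega
          rw [hc0val j, if_neg hj0, zero_mul]
        · rw [if_neg hcond]
      have hagree : ∀ i, i ≤ q 0 + 1 → Bf (m+1) c i = Bf (m+1) c0v i := by
        intro i hi
        by_cases hblk : ∃ j, j < m+1 ∧ (p j ≤ i ∧ i ≤ q j)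
        · obtain ⟨j, hjm, hij⟩ := hblk
          have hj0 : j = 0 := by
            by_contra hne
            have := hqq 0 j (by omega)
            omega
          subst hj0
          rw [hBval _ c _ 0 hjm hij, hBval _ c0v _ 0 hjm hij, hc0val 0, if_pos rfl]
        · have hblk' : ∀ j, j < m+1 → ¬(p j ≤ i ∧ i ≤ q j) :=
            fun j h1' hcon => hblk ⟨j, h1', hcon⟩
          rw [hBzero _ c _ hblk', hBzero _ c0v _ hblk']
      have h4 : ∑ i ∈ (Finset.range (q m + 1)).filter (fun i => 0 ≤ i ∧ i ≤ q 0),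
          (Bf (m+1) c i - Bf (m+1) c (i+1)) • e i = c 0 • x 0 := by
        rw [h1, hwE m c0v]
        rw [show ∑ i ∈ (Finset.range (q m + 1)).filter (fun i => 0 ≤ i ∧ i ≤ q 0),
            (Bf (m+1) c i - Bf (m+1) c (i+1)) • e i
          = ∑ i ∈ (Finset.range (q m + 1)).filter (fun i => 0 ≤ i ∧ i ≤ q 0),
            (Bf (m+1) c0v i - Bf (m+1) c0v (i+1)) • e i from
          Finset.sum_congr rfl (fun i hi => by
            have hile : i ≤ q 0 := (Finset.mem_filter.mp hi).2.2
            rw [hagree i (by omega), hagree (i+1) (by omega)])]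
        apply Finset.sum_subset (Finset.filter_subset _ _)
        intro i hi hni
        have hgt : q 0 < i := by
          rw [Finset.mem_filter] at hni
          push_neg at hni
          have := hni hi
          omega
        rw [hz i hgt, hz (i+1) (by omega), sub_zero, zero_smul]
      calc ‖c 0 • x 0‖
          = ‖∑ i ∈ (Finset.range (q m + 1)).filter (fun i => 0 ≤ i ∧ i ≤ q 0),
              (Bf (m+1) c i - Bf (m+1) c (i+1)) • e i‖ := by rw [h4]
        _ ≤ ‖∑ i ∈ Finset.range (q m + 1), (Bf (m+1) c i - Bf (m+1) c (i+1)) • e i‖ :=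
            hbi (q m + 1) 0 (q 0) _
        _ = ‖∑ j ∈ Finset.range (m+1), c j • x j‖ := by rw [← hwE m c]
    -- final assembly for case A
    refine ⟨5, by norm_num, ?_⟩
    intro k c ε hε
    rcases k with _ | m
    · simp
    set T : Finset ℕ := (Finset.range (m+1)).filter (fun j => ε j ≠ 1) with hT
    set cA : ℕ → ℝ := fun j => if j ∈ T then 0 else c j with hcA
    have hcAval : ∀ j, cA j = if j ∈ T then 0 else c j := fun _ => rfl
    have hwid : ∀ j, j ∈ Finset.range (m+1) → (ε j * c j) • x j = (2 * cA j - c j) • x j := by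
      intro j hj
      congr 1
      rcases hε j with h | h
      · have hjT : j ∉ T := by
          rw [hT, Finset.mem_filter]
          push_neg
          intro _
          simpa using h
        rw [hcAval j, if_neg hjT, h]; ring
      · have hjT : j ∈ T := by
          rw [hT, Finset.mem_filter]
          exact ⟨hj, by rw [h]; norm_num⟩
        rw [hcAval j, if_pos hjT, h]; ring
    have hsplit2 : ∑ j ∈ Finset.range (m+1), (ε j * c j) • x j
        = (2:ℝ) • (∑ j ∈ Finset.range (m+1), cA j • x j)
          - ∑ j ∈ Finset.range (m+1), c j • x j := by
      rw [Finset.sum_congr rfl hwid, Finset.smul_sum, ← Finset.sum_sub_distrib]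
      apply Finset.sum_congr rfl
      intro j _
      rw [sub_smul, mul_smul]
    have hbound : ‖∑ j ∈ Finset.range (m+1), cA j • x j‖
        ≤ 2 * ‖∑ j ∈ Finset.range (m+1), c j • x j‖ := by
      by_cases hc0 : 0 ∈ T ∧ p 0 = 0
      · set T' := T.erase 0 with hT'
        have hT'p : ∀ j ∈ T', 1 ≤ p j := by
          intro j hj
          have hj0 : j ≠ 0 := Finset.ne_of_mem_erase hj
          exact hp1 j (by omega)
        have h5 := hsup T' hT'p m c
        have hterm : ∀ j, j ∈ Finset.range (m+1) → cA j • x j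
            = (if j ∈ T' then 0 else c j) • x j - (if j = 0 then c 0 else 0) • x j := by
          intro j _
          by_cases hj0 : j = 0
          · subst hj0
            have h0T' : (0:ℕ) ∉ T' := Finset.notMem_erase _ _
            rw [hcAval 0, if_pos hc0.1, if_neg h0T', if_pos rfl, zero_smul, sub_self]
          · have hmem : j ∈ T' ↔ j ∈ T := by
              rw [hT', Finset.mem_erase]
              exact ⟨fun h => h.2, fun h => ⟨hj0, h⟩⟩
            rw [hcAval j, if_neg hj0, zero_smul, sub_zero]
            by_cases hjT : j ∈ T
            · rw [if_pos hjT, if_pos (hmem.mpr hjT)]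
            · rw [if_neg hjT, if_neg (fun h => hjT (hmem.mp h))]
        have hdiffeq : ∑ j ∈ Finset.range (m+1), cA j • x j
            = ∑ j ∈ Finset.range (m+1), (if j ∈ T' then 0 else c j) • x j - c 0 • x 0 := by
          rw [Finset.sum_congr rfl hterm, Finset.sum_sub_distrib]
          congr 1
          rw [Finset.sum_eq_single_of_mem 0 (Finset.mem_range.mpr (by omega))
            (fun j _ hj => by rw [if_neg hj, zero_smul])]
          rw [if_pos rfl]
        have hb0 : ‖c 0 • x 0‖ ≤ ‖∑ j ∈ Finset.range (m+1), c j • x j‖ := by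
          have h6 := hblock0 m (fun j => if j ∈ T' then 0 else c j)
          have h0T' : (0:ℕ) ∉ T' := Finset.notMem_erase _ _
          rw [if_neg h0T'] at h6
          exact le_trans h6 h5
        rw [hdiffeq]
        calc ‖∑ j ∈ Finset.range (m+1), (if j ∈ T' then 0 else c j) • x j - c 0 • x 0‖
            ≤ ‖∑ j ∈ Finset.range (m+1), (if j ∈ T' then 0 else c j) • x j‖ + ‖c 0 • x 0‖ :=
              norm_sub_le _ _
          _ ≤ 2 * ‖∑ j ∈ Finset.range (m+1), c j • x j‖ := by linarith
      · have hTp : ∀ j ∈ T, 1 ≤ p j := by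
          intro j hj
          by_cases hj0 : j = 0
          · subst hj0
            have : p 0 ≠ 0 := fun h => hc0 ⟨hj, h⟩
            omega
          · exact hp1 j (by omega)
        have := hsup T hTp m c
        have hnn : (0:ℝ) ≤ ‖∑ j ∈ Finset.range (m+1), c j • x j‖ := norm_nonneg _
        linarith
    rw [hsplit2]
    calc ‖(2:ℝ) • (∑ j ∈ Finset.range (m+1), cA j • x j)
            - ∑ j ∈ Finset.range (m+1), c j • x j‖
        ≤ ‖(2:ℝ) • (∑ j ∈ Finset.range (m+1), cA j • x j)‖
          + ‖∑ j ∈ Finset.range (m+1), c j • x j‖ := norm_sub_le _ _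
      _ = 2 * ‖∑ j ∈ Finset.range (m+1), cA j • x j‖
          + ‖∑ j ∈ Finset.range (m+1), c j • x j‖ := by
          rw [norm_smul]
          norm_num
      _ ≤ 5 * ‖∑ j ∈ Finset.range (m+1), c j • x j‖ := by linarith

lemma exists_summing (e : ℕ → X) (hnorm : ∀ i, ‖e i‖ = 1)
    (hspread : ∀ (k : ℕ) (a : ℕ → ℝ) (n : ℕ → ℕ), StrictMono n →
      ‖∑ i ∈ Finset.range k, a i • e (n i)‖ = ‖∑ i ∈ Finset.range k, a i • e i‖)
    (hnwn : ¬ ∀ f : X →L[ℝ] ℝ, Tendsto (fun n => f (e n)) atTop (𝓝 (0 : ℝ))) :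
    ∃ K : ℝ, 0 < K ∧ ∀ (k : ℕ) (a : ℕ → ℝ),
      |∑ i ∈ Finset.range k, a i| ≤ K * ‖∑ i ∈ Finset.range k, a i • e i‖ := by
  push_neg at hnwn
  obtain ⟨f, hf⟩ := hnwn
  have : ∃ ε > 0, ∃ φ : ℕ → ℕ, StrictMono φ ∧ ∀ m, ε ≤ |f (e (φ m))| := by
    rw [Metric.tendsto_atTop] at hf
    push_neg at hf
    obtain ⟨ε, hε, hfreq⟩ := hf
    have hfr : ∃ᶠ n in atTop, ε ≤ |f (e n)| := by
      rw [Filter.frequently_atTop]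
      intro N
      obtain ⟨n, hn, h⟩ := hfreq N
      exact ⟨n, hn, by simpa [Real.dist_eq] using h⟩
    obtain ⟨φ, hφ, h⟩ := Filter.extraction_of_frequently_atTop hfr
    exact ⟨ε, hε, φ, hφ, h⟩
  obtain ⟨ε, hε, φ, hφ, hφε⟩ := this
  have habs : ∀ m, |f (e (φ m))| ≤ ‖f‖ := by
    intro m
    have h := f.le_opNorm (e (φ m))
    rw [hnorm] at h
    simpa using h
  have hbdd : ∀ m, f (e (φ m)) ∈ Set.Icc (-‖f‖) ‖f‖ := fun m => abs_le.mp (habs m)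
  obtain ⟨c, _, ψ, hψ, hlim⟩ :=
    tendsto_subseq_of_bounded (Metric.isBounded_Icc (-‖f‖) ‖f‖) hbdd
  have hc : ε ≤ |c| := by
    have : Tendsto (fun m => |f (e (φ (ψ m)))|) atTop (𝓝 |c|) :=
      (continuous_abs.tendsto c).comp hlim
    exact le_of_tendsto_of_tendsto' tendsto_const_nhds this (fun m => hφε (ψ m))
  have hcpos : 0 < |c| := lt_of_lt_of_le hε hc
  set θ : ℕ → ℕ := φ ∘ ψ with hθ
  have hθmono : StrictMono θ := hφ.comp hψ
  refine ⟨‖f‖ / |c|, div_pos (lt_of_lt_of_le hε (le_trans (hφε 0) (habs 0))) hcpos, ?_⟩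
  intro k a
  -- show |c| * |∑ a| ≤ ‖f‖ * ‖∑ a e‖ by a limit argument
  have key : |c| * |∑ i ∈ Finset.range k, a i| ≤ ‖f‖ * ‖∑ i ∈ Finset.range k, a i • e i‖ := by
    have hlim2 : Tendsto (fun m => |∑ i ∈ Finset.range k, a i * f (e (θ (m + i)))|)
        atTop (𝓝 (|c| * |∑ i ∈ Finset.range k, a i|)) := by
      have h1 : Tendsto (fun m => ∑ i ∈ Finset.range k, a i * f (e (θ (m + i))))
          atTop (𝓝 (∑ i ∈ Finset.range k, a i * c)) := by
        apply tendsto_finset_sum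
        intro i _
        apply Tendsto.const_mul
        have : Tendsto (fun m => f (e (θ m))) atTop (𝓝 c) := hlim
        exact this.comp (tendsto_atTop_mono (fun m => Nat.le_add_right m i) tendsto_id)
      have := (continuous_abs.tendsto _).comp h1
      simp only [Function.comp_def] at this ⊢
      convert this using 2
      rw [← Finset.sum_mul, abs_mul, mul_comm]
    apply le_of_tendsto_of_tendsto' hlim2 tendsto_const_nhds
    intro m
    have hmono : StrictMono (fun i => θ (m + i)) :=
      fun i j hij => hθmono (by omega)
    have hsp := hspread k a (fun i => θ (m + i)) hmono
    calc |∑ i ∈ Finset.range k, a i * f (e (θ (m + i)))|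
        = |f (∑ i ∈ Finset.range k, a i • e (θ (m + i)))| := by
          rw [map_sum]; congr 1; apply Finset.sum_congr rfl; intro i _; rw [map_smul]; rfl
      _ ≤ ‖f‖ * ‖∑ i ∈ Finset.range k, a i • e (θ (m + i))‖ := f.le_opNorm _
      _ = ‖f‖ * ‖∑ i ∈ Finset.range k, a i • e i‖ := by rw [hsp]
  rw [div_mul_eq_mul_div, le_div_iff₀ hcpos]
  calc |∑ i ∈ Finset.range k, a i| * |c| = |c| * |∑ i ∈ Finset.range k, a i| := mul_comm _ _
    _ ≤ ‖f‖ * ‖∑ i ∈ Finset.range k, a i • e i‖ := key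

lemma coeff_bound (e : ℕ → X) (hnorm : ∀ i, ‖e i‖ = 1)
    (hbi : ∀ (N m n : ℕ) (a : ℕ → ℝ),
      ‖∑ i ∈ (Finset.range N).filter (fun i => m ≤ i ∧ i ≤ n), a i • e i‖ ≤
        ‖∑ i ∈ Finset.range N, a i • e i‖)
    (N m : ℕ) (a : ℕ → ℝ) (hm : m < N) :
    |a m| ≤ ‖∑ i ∈ Finset.range N, a i • e i‖ := by
  have h := hbi N m m a
  have hf : (Finset.range N).filter (fun i => m ≤ i ∧ i ≤ m) = {m} := by
    ext i; simp; omega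
  rw [hf] at h
  simpa [norm_smul, hnorm m] using h

/-- uniqueness of difference-basis expansions of 0 -/

lemma d_unique (e d : ℕ → X) (hnorm : ∀ i, ‖e i‖ = 1)
    (hbi : ∀ (N m n : ℕ) (a : ℕ → ℝ),
      ‖∑ i ∈ (Finset.range N).filter (fun i => m ≤ i ∧ i ≤ n), a i • e i‖ ≤
        ‖∑ i ∈ Finset.range N, a i • e i‖)
    (hd0 : d 0 = e 0) (hd : ∀ i, d (i + 1) = e (i + 1) - e i)
    (c : ℕ → ℝ)
    (hc : Tendsto (fun n => ∑ i ∈ Finset.range n, c i • d i) atTop (𝓝 (0 : X))) :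
    ∀ m, c m = 0 := by
  set Q : ℕ → X := fun n => ∑ i ∈ Finset.range n, c i • d i with hQ
  have hQnorm : Tendsto (fun n => ‖Q (n+1)‖) atTop (𝓝 0) := by
    have h1 : Tendsto (fun n => Q (n+1)) atTop (𝓝 (0:X)) :=
      hc.comp (tendsto_add_atTop_nat 1)
    simpa [Function.comp_def] using (continuous_norm.tendsto (0:X)).comp h1
  set gco : ℕ → ℕ → ℝ := fun n i => if i = n then c n else c i - c (i+1) with hgco
  have hQform : ∀ n, Q (n+1) = ∑ i ∈ Finset.range (n+1), gco n i • e i := by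
    intro n
    show ∑ i ∈ Finset.range (n+1), c i • d i = _
    rw [sum_d_eq e d hd0 hd c n]
    rw [Finset.sum_range_succ (f := fun i => (c i - c (i+1)) • e i) n,
      Finset.sum_range_succ (f := fun i => gco n i • e i) n]
    have h1 : gco n n = c n := by simp [hgco]
    have h2 : ∀ i, i < n → gco n i = c i - c (i+1) := by
      intro i hi; simp only [hgco]; rw [if_neg (by omega)]
    rw [h1, Finset.sum_congr rfl (fun i hi =>
      show gco n i • e i = (c i - c (i+1)) • e i by rw [h2 i (Finset.mem_range.mp hi)])]
    rw [sub_smul]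
    abel
  have hcoef : ∀ m n, m < n + 1 → |gco n m| ≤ ‖Q (n+1)‖ := by
    intro m n hmn
    rw [hQform n]
    exact coeff_bound e hnorm hbi (n+1) m (gco n) hmn
  have hstep : ∀ m, c m = c (m+1) := by
    intro m
    have hle : ∀ n, n ≥ m + 1 → |c m - c (m+1)| ≤ ‖Q (n+1)‖ := by
      intro n hn
      have h := hcoef m n (by omega)
      rw [show gco n m = c m - c (m+1) by simp only [hgco]; rw [if_neg (by omega)]] at h
      exact h
    have : |c m - c (m+1)| ≤ 0 := by
      apply ge_of_tendsto hQnorm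
      filter_upwards [eventually_ge_atTop (m+1)] with n hn using hle n hn
    have h0 : |c m - c (m+1)| = 0 := le_antisymm this (abs_nonneg _)
    have := abs_eq_zero.mp h0
    linarith
  have hconst : ∀ m, c m = c 0 := by
    intro m
    induction m with
    | zero => rfl
    | succ m ih => rw [← hstep m]; exact ih
  have hc0 : c 0 = 0 := by
    have hle : ∀ n, |c 0| ≤ ‖Q (n+1)‖ := by
      intro n
      have h := hcoef n n (by omega)
      rw [show gco n n = c n by simp [hgco]] at h
      rwa [hconst n] at h
    have : |c 0| ≤ 0 := ge_of_tendsto hQnorm (Eventually.of_forall hle)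
    have h0 : |c 0| = 0 := le_antisymm this (abs_nonneg _)
    exact abs_eq_zero.mp h0
  intro m; rw [hconst m, hc0]

lemma d_basis (e d : ℕ → X) (hnorm : ∀ i, ‖e i‖ = 1)
    (hbasis : ∀ x : X, ∃! a : ℕ → ℝ,
      Tendsto (fun n => ∑ i ∈ Finset.range n, a i • e i) atTop (𝓝 x))
    (hbi : ∀ (N m n : ℕ) (a : ℕ → ℝ),
      ‖∑ i ∈ (Finset.range N).filter (fun i => m ≤ i ∧ i ≤ n), a i • e i‖ ≤
        ‖∑ i ∈ Finset.range N, a i • e i‖)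
    (K : ℝ) (hK : 0 < K)
    (hsum : ∀ (k : ℕ) (a : ℕ → ℝ),
      |∑ i ∈ Finset.range k, a i| ≤ K * ‖∑ i ∈ Finset.range k, a i • e i‖)
    (hspread : ∀ (k : ℕ) (a : ℕ → ℝ) (n : ℕ → ℕ), StrictMono n →
      ‖∑ i ∈ Finset.range k, a i • e (n i)‖ = ‖∑ i ∈ Finset.range k, a i • e i‖)
    (hd0 : d 0 = e 0) (hd : ∀ i, d (i + 1) = e (i + 1) - e i) :
    ∀ x : X, ∃! b : ℕ → ℝ,
      Tendsto (fun n => ∑ i ∈ Finset.range n, b i • d i) atTop (𝓝 x) := by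
  intro x
  obtain ⟨a, ha, -⟩ := hbasis x
  set S : ℕ → X := fun n => ∑ i ∈ Finset.range n, a i • e i with hS
  set A : ℕ → ℝ := fun n => ∑ i ∈ Finset.range n, a i with hA
  have hAS : ∀ m n, m ≤ n → |A n - A m| ≤ K * ‖S n - S m‖ := by
    intro m n hmn
    have h1 : A n - A m = ∑ i ∈ Finset.range (n - m), a (m + i) := by
      rw [hA]
      rw [← Finset.sum_Ico_eq_sum_range]
      simp only []
      rw [Finset.sum_Ico_eq_sub _ hmn]
    have h2 : S n - S m = ∑ i ∈ Finset.range (n - m), a (m + i) • e (m + i) := by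
      rw [hS]
      rw [← Finset.sum_Ico_eq_sum_range (f := fun i => a i • e i)]
      simp only []
      rw [Finset.sum_Ico_eq_sub _ hmn]
    rw [h1, h2]
    calc |∑ i ∈ Finset.range (n-m), a (m+i)|
        ≤ K * ‖∑ i ∈ Finset.range (n-m), a (m+i) • e i‖ := hsum _ _
      _ = K * ‖∑ i ∈ Finset.range (n-m), a (m+i) • e (m+i)‖ := by
          rw [hspread (n-m) (fun i => a (m+i)) (fun i => m+i) (fun i j hij => by show m+i < m+j; omega)]
  have hScauchy : CauchySeq S := ha.cauchySeq
  have hAcauchy : CauchySeq A := by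
    rw [Metric.cauchySeq_iff] at hScauchy ⊢
    intro ε hε
    obtain ⟨N, hN⟩ := hScauchy (ε / K) (div_pos hε hK)
    refine ⟨N, fun m hm n hn => ?_⟩
    rcases le_total n m with h | h
    · have := hAS n m h
      rw [Real.dist_eq]
      calc |A m - A n| ≤ K * ‖S m - S n‖ := hAS n m h
        _ < K * (ε / K) := by
            apply mul_lt_mul_of_pos_left _ hK
            have := hN m hm n hn
            rwa [dist_eq_norm] at this
        _ = ε := by field_simp
    · rw [Real.dist_eq, abs_sub_comm]
      calc |A n - A m| ≤ K * ‖S n - S m‖ := hAS m n h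
        _ < K * (ε / K) := by
            apply mul_lt_mul_of_pos_left _ hK
            have := hN n hn m hm
            rwa [dist_eq_norm] at this
        _ = ε := by field_simp
  obtain ⟨σl, hσl⟩ := cauchySeq_tendsto_of_complete hAcauchy
  set b : ℕ → ℝ := fun i => σl - A i with hb
  have hba : ∀ i, b i - b (i+1) = a i := by
    intro i
    rw [hb]
    simp only []
    rw [hA]
    simp only []
    rw [Finset.sum_range_succ]
    ring
  have hbtend : Tendsto b atTop (𝓝 0) := by
    rw [hb]
    have := tendsto_const_nhds (x := σl) (f := atTop (α := ℕ)) |>.sub hσl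
    simpa using this
  refine ⟨b, ?_, ?_⟩
  · -- existence
    have hform : ∀ n, ∑ i ∈ Finset.range (n+1), b i • d i = S (n+1) + b (n+1) • e n := by
      intro n
      rw [sum_d_eq e d hd0 hd b n, hS]
      congr 1
      apply Finset.sum_congr rfl
      intro i _
      rw [hba i]
    have h2 : Tendsto (fun n => ∑ i ∈ Finset.range (n+1), b i • d i) atTop (𝓝 x) := by
      simp only [hform]
      have hS1 : Tendsto (fun n => S (n+1)) atTop (𝓝 x) := ha.comp (tendsto_add_atTop_nat 1)
      have hb1 : Tendsto (fun n => b (n+1) • e n) atTop (𝓝 (0:X)) := by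
        rw [tendsto_zero_iff_norm_tendsto_zero]
        have : ∀ n, ‖b (n+1) • e n‖ = |b (n+1)| := by
          intro n; rw [norm_smul, hnorm]; simp
        simp only [this]
        have := (continuous_abs.tendsto (0:ℝ)).comp (hbtend.comp (tendsto_add_atTop_nat 1))
        simpa [Function.comp_def] using this
      simpa using hS1.add hb1
    have h3 : Tendsto (fun n => ∑ i ∈ Finset.range n, b i • d i) atTop (𝓝 x) := by
      rw [← tendsto_add_atTop_iff_nat 1]; exact h2
    exact h3
  · -- uniqueness
    intro b' hb'
    have hdiff : Tendsto (fun n => ∑ i ∈ Finset.range n, (b' i - b i) • d i) atTop (𝓝 (0:X)) := by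
      have h3 : Tendsto (fun n => ∑ i ∈ Finset.range n, b i • d i) atTop (𝓝 x) := by
        have hform : ∀ n, ∑ i ∈ Finset.range (n+1), b i • d i = S (n+1) + b (n+1) • e n := by
          intro n
          rw [sum_d_eq e d hd0 hd b n, hS]
          congr 1
          apply Finset.sum_congr rfl
          intro i _
          rw [hba i]
        rw [← tendsto_add_atTop_iff_nat 1]
        simp only [hform]
        have hS1 : Tendsto (fun n => S (n+1)) atTop (𝓝 x) := ha.comp (tendsto_add_atTop_nat 1)
        have hb1 : Tendsto (fun n => b (n+1) • e n) atTop (𝓝 (0:X)) := by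
          rw [tendsto_zero_iff_norm_tendsto_zero]
          have : ∀ n, ‖b (n+1) • e n‖ = |b (n+1)| := by
            intro n; rw [norm_smul, hnorm]; simp
          simp only [this]
          have := (continuous_abs.tendsto (0:ℝ)).comp (hbtend.comp (tendsto_add_atTop_nat 1))
          simpa [Function.comp_def] using this
        simpa using hS1.add hb1
      have := hb'.sub h3
      simp only [sub_self] at this
      convert this using 2 with n
      rw [← Finset.sum_sub_distrib]
      apply Finset.sum_congr rfl
      intro i _
      rw [sub_smul]
    have := d_unique e d hnorm hbi hd0 hd (fun i => b' i - b i) hdiff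
    funext m
    have h : b' m - b m = 0 := this m
    linarith

end AuxDiffBasis

theorem difference_basis_skipped_unconditional
    {X : Type} [NormedAddCommGroup X] [NormedSpace ℝ X] [CompleteSpace X]
    (e : ℕ → X) (hnorm : ∀ i, ‖e i‖ = 1) (hbasis : IsSchauderBasis e)
    (hspread : IsOneSpreading e) (hbi : IsBimonotone e) (hnwn : ¬ WeaklyNull e)
    (d : ℕ → X) (hd0 : d 0 = e 0) (hd : ∀ i, d (i + 1) = e (i + 1) - e i) :
    IsSchauderBasis d ∧
      ∀ x : ℕ → X, IsSkippedBlockBasis d x → IsUnconditionalSeq x := by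
  obtain ⟨K, hK, hsum⟩ := exists_summing e hnorm hspread hnwn
  constructor
  · exact d_basis e d hnorm hbasis hbi K hK hsum hspread hd0 hd
  · intro x hx
    obtain ⟨a, p, q, hxe, hxne, hpq, hqp⟩ := hx
    exact part2 e d hnorm hspread hbi hd0 hd x a p q hxe hpq hqp
end

section
/- Suppose a Banach space X has a skipped unconditional Schauder basis, i.e. a Schauder basis (e_i) such that every skipped block basis of (e_i) is unconditional. Let Y be a closed subspace of X whose dual Y* is not separable. Then ℓ1 embeds into Y. -/
open Filter Finset Topology NormedSpace
open scoped NNReal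

/-- `Z` embeds (isomorphically) into `W`. -/
def Embeds (Z W : Type) [NormedAddCommGroup Z] [NormedSpace ℝ Z]
    [NormedAddCommGroup W] [NormedSpace ℝ W] : Prop :=
  ∃ (T : Z →ₗ[ℝ] W) (c C : ℝ), 0 < c ∧ 0 < C ∧
    ∀ z : Z, c * ‖z‖ ≤ ‖T z‖ ∧ ‖T z‖ ≤ C * ‖z‖

/-- The space `ℓ¹`. -/
noncomputable abbrev ellOne : Type := lp (fun _ : ℕ => ℝ) 1

section Aux

variable {X : Type} [NormedAddCommGroup X] [NormedSpace ℝ X]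

lemma pad_sum_s9 (e : ℕ → X) (c : ℕ → ℝ) (p q Q : ℕ) (h : q ≤ Q) :
    ∑ i ∈ Finset.Icc p Q, (if i ≤ q then c i else 0) • e i
      = ∑ i ∈ Finset.Icc p q, c i • e i := by
  rw [← Finset.sum_subset (Finset.Icc_subset_Icc_right h)
    (fun i hi hni => by
      have hq : ¬ i ≤ q := by
        intro hq
        exact hni (Finset.mem_Icc.mpr ⟨(Finset.mem_Icc.mp hi).1, hq⟩)
      rw [if_neg hq, zero_smul])]
  exact Finset.sum_congr rfl fun i hi => by rw [if_pos (Finset.mem_Icc.mp hi).2]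

/-- The subspace of vectors which are finite linear combinations of `e i`, `i > m`. -/
noncomputable def blockSub (e : ℕ → X) (m : ℕ) : Submodule ℝ X where
  carrier := {x | ∃ c : ℕ → ℝ, ∃ q : ℕ, m + 1 ≤ q ∧
    x = ∑ i ∈ Finset.Icc (m + 1) q, c i • e i}
  zero_mem' := ⟨0, m + 1, le_refl _, by simp⟩
  add_mem' := by
    rintro x y ⟨c, q, hq, rfl⟩ ⟨c', q', hq', rfl⟩
    refine ⟨fun i => (if i ≤ q then c i else 0) + (if i ≤ q' then c' i else 0),
      max q q', le_trans hq (le_max_left _ _), ?_⟩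
    rw [← pad_sum_s9 e c (m+1) q (max q q') (le_max_left _ _),
        ← pad_sum_s9 e c' (m+1) q' (max q q') (le_max_right _ _),
        ← Finset.sum_add_distrib]
    exact Finset.sum_congr rfl fun i _ => (add_smul _ _ _).symm
  smul_mem' := by
    rintro r x ⟨c, q, hq, rfl⟩
    refine ⟨fun i => r * c i, q, hq, ?_⟩
    rw [Finset.smul_sum]
    exact Finset.sum_congr rfl fun i _ => (mul_smul _ _ _).symm

lemma mem_blockSub {e : ℕ → X} {m : ℕ} {x : X} :
    x ∈ blockSub e m ↔ ∃ c : ℕ → ℝ, ∃ q : ℕ, m + 1 ≤ q ∧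
      x = ∑ i ∈ Finset.Icc (m + 1) q, c i • e i := Iff.rfl

/-- The annihilator of a subspace inside the topological dual. -/
noncomputable def annihCLM {E : Type} [NormedAddCommGroup E] [NormedSpace ℝ E] (V : Submodule ℝ E) :
    Submodule ℝ (StrongDual ℝ E) where
  carrier := {g | ∀ y ∈ V, g y = 0}
  zero_mem' := fun y _ => rfl
  add_mem' := by
    intro g h hg hh y hy
    simp [ContinuousLinearMap.add_apply, hg y hy, hh y hy]
  smul_mem' := by
    intro r g hg y hy
    simp [ContinuousLinearMap.smul_apply, hg y hy]

lemma findim_annihCLM {E : Type} [NormedAddCommGroup E] [NormedSpace ℝ E] (V : Submodule ℝ E)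
    (hV : FiniteDimensional ℝ (E ⧸ V)) : FiniteDimensional ℝ ↥(annihCLM V) := by
  let ψ : ↥(annihCLM V) →ₗ[ℝ] Module.Dual ℝ (E ⧸ V) :=
    { toFun := fun g => V.liftQ ((g : StrongDual ℝ E) : E →ₗ[ℝ] ℝ)
        (fun y hy => g.2 y hy)
      map_add' := by
        intro g h
        refine Submodule.linearMap_qext _ ?_
        ext x
        rfl
      map_smul' := by
        intro r g
        refine Submodule.linearMap_qext _ ?_
        ext x
        rfl }
  have hinj : Function.Injective ψ := by
    intro g h hgh
    ext x
    have := congrArg (fun (φ : Module.Dual ℝ (E ⧸ V)) => φ (V.mkQ x)) hgh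
    exact this
  exact FiniteDimensional.of_injective ψ hinj

end Aux
section Aux3
variable {X : Type} [NormedAddCommGroup X] [NormedSpace ℝ X]

lemma sum_split (e : ℕ → X) (a : ℕ → ℝ) (m t : ℕ) :
    ∑ i ∈ Finset.range (m + 1 + t), a i • e i
      = (∑ i ∈ Finset.range (m + 1), a i • e i)
        + ∑ i ∈ Finset.Icc (m + 1) (m + t), a i • e i := by
  rw [Finset.sum_range_add]
  congr 1
  rw [← Finset.Ico_add_one_right_eq_Icc, Finset.sum_Ico_eq_sum_range]
  have h : m + t + 1 - (m + 1) = t := by omega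
  rw [h]

lemma top_eq_span_sup_blockSub (e : ℕ → X)
    (hb : ∀ x : X, ∃ a : ℕ → ℝ,
      Filter.Tendsto (fun n => ∑ i ∈ Finset.range n, a i • e i) Filter.atTop (nhds x))
    (m : ℕ) :
    Submodule.span ℝ (e '' Set.Iic m) ⊔ (blockSub e m).topologicalClosure = ⊤ := by
  rw [eq_top_iff]
  intro x _
  obtain ⟨a, ha⟩ := hb x
  set u : X := ∑ i ∈ Finset.range (m + 1), a i • e i with hu_def
  have hu : u ∈ Submodule.span ℝ (e '' Set.Iic m) := by
    refine Submodule.sum_mem _ fun i hi => Submodule.smul_mem _ _ ?_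
    exact Submodule.subset_span ⟨i, by
      simpa using Nat.lt_succ_iff.mp (Finset.mem_range.mp hi), rfl⟩
  have hxu : x - u ∈ (blockSub e m).topologicalClosure := by
    rw [← SetLike.mem_coe, Submodule.topologicalClosure_coe]
    refine mem_closure_of_tendsto (f := fun n => (∑ i ∈ Finset.range n, a i • e i) - u)
      (ha.sub_const u) ?_
    filter_upwards [Filter.eventually_ge_atTop (m + 2)] with n hn
    have hn' : n = m + 1 + (n - (m + 1)) := by omega
    rw [hn', sum_split e a m (n - (m + 1))]
    simp only [hu_def, add_sub_cancel_left]
    exact ⟨a, m + (n - (m + 1)), by omega, rfl⟩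
  have := Submodule.add_mem _ (Submodule.mem_sup_left hu) (Submodule.mem_sup_right hxu)
  simpa using this

lemma findim_quot_blockSub (e : ℕ → X)
    (hb : ∀ x : X, ∃ a : ℕ → ℝ,
      Filter.Tendsto (fun n => ∑ i ∈ Finset.range n, a i • e i) Filter.atTop (nhds x))
    (m : ℕ) :
    FiniteDimensional ℝ (X ⧸ (blockSub e m).topologicalClosure) := by
  set Cl := (blockSub e m).topologicalClosure
  set U := Submodule.span ℝ (e '' Set.Iic m) with hU
  haveI : FiniteDimensional ℝ ↥U :=
    FiniteDimensional.span_of_finite ℝ ((Set.finite_Iic m).image e)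
  have hmap : Submodule.map Cl.mkQ U = ⊤ := by
    have h1 : Submodule.map Cl.mkQ (U ⊔ Cl) = ⊤ := by
      rw [top_eq_span_sup_blockSub e hb m]
      rw [Submodule.map_top, Submodule.range_mkQ]
    have h2 : Submodule.map Cl.mkQ Cl = ⊥ := by
      rw [eq_bot_iff]
      rintro z ⟨y, hy, rfl⟩
      simpa [Submodule.mem_bot] using (Submodule.Quotient.mk_eq_zero Cl).mpr hy
    rw [Submodule.map_sup, h2, sup_bot_eq] at h1
    exact h1
  have hsurj : Function.Surjective (Cl.mkQ ∘ₗ U.subtype) := by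
    rw [← LinearMap.range_eq_top, LinearMap.range_comp, Submodule.range_subtype]
    exact hmap
  exact Module.Finite.of_surjective (Cl.mkQ ∘ₗ U.subtype) hsurj

end Aux3
section Aux4
variable {E : Type} [NormedAddCommGroup E] [NormedSpace ℝ E]

lemma exists_far_functional
    (W : ℕ → Submodule ℝ (StrongDual ℝ E)) (hW : ∀ m, FiniteDimensional ℝ ↥(W m))
    (h : ¬ TopologicalSpace.SeparableSpace (StrongDual ℝ E)) :
    ∃ (f : StrongDual ℝ E) (d : ℝ), 0 < d ∧ ∀ m, ∀ g ∈ W m, d ≤ ‖f - g‖ := by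
  set Z := closure (⋃ m, (W m : Set (StrongDual ℝ E))) with hZ
  have hZsep : TopologicalSpace.IsSeparable Z := by
    apply TopologicalSpace.IsSeparable.closure
    apply TopologicalSpace.IsSeparable.iUnion
    intro m
    haveI := hW m
    haveI : ProperSpace ↥(W m) := by exact FiniteDimensional.proper ℝ ↥(W m)
    haveI : SecondCountableTopology ↥(W m) := secondCountable_of_proper
    exact TopologicalSpace.IsSeparable.of_subtype _
  have hf : ∃ f, f ∉ Z := by
    by_contra hc
    push_neg at hc
    have huniv : TopologicalSpace.IsSeparable (Set.univ : Set (StrongDual ℝ E)) :=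
      hZsep.mono fun f _ => hc f
    exact h (TopologicalSpace.isSeparable_univ_iff.mp huniv)
  obtain ⟨f, hfZ⟩ := hf
  have hne : Z.Nonempty := ⟨0, subset_closure (Set.mem_iUnion.mpr ⟨0, (W 0).zero_mem⟩)⟩
  have hpos := (isClosed_closure.notMem_iff_infDist_pos hne).mp hfZ
  refine ⟨f, Metric.infDist f Z, hpos, fun m g hg => ?_⟩
  have hmem : g ∈ Z := subset_closure (Set.mem_iUnion.mpr ⟨m, hg⟩)
  calc Metric.infDist f Z ≤ dist f g := Metric.infDist_le_dist_of_mem hmem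
    _ = ‖f - g‖ := dist_eq_norm f g

lemma step_norm (V : Submodule ℝ E) (f : StrongDual ℝ E) (d : ℝ) (hd : 0 < d)
    (h : ∀ g ∈ annihCLM V, d ≤ ‖f - g‖) :
    ∃ y : E, ‖y‖ ≤ 1 ∧ y ∈ V ∧ d / 2 < f y := by
  set r : ↥V →L[ℝ] ℝ := f.comp V.subtypeL with hr_def
  have hrV : ∀ v : ↥V, r v = f (v : E) := fun v => rfl
  have hr : d ≤ ‖r‖ := by
    obtain ⟨h', hext, hnorm⟩ := exists_extension_norm_eq V r
    have hg : (f - h') ∈ annihCLM V := by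
      intro y hy
      have h1 : h' y = r ⟨y, hy⟩ := hext ⟨y, hy⟩
      have h2 : r ⟨y, hy⟩ = f y := hrV ⟨y, hy⟩
      simp [ContinuousLinearMap.sub_apply, h1, h2]
    calc d ≤ ‖f - (f - h')‖ := h (f - h') hg
      _ = ‖h'‖ := by rw [sub_sub_cancel]
      _ = ‖r‖ := hnorm
  have h2 : d / 2 < ‖r‖ := lt_of_lt_of_le (by linarith) hr
  obtain ⟨v, hv⟩ : ∃ v : ↥V, d / 2 * ‖v‖ < ‖r v‖ := by
    by_contra hc
    push_neg at hc
    exact absurd (ContinuousLinearMap.opNorm_le_bound r (by linarith) fun v => hc v)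
      (not_le.mpr h2)
  have hvne : (0 : ℝ) < ‖v‖ := by
    rcases eq_or_lt_of_le (norm_nonneg v) with h0 | h0
    · exfalso
      rw [← h0] at hv
      have : r v = 0 := by
        have : v = 0 := by
          have := norm_eq_zero.mp h0.symm
          exact this
        rw [this, map_zero]
      rw [this] at hv
      simp at hv
    · exact h0
  set s : ℝ := if 0 ≤ r v then 1 else -1 with hs_def
  have hsr : s * r v = ‖r v‖ := by
    rcases le_or_gt 0 (r v) with h0 | h0
    · rw [hs_def, if_pos h0, one_mul, Real.norm_eq_abs, abs_of_nonneg h0]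
    · rw [hs_def, if_neg (not_le.mpr h0), Real.norm_eq_abs, abs_of_neg h0]; ring
  refine ⟨(s / ‖v‖) • (v : E), ?_, V.smul_mem _ v.2, ?_⟩
  · rw [norm_smul, norm_div, Real.norm_eq_abs, Real.norm_eq_abs]
    have hsabs : |s| = 1 := by
      rcases le_or_gt 0 (r v) with h0 | h0
      · rw [hs_def, if_pos h0, abs_one]
      · rw [hs_def, if_neg (not_le.mpr h0), abs_neg, abs_one]
    rw [hsabs, abs_of_pos hvne, ← Submodule.coe_norm]
    rw [one_div, inv_mul_cancel₀ (ne_of_gt hvne)]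
  · rw [map_smul, smul_eq_mul, ← hrV v]
    have : s / ‖v‖ * r v = ‖r v‖ / ‖v‖ := by
      rw [div_mul_eq_mul_div, hsr]
    rw [this]
    rw [lt_div_iff₀ hvne]
    exact hv

end Aux4
section Aux5
variable {X : Type} [NormedAddCommGroup X] [NormedSpace ℝ X]

set_option synthInstance.maxHeartbeats 400000 in
lemma findim_W (e : ℕ → X)
    (hb : ∀ x : X, ∃ a : ℕ → ℝ,
      Filter.Tendsto (fun n => ∑ i ∈ Finset.range n, a i • e i) Filter.atTop (nhds x))
    (Y : Submodule ℝ X) (m : ℕ) :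
    FiniteDimensional ℝ
      ↥(annihCLM (((blockSub e m).topologicalClosure).comap Y.subtype)) := by
  set Cl := (blockSub e m).topologicalClosure with hCl
  set V := Cl.comap Y.subtype with hV
  haveI hQ : FiniteDimensional ℝ (X ⧸ Cl) := findim_quot_blockSub e hb m
  set φ : ↥Y →ₗ[ℝ] X ⧸ Cl := Cl.mkQ ∘ₗ Y.subtype with hφ
  have hker : LinearMap.ker φ = V := by
    rw [hφ, LinearMap.ker_comp, Submodule.ker_mkQ]
  haveI hYV : FiniteDimensional ℝ (↥Y ⧸ V) := by
    rw [← hker]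
    haveI : FiniteDimensional ℝ ↥(LinearMap.range φ) := inferInstance
    exact Module.Finite.equiv (LinearMap.quotKerEquivRange φ).symm
  exact findim_annihCLM V hYV

end Aux5
section Key
variable {X : Type} [NormedAddCommGroup X] [NormedSpace ℝ X]

lemma key_lower (x : ℕ → X) (F : X →L[ℝ] ℝ) (δ C : ℝ) (hδ : 0 < δ) (hC : 0 < C)
    (hFx : ∀ j, δ ≤ F (x j))
    (huncond : ∀ (k : ℕ) (a ε : ℕ → ℝ), (∀ i, ε i = 1 ∨ ε i = -1) →
      ‖∑ i ∈ Finset.range k, (ε i * a i) • x i‖ ≤ C * ‖∑ i ∈ Finset.range k, a i • x i‖)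
    (k : ℕ) (a : ℕ → ℝ) :
    (δ / ((‖F‖ + 1) * C)) * ∑ j ∈ Finset.range k, |a j|
      ≤ ‖∑ j ∈ Finset.range k, a j • x j‖ := by
  set ε : ℕ → ℝ := fun i => if a i < 0 then -1 else 1 with hε_def
  have hε : ∀ i, ε i = 1 ∨ ε i = -1 := fun i => by
    by_cases h : a i < 0 <;> simp [hε_def, h]
  have hεa : ∀ i, ε i * a i = |a i| := fun i => by
    by_cases h : a i < 0
    · simp [hε_def, h, abs_of_neg h]
    · simp [hε_def, h, abs_of_nonneg (not_lt.mp h)]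
  have h1 : δ * ∑ j ∈ Finset.range k, |a j|
      ≤ F (∑ j ∈ Finset.range k, |a j| • x j) := by
    rw [map_sum, Finset.mul_sum]
    refine Finset.sum_le_sum fun j _ => ?_
    rw [map_smul, smul_eq_mul, mul_comm]
    exact mul_le_mul_of_nonneg_left (hFx j) (abs_nonneg _)
  have h2 : F (∑ j ∈ Finset.range k, |a j| • x j)
      ≤ (‖F‖ + 1) * ‖∑ j ∈ Finset.range k, |a j| • x j‖ := by
    calc F (∑ j ∈ Finset.range k, |a j| • x j)
        ≤ ‖F (∑ j ∈ Finset.range k, |a j| • x j)‖ := le_abs_self _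
      _ ≤ ‖F‖ * ‖∑ j ∈ Finset.range k, |a j| • x j‖ := F.le_opNorm _
      _ ≤ (‖F‖ + 1) * ‖∑ j ∈ Finset.range k, |a j| • x j‖ := by
          exact mul_le_mul_of_nonneg_right (by linarith) (norm_nonneg _)
  have h3 : ‖∑ j ∈ Finset.range k, |a j| • x j‖
      ≤ C * ‖∑ j ∈ Finset.range k, a j • x j‖ := by
    have := huncond k a ε hε
    simpa only [hεa] using this
  have hP : 0 < (‖F‖ + 1) * C := by positivity
  rw [div_mul_eq_mul_div, div_le_iff₀ hP]
  calc δ * ∑ j ∈ Finset.range k, |a j|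
      ≤ (‖F‖ + 1) * (C * ‖∑ j ∈ Finset.range k, a j • x j‖) :=
        le_trans h1 (le_trans h2 (mul_le_mul_of_nonneg_left h3 (by positivity)))
    _ = ‖∑ j ∈ Finset.range k, a j • x j‖ * ((‖F‖ + 1) * C) := by ring

lemma shifted_lower (x : ℕ → X) (c : ℝ) (N : ℕ)
    (h : ∀ (k : ℕ) (a : ℕ → ℝ),
      c * ∑ j ∈ Finset.range k, |a j| ≤ ‖∑ j ∈ Finset.range k, a j • x j‖)
    (k : ℕ) (a : ℕ → ℝ) :
    c * ∑ j ∈ Finset.range k, |a j| ≤ ‖∑ j ∈ Finset.range k, a j • x (N + j)‖ := by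
  set b : ℕ → ℝ := fun i => if N ≤ i then a (i - N) else 0 with hb_def
  have h1 : ∑ i ∈ Finset.range (N + k), b i • x i
      = ∑ j ∈ Finset.range k, a j • x (N + j) := by
    rw [Finset.sum_range_add]
    have hz : ∑ i ∈ Finset.range N, b i • x i = 0 :=
      Finset.sum_eq_zero fun i hi => by
        have : ¬ N ≤ i := by
          have := Finset.mem_range.mp hi; omega
        simp [hb_def, this]
    rw [hz, zero_add]
    refine Finset.sum_congr rfl fun j _ => ?_
    have h1 : N ≤ N + j := Nat.le_add_right _ _
    have h2 : N + j - N = j := by omega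
    simp [hb_def, h1, h2]
  have h2 : ∑ i ∈ Finset.range (N + k), |b i| = ∑ j ∈ Finset.range k, |a j| := by
    rw [Finset.sum_range_add]
    have hz : ∑ i ∈ Finset.range N, |b i| = 0 :=
      Finset.sum_eq_zero fun i hi => by
        have : ¬ N ≤ i := by
          have := Finset.mem_range.mp hi; omega
        simp [hb_def, this]
    rw [hz, zero_add]
    refine Finset.sum_congr rfl fun j _ => ?_
    have h1 : N ≤ N + j := Nat.le_add_right _ _
    have h2 : N + j - N = j := by omega
    simp [hb_def, h1, h2]
  have := h (N + k) b
  rwa [h1, h2] at this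

end Key
section L1
variable {E : Type} [NormedAddCommGroup E] [NormedSpace ℝ E] [CompleteSpace E]

lemma ellOne_summable (v : ellOne) : Summable fun j => ‖v j‖ := by
  have h := (memℓp_gen_iff (p := 1) (by simp)).mp (lp.memℓp v)
  simpa using h

lemma ellOne_norm (v : ellOne) : ‖v‖ = ∑' j, ‖v j‖ := by
  have h := lp.norm_eq_tsum_rpow (p := 1) (by simp) v
  simpa using h

lemma embeds_ellOne_of_seq (u : ℕ → E) (hu : ∀ j, ‖u j‖ ≤ 1) (c : ℝ) (hc : 0 < c)
    (hlow : ∀ (k : ℕ) (a : ℕ → ℝ),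
      c * ∑ j ∈ Finset.range k, |a j| ≤ ‖∑ j ∈ Finset.range k, a j • u j‖) :
    Embeds ellOne E := by
  have hbound : ∀ (v : ellOne) (j : ℕ), ‖v j • u j‖ ≤ ‖v j‖ := by
    intro v j
    rw [norm_smul]
    calc ‖v j‖ * ‖u j‖ ≤ ‖v j‖ * 1 := by
          exact mul_le_mul_of_nonneg_left (hu j) (norm_nonneg _)
      _ = ‖v j‖ := mul_one _
  have hsum : ∀ v : ellOne, Summable fun j => v j • u j := fun v =>
    Summable.of_norm (Summable.of_nonneg_of_le (fun j => norm_nonneg _)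
      (hbound v) (ellOne_summable v))
  have hsumnorm : ∀ v : ellOne, Summable fun j => ‖v j • u j‖ := fun v =>
    Summable.of_nonneg_of_le (fun j => norm_nonneg _) (hbound v) (ellOne_summable v)
  set T0 : ellOne → E := fun v => ∑' j, v j • u j with hT0
  have hadd : ∀ v w : ellOne, T0 (v + w) = T0 v + T0 w := by
    intro v w
    rw [hT0]
    simp only
    rw [← Summable.tsum_add (hsum v) (hsum w)]
    congr 1
    ext j
    rw [lp.coeFn_add, Pi.add_apply, add_smul]
  have hsmul : ∀ (r : ℝ) (v : ellOne), T0 (r • v) = r • T0 v := by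
    intro r v
    rw [hT0]
    simp only
    rw [← ((hsum v).hasSum.const_smul r).tsum_eq]
    congr 1
    ext j
    rw [lp.coeFn_smul, Pi.smul_apply, smul_smul, smul_eq_mul]
  set T : ellOne →ₗ[ℝ] E :=
    { toFun := T0, map_add' := hadd, map_smul' := hsmul } with hT
  refine ⟨T, c, 1, hc, one_pos, fun v => ⟨?_, ?_⟩⟩
  · -- lower bound
    have hS : Tendsto (fun k => ∑ j ∈ Finset.range k, v j • u j) atTop (𝓝 (T0 v)) :=
      (hsum v).hasSum.tendsto_sum_nat
    have hSn : Tendsto (fun k => ‖∑ j ∈ Finset.range k, v j • u j‖) atTop (𝓝 ‖T0 v‖) :=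
      (continuous_norm.tendsto _).comp hS
    have ht : Tendsto (fun k => c * ∑ j ∈ Finset.range k, ‖v j‖) atTop (𝓝 (c * ‖v‖)) := by
      rw [ellOne_norm v]
      exact ((ellOne_summable v).hasSum.tendsto_sum_nat).const_mul c
    refine le_of_tendsto_of_tendsto' ht hSn fun k => ?_
    have := hlow k (fun j => v j)
    simpa [Real.norm_eq_abs] using this
  · -- upper bound
    calc ‖T v‖ ≤ ∑' j, ‖v j • u j‖ := norm_tsum_le_tsum_norm (hsumnorm v)
      _ ≤ ∑' j, ‖v j‖ := Summable.tsum_le_tsum (hbound v) (hsumnorm v) (ellOne_summable v)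
      _ = ‖v‖ := (ellOne_norm v).symm
      _ = 1 * ‖v‖ := (one_mul _).symm

end L1
theorem nonseparable_dual_subspace_contains_l1
    {X : Type} [NormedAddCommGroup X] [NormedSpace ℝ X] [CompleteSpace X]
    (e : ℕ → X) (hbasis : IsSchauderBasis e)
    (hskip : ∀ x : ℕ → X, IsSkippedBlockBasis e x → IsUnconditionalSeq x)
    (Y : Submodule ℝ X) (hYclosed : IsClosed (Y : Set X))
    (hYdual : ¬ TopologicalSpace.SeparableSpace (StrongDual ℝ ↥Y)) :
    Embeds ellOne ↥Y := by
  haveI : CompleteSpace ↥Y := hYclosed.completeSpace_coe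
  have hb : ∀ x : X, ∃ a : ℕ → ℝ,
      Tendsto (fun n => ∑ i ∈ Finset.range n, a i • e i) atTop (𝓝 x) :=
    fun x => (hbasis x).exists
  obtain ⟨f, d, hd, hfar⟩ := exists_far_functional
    (fun m => annihCLM (((blockSub e m).topologicalClosure).comap Y.subtype))
    (fun m => findim_W e hb Y m) hYdual
  have hstep : ∀ m : ℕ, ∃ y : ↥Y, ‖y‖ ≤ 1 ∧
      y ∈ ((blockSub e m).topologicalClosure).comap Y.subtype ∧ d / 2 < f y :=
    fun m => step_norm _ f d hd (hfar m)
  obtain ⟨F, hFext, hFnorm⟩ := exists_extension_norm_eq Y f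
  have hM : (0:ℝ) < ‖F‖ + 1 := by positivity
  set η : ℕ → ℝ := fun j => (d / 2) / ((‖F‖ + 1) * 2 ^ (j + 2)) with hη_def
  have hηpos : ∀ j, 0 < η j := fun j => by
    rw [hη_def]
    positivity
  have hηle : ∀ j j', j ≤ j' → η j' ≤ η j := by
    intro j j' hjj
    rw [hη_def]
    refine div_le_div_of_nonneg_left (by positivity) (by positivity) ?_
    have h2 : (2:ℝ) ^ (j + 2) ≤ 2 ^ (j' + 2) :=
      pow_le_pow_right₀ one_le_two (by omega)
    exact mul_le_mul_of_nonneg_left h2 hM.le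
  have hη4 : ∀ j, ‖F‖ * η j ≤ d / 8 := by
    intro j
    have h1 : η j ≤ (d / 2) / ((‖F‖ + 1) * 4) := by
      rw [hη_def]
      refine div_le_div_of_nonneg_left (by positivity) (by positivity) ?_
      have h2 : (4:ℝ) ≤ 2 ^ (j + 2) := by
        calc (4:ℝ) = 2 ^ 2 := by norm_num
          _ ≤ 2 ^ (j + 2) := pow_le_pow_right₀ one_le_two (by omega)
      exact mul_le_mul_of_nonneg_left h2 hM.le
    calc ‖F‖ * η j ≤ (‖F‖ + 1) * ((d / 2) / ((‖F‖ + 1) * 4)) := by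
          refine mul_le_mul (by linarith) h1 (hηpos j).le hM.le
      _ = d / 8 := by
          field_simp
          ring
  have happrox : ∀ (m : ℕ) (ηv : ℝ), 0 < ηv → ∃ (y : ↥Y) (c : ℕ → ℝ) (q : ℕ),
      ‖y‖ ≤ 1 ∧ d / 2 < f y ∧ m + 1 ≤ q ∧
      ‖(∑ i ∈ Finset.Icc (m + 1) q, c i • e i) - (y : X)‖ < ηv := by
    intro m ηv hηv
    obtain ⟨y, hy1, hyV, hyf⟩ := hstep m
    have hyCl : (y : X) ∈ closure ((blockSub e m : Set X)) := by
      have h0 := Submodule.mem_comap.mp hyV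
      rw [← Submodule.topologicalClosure_coe]
      exact h0
    obtain ⟨z, hzmem, hzy⟩ := Metric.mem_closure_iff.mp hyCl ηv hηv
    obtain ⟨c, q, hq, rfl⟩ := mem_blockSub.mp hzmem
    refine ⟨y, c, q, hy1, hyf, hq, ?_⟩
    rw [← dist_eq_norm, dist_comm]
    exact hzy
  choose yf cf qf hy1 hy2 hy3 hy4 using happrox
  let mseq : ℕ → ℕ := fun j => Nat.rec 0 (fun j mj => qf mj (η j) (hηpos j) + 1) j
  have hmsucc : ∀ j, mseq (j + 1) = qf (mseq j) (η j) (hηpos j) + 1 := fun j => rfl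
  let yseq : ℕ → ↥Y := fun j => yf (mseq j) (η j) (hηpos j)
  let cseq : ℕ → ℕ → ℝ := fun j => cf (mseq j) (η j) (hηpos j)
  let qseq : ℕ → ℕ := fun j => qf (mseq j) (η j) (hηpos j)
  let xseq : ℕ → X := fun j => ∑ i ∈ Finset.Icc (mseq j + 1) (qseq j), cseq j i • e i
  have hx_y : ∀ j, ‖xseq j - (yseq j : X)‖ < η j := fun j => hy4 _ _ _
  have hFy : ∀ j, d / 2 < F (yseq j : X) := by
    intro j
    rw [hFext (yseq j)]
    exact hy2 _ _ _
  have hFx : ∀ j, d / 4 ≤ F (xseq j) := by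
    intro j
    have h1 : |F (xseq j - (yseq j : X))| ≤ ‖F‖ * η j := by
      calc |F (xseq j - (yseq j : X))| ≤ ‖F‖ * ‖xseq j - (yseq j : X)‖ := F.le_opNorm _
        _ ≤ ‖F‖ * η j := mul_le_mul_of_nonneg_left (hx_y j).le (norm_nonneg F)
    have h2 : F (xseq j) = F (yseq j : X) + (F (xseq j) - F (yseq j : X)) := by ring
    have h3 : F (xseq j) - F (yseq j : X) = F (xseq j - (yseq j : X)) := (map_sub F _ _).symm
    have h4 := hη4 j
    have h5 := abs_le.mp h1
    have h6 := hFy j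
    rw [h2, h3]
    linarith
  have hd4 : (0:ℝ) < d / 4 := by positivity
  have hsbb : IsSkippedBlockBasis e xseq := by
    refine ⟨cseq, fun j => mseq j + 1, qseq, fun j => rfl, ?_, ?_, ?_⟩
    · intro j h0
      have := hFx j
      rw [h0, map_zero] at this
      linarith
    · intro j
      exact hy3 _ _ _
    · intro j
      have hq' : mseq (j + 1) = qseq j + 1 := hmsucc j
      show qseq j + 1 < mseq (j + 1) + 1
      omega
  obtain ⟨C, hC, hCin⟩ := hskip xseq hsbb
  have hkey : ∀ (k : ℕ) (a : ℕ → ℝ),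
      ((d / 4) / ((‖F‖ + 1) * C)) * ∑ j ∈ Finset.range k, |a j|
        ≤ ‖∑ j ∈ Finset.range k, a j • xseq j‖ :=
    key_lower xseq F (d / 4) C hd4 hC hFx hCin
  set cL : ℝ := (d / 4) / ((‖F‖ + 1) * C) with hcL_def
  have hcL : 0 < cL := by rw [hcL_def]; positivity
  obtain ⟨N, hN⟩ := pow_unbounded_of_one_lt (R := ℝ) C one_lt_two
  have hηN : η N ≤ cL / 2 := by
    have h1 : cL / 2 = (d / 8) / ((‖F‖ + 1) * C) := by
      rw [hcL_def]
      ring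
    have h2 : η N = (d / 2) / ((‖F‖ + 1) * 2 ^ (N + 2)) := rfl
    have hp : (2:ℝ) ^ (N + 2) = 4 * 2 ^ N := by
      rw [pow_add]
      ring
    rw [h2, h1, div_le_div_iff₀ (by positivity) (by positivity), hp]
    nlinarith [mul_nonneg (mul_nonneg hd.le hM.le) (sub_nonneg.mpr hN.le)]
  let u : ℕ → ↥Y := fun j => yseq (N + j)
  have hu1 : ∀ j, ‖u j‖ ≤ 1 := fun j => hy1 _ _ _
  have hlowX : ∀ (k : ℕ) (a : ℕ → ℝ),
      (cL / 2) * ∑ j ∈ Finset.range k, |a j|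
        ≤ ‖∑ j ∈ Finset.range k, a j • (u j : X)‖ := by
    intro k a
    have hB := shifted_lower xseq cL N hkey k a
    have hdiff : ‖(∑ j ∈ Finset.range k, a j • xseq (N + j))
        - (∑ j ∈ Finset.range k, a j • (u j : X))‖
          ≤ (cL / 2) * ∑ j ∈ Finset.range k, |a j| := by
      rw [← Finset.sum_sub_distrib]
      calc ‖∑ j ∈ Finset.range k, (a j • xseq (N + j) - a j • (u j : X))‖
          ≤ ∑ j ∈ Finset.range k, ‖a j • xseq (N + j) - a j • (u j : X)‖ :=
            norm_sum_le _ _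
        _ ≤ ∑ j ∈ Finset.range k, |a j| * (cL / 2) := by
            refine Finset.sum_le_sum fun j _ => ?_
            rw [← smul_sub, norm_smul, Real.norm_eq_abs]
            refine mul_le_mul_of_nonneg_left ?_ (abs_nonneg _)
            have h1 := hx_y (N + j)
            have h2 := hηle N (N + j) (Nat.le_add_right _ _)
            have h3 : ‖xseq (N + j) - (u j : X)‖ < η (N + j) := h1
            linarith [hηN]
        _ = (∑ j ∈ Finset.range k, |a j|) * (cL / 2) := by rw [← Finset.sum_mul]
        _ = (cL / 2) * ∑ j ∈ Finset.range k, |a j| := mul_comm _ _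
    have h3 := norm_sub_norm_le (∑ j ∈ Finset.range k, a j • xseq (N + j))
      (∑ j ∈ Finset.range k, a j • (u j : X))
    linarith
  have hlowY : ∀ (k : ℕ) (a : ℕ → ℝ),
      (cL / 2) * ∑ j ∈ Finset.range k, |a j|
        ≤ ‖∑ j ∈ Finset.range k, a j • u j‖ := by
    intro k a
    have hc : ((∑ j ∈ Finset.range k, a j • u j : ↥Y) : X)
        = ∑ j ∈ Finset.range k, a j • (u j : X) := by
      simp
    rw [Submodule.coe_norm, hc]
    exact hlowX k a
  exact embeds_ellOne_of_seq u hu1 (cL / 2) (by positivity) hlowY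
end

section
/- If (e_i) is a normalized spreading Schauder basis of a Banach space X, then the closed linear span Y of the sequence (e_{2n−1} − e_{2n})_{n≥1} is complemented in X: there exists a bounded linear projection from X onto Y. -/
open Filter Finset Topology NormedSpace
open scoped NNReal

private lemma sum_pair {X : Type} [AddCommMonoid X] (f : ℕ → X) (k : ℕ) :
    ∑ i ∈ Finset.range (2*k), f i = ∑ n ∈ Finset.range k, (f (2*n) + f (2*n+1)) := by
  induction k with
  | zero => simp
  | succ k ih =>
    rw [Finset.sum_range_succ, ← ih, show 2*(k+1) = (2*k)+1+1 from by ring,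
      Finset.sum_range_succ, Finset.sum_range_succ, add_assoc]

private def sp1 (i : ℕ) : ℕ := 3*(i/2) + i%2
private def sp2 (i : ℕ) : ℕ := 3*(i/2) + 2*(i%2)
private def sp3 (i : ℕ) : ℕ := 3*(i/2) + 1 + i%2

private lemma sp1_mono : StrictMono sp1 :=
  strictMono_nat_of_lt_succ (fun n => by unfold sp1; omega)
private lemma sp2_mono : StrictMono sp2 :=
  strictMono_nat_of_lt_succ (fun n => by unfold sp2; omega)
private lemma sp3_mono : StrictMono sp3 :=
  strictMono_nat_of_lt_succ (fun n => by unfold sp3; omega)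

private lemma sp1_even (n : ℕ) : sp1 (2*n) = 3*n := by unfold sp1; omega
private lemma sp1_odd (n : ℕ) : sp1 (2*n+1) = 3*n+1 := by unfold sp1; omega
private lemma sp2_even (n : ℕ) : sp2 (2*n) = 3*n := by unfold sp2; omega
private lemma sp2_odd (n : ℕ) : sp2 (2*n+1) = 3*n+2 := by unfold sp2; omega
private lemma sp3_even (n : ℕ) : sp3 (2*n) = 3*n+1 := by unfold sp3; omega
private lemma sp3_odd (n : ℕ) : sp3 (2*n+1) = 3*n+2 := by unfold sp3; omega

private def flat (a : ℕ → ℝ) (i : ℕ) : ℝ := if i % 2 = 0 then a i else -a (i-1)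

private lemma flat_even (a : ℕ → ℝ) (n : ℕ) : flat a (2*n) = a (2*n) := by
  unfold flat; rw [if_pos (by omega)]
private lemma flat_odd (a : ℕ → ℝ) (n : ℕ) : flat a (2*n+1) = -a (2*n) := by
  unfold flat; rw [if_neg (by omega), show 2*n+1-1 = 2*n from by omega]

private lemma key_estimate {X : Type} [NormedAddCommGroup X] [NormedSpace ℝ X]
    (e : ℕ → X) (hspread : IsSpreading e) :
    ∃ K : ℝ, 0 ≤ K ∧ ∀ (k : ℕ) (a : ℕ → ℝ),
      ‖∑ n ∈ Finset.range k, (a (2*n) - a (2*n+1)) • (e (2*n) - e (2*n+1))‖ ≤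
        K * ‖∑ i ∈ Finset.range (2*k), a i • e i‖ := by
  obtain ⟨C1, hC1, h1⟩ := hspread sp1 sp1_mono
  obtain ⟨C2, hC2, h2⟩ := hspread sp2 sp2_mono
  obtain ⟨C3, hC3, h3⟩ := hspread sp3 sp3_mono
  refine ⟨C1*(C2+C3) + C3*(C1+C2), by nlinarith, fun k a => ?_⟩
  set x : ℝ := ‖∑ i ∈ Finset.range (2*k), a i • e i‖ with hx
  have hx0 : 0 ≤ x := norm_nonneg _
  -- Step A : even-difference sums at spread positions
  have hA : ∑ n ∈ Finset.range k, a (2*n) • (e (3*n) - e (3*n+1))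
      = (∑ i ∈ Finset.range (2*k), a i • e (sp2 i)) - (∑ i ∈ Finset.range (2*k), a i • e (sp3 i)) := by
    rw [sum_pair (fun i => a i • e (sp2 i)), sum_pair (fun i => a i • e (sp3 i)),
      ← Finset.sum_sub_distrib]
    refine Finset.sum_congr rfl fun n _ => ?_
    rw [sp2_even, sp2_odd, sp3_even, sp3_odd, smul_sub]
    abel
  have bA : ‖∑ n ∈ Finset.range k, a (2*n) • (e (3*n) - e (3*n+1))‖ ≤ (C2 + C3) * x := by
    rw [hA]
    calc ‖_ - _‖ ≤ ‖∑ i ∈ Finset.range (2*k), a i • e (sp2 i)‖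
          + ‖∑ i ∈ Finset.range (2*k), a i • e (sp3 i)‖ := norm_sub_le _ _
      _ ≤ C2 * x + C3 * x := add_le_add (h2 (2*k) a).2 (h3 (2*k) a).2
      _ = (C2 + C3) * x := by ring
  -- Step B : odd-difference sums
  have hB : ∑ n ∈ Finset.range k, a (2*n+1) • (e (3*n+1) - e (3*n+2))
      = (∑ i ∈ Finset.range (2*k), a i • e (sp1 i)) - (∑ i ∈ Finset.range (2*k), a i • e (sp2 i)) := by
    rw [sum_pair (fun i => a i • e (sp1 i)), sum_pair (fun i => a i • e (sp2 i)),
      ← Finset.sum_sub_distrib]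
    refine Finset.sum_congr rfl fun n _ => ?_
    rw [sp1_even, sp1_odd, sp2_even, sp2_odd, smul_sub]
    abel
  have bB : ‖∑ n ∈ Finset.range k, a (2*n+1) • (e (3*n+1) - e (3*n+2))‖ ≤ (C1 + C2) * x := by
    rw [hB]
    calc ‖_ - _‖ ≤ ‖∑ i ∈ Finset.range (2*k), a i • e (sp1 i)‖
          + ‖∑ i ∈ Finset.range (2*k), a i • e (sp2 i)‖ := norm_sub_le _ _
      _ ≤ C1 * x + C2 * x := add_le_add (h1 (2*k) a).2 (h2 (2*k) a).2
      _ = (C1 + C2) * x := by ring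
  -- Step C even : bring the even-difference sum back to positions (2n, 2n+1)
  have hCe1 : ∑ i ∈ Finset.range (2*k), flat a i • e i
      = ∑ n ∈ Finset.range k, a (2*n) • (e (2*n) - e (2*n+1)) := by
    rw [sum_pair (fun i => flat a i • e i)]
    refine Finset.sum_congr rfl fun n _ => ?_
    rw [flat_even, flat_odd, smul_sub, neg_smul]
    abel
  have hCe2 : ∑ i ∈ Finset.range (2*k), flat a i • e (sp1 i)
      = ∑ n ∈ Finset.range k, a (2*n) • (e (3*n) - e (3*n+1)) := by
    rw [sum_pair (fun i => flat a i • e (sp1 i))]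
    refine Finset.sum_congr rfl fun n _ => ?_
    rw [flat_even, flat_odd, sp1_even, sp1_odd, smul_sub, neg_smul]
    abel
  have bCe : ‖∑ n ∈ Finset.range k, a (2*n) • (e (2*n) - e (2*n+1))‖ ≤ C1 * ((C2+C3) * x) := by
    rw [← hCe1]
    calc ‖_‖ ≤ C1 * ‖∑ i ∈ Finset.range (2*k), flat a i • e (sp1 i)‖ := (h1 (2*k) (flat a)).1
      _ ≤ C1 * ((C2+C3) * x) := by
          rw [hCe2]; exact mul_le_mul_of_nonneg_left bA (by linarith)
  -- Step C odd
  have hCo1 : ∑ i ∈ Finset.range (2*k), flat (fun i => a (i+1)) i • e i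
      = ∑ n ∈ Finset.range k, a (2*n+1) • (e (2*n) - e (2*n+1)) := by
    rw [sum_pair (fun i => flat (fun i => a (i+1)) i • e i)]
    refine Finset.sum_congr rfl fun n _ => ?_
    rw [flat_even, flat_odd, smul_sub, neg_smul]
    abel
  have hCo2 : ∑ i ∈ Finset.range (2*k), flat (fun i => a (i+1)) i • e (sp3 i)
      = ∑ n ∈ Finset.range k, a (2*n+1) • (e (3*n+1) - e (3*n+2)) := by
    rw [sum_pair (fun i => flat (fun i => a (i+1)) i • e (sp3 i))]
    refine Finset.sum_congr rfl fun n _ => ?_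
    rw [flat_even, flat_odd, sp3_even, sp3_odd, smul_sub, neg_smul]
    abel
  have bCo : ‖∑ n ∈ Finset.range k, a (2*n+1) • (e (2*n) - e (2*n+1))‖ ≤ C3 * ((C1+C2) * x) := by
    rw [← hCo1]
    calc ‖_‖ ≤ C3 * ‖∑ i ∈ Finset.range (2*k), flat (fun i => a (i+1)) i • e (sp3 i)‖ :=
          (h3 (2*k) (flat (fun i => a (i+1)))).1
      _ ≤ C3 * ((C1+C2) * x) := by
          rw [hCo2]; exact mul_le_mul_of_nonneg_left bB (by linarith)
  -- combine
  have hsplit : ∑ n ∈ Finset.range k, (a (2*n) - a (2*n+1)) • (e (2*n) - e (2*n+1))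
      = (∑ n ∈ Finset.range k, a (2*n) • (e (2*n) - e (2*n+1)))
        - ∑ n ∈ Finset.range k, a (2*n+1) • (e (2*n) - e (2*n+1)) := by
    rw [← Finset.sum_sub_distrib]
    exact Finset.sum_congr rfl fun n _ => by rw [sub_smul]
  rw [hsplit]
  calc ‖_ - _‖ ≤ ‖∑ n ∈ Finset.range k, a (2*n) • (e (2*n) - e (2*n+1))‖
        + ‖∑ n ∈ Finset.range k, a (2*n+1) • (e (2*n) - e (2*n+1))‖ := norm_sub_le _ _
    _ ≤ C1 * ((C2+C3) * x) + C3 * ((C1+C2) * x) := add_le_add bCe bCo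
    _ = (C1*(C2+C3) + C3*(C1+C2)) * x := by ring

private def pairCoef (m i : ℕ) : ℝ := if i = 2*m then 1 else if i = 2*m+1 then -1 else 0

private lemma pairCoef_sum {X : Type} [NormedAddCommGroup X] [NormedSpace ℝ X]
    (e : ℕ → X) (m n : ℕ) (h : 2*m+1 < n) :
    ∑ i ∈ Finset.range n, pairCoef m i • e i = e (2*m) - e (2*m+1) := by
  have hpt : ∀ i, pairCoef m i • e i
      = (if i = 2*m then e i else 0) + (if i = 2*m+1 then -e i else 0) := by
    intro i
    unfold pairCoef
    by_cases h1 : i = 2*m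
    · subst h1; rw [if_pos rfl, if_pos rfl, if_neg (by omega)]; simp
    · by_cases h2 : i = 2*m+1
      · subst h2; rw [if_neg h1, if_pos rfl, if_neg h1, if_pos rfl]; simp
      · rw [if_neg h1, if_neg h2, if_neg h1, if_neg h2]; simp
  rw [Finset.sum_congr rfl (fun i _ => hpt i), Finset.sum_add_distrib,
    Finset.sum_ite_eq' (Finset.range n) (2*m) e,
    Finset.sum_ite_eq' (Finset.range n) (2*m+1) (fun i => -e i)]
  rw [if_pos (Finset.mem_range.2 (by omega)), if_pos (Finset.mem_range.2 (by omega))]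
  abel

private lemma pairCoef_diff (m n : ℕ) :
    pairCoef m (2*n) - pairCoef m (2*n+1) = if n = m then (2:ℝ) else 0 := by
  unfold pairCoef
  split_ifs <;> norm_num <;> omega

theorem difference_subspace_complemented
    {X : Type} [NormedAddCommGroup X] [NormedSpace ℝ X] [CompleteSpace X]
    (e : ℕ → X) (hnorm : ∀ i, ‖e i‖ = 1) (hbasis : IsSchauderBasis e)
    (hspread : IsSpreading e) :
    ∃ P : X →L[ℝ] X, (∀ x, P (P x) = P x) ∧
      LinearMap.range (P : X →ₗ[ℝ] X) =
        (Submodule.span ℝ (Set.range fun n => e (2 * n) - e (2 * n + 1))).topologicalClosure := by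
  classical
  choose coef hcoef huniq using hbasis
  -- linearity of the coefficient functionals
  have coef_add : ∀ x y : X, coef (x + y) = coef x + coef y := by
    intro x y
    refine (huniq (x + y) (coef x + coef y) ?_).symm
    refine Tendsto.congr (fun n => ?_) ((hcoef x).add (hcoef y))
    rw [← Finset.sum_add_distrib]
    exact Finset.sum_congr rfl fun i _ => by rw [Pi.add_apply, add_smul]
  have coef_smul : ∀ (r : ℝ) (x : X), coef (r • x) = r • coef x := by
    intro r x
    refine (huniq (r • x) (r • coef x) ?_).symm
    refine Tendsto.congr (fun n => ?_) ((hcoef x).const_smul r)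
    rw [Finset.smul_sum]
    exact Finset.sum_congr rfl fun i _ => by
      rw [Pi.smul_apply, smul_smul, smul_eq_mul]
  obtain ⟨K, hK0, hkey⟩ := key_estimate e hspread
  -- sums of truncated sequences
  have truncsum : ∀ (g : ℕ → X) (m k : ℕ), m ≤ k →
      ∑ n ∈ Finset.range k, (if n < m then g n else 0) = ∑ n ∈ Finset.range m, g n := by
    intro g m k hmk
    calc ∑ n ∈ Finset.range k, (if n < m then g n else 0)
        = ∑ n ∈ Finset.range m, (if n < m then g n else 0) :=
          (Finset.sum_subset (Finset.range_subset_range.2 hmk)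
            (fun n _ hn => if_neg (fun h => hn (Finset.mem_range.2 h)))).symm
      _ = ∑ n ∈ Finset.range m, g n :=
          Finset.sum_congr rfl fun n hn => if_pos (Finset.mem_range.1 hn)
  -- segment estimate
  have hseg : ∀ (x : X) (m k : ℕ), m ≤ k →
      ‖(∑ n ∈ Finset.range k, (coef x (2*n) - coef x (2*n+1)) • (e (2*n) - e (2*n+1)))
        - ∑ n ∈ Finset.range m, (coef x (2*n) - coef x (2*n+1)) • (e ( 2*n) - e (2*n+1))‖
      ≤ K * ‖(∑ i ∈ Finset.range (2*k), coef x i • e i)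
            - ∑ i ∈ Finset.range (2*m), coef x i • e i‖ := by
    intro x m k hmk
    set a : ℕ → ℝ := fun i => if i < 2*m then 0 else coef x i with ha
    have h1 : ∑ n ∈ Finset.range k, (a (2*n) - a (2*n+1)) • (e (2*n) - e (2*n+1))
        = (∑ n ∈ Finset.range k, (coef x (2*n) - coef x (2*n+1)) • (e (2*n) - e (2*n+1)))
          - ∑ n ∈ Finset.range m, (coef x (2*n) - coef x (2*n+1)) • (e (2*n) - e (2*n+1)) := by
      have hterm : ∀ n, (a (2*n) - a (2*n+1)) • (e (2*n) - e (2*n+1))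
          = (coef x (2*n) - coef x (2*n+1)) • (e (2*n) - e (2*n+1))
            - (if n < m then (coef x (2*n) - coef x (2*n+1)) • (e (2*n) - e (2*n+1)) else 0) := by
        intro n
        by_cases h : n < m
        · rw [if_pos h]
          simp [ha, show 2*n < 2*m from by omega, show 2*n+1 < 2*m from by omega]
        · rw [if_neg h, sub_zero]
          simp [ha, show ¬(2*n < 2*m) from by omega, show ¬(2*n+1 < 2*m) from by omega]
      rw [Finset.sum_congr rfl (fun n _ => hterm n), Finset.sum_sub_distrib,
        truncsum _ m k hmk]
    have h2 : ∑ i ∈ Finset.range (2*k), a i • e i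
        = (∑ i ∈ Finset.range (2*k), coef x i • e i)
          - ∑ i ∈ Finset.range (2*m), coef x i • e i := by
      have hterm : ∀ i, a i • e i
          = coef x i • e i - (if i < 2*m then coef x i • e i else 0) := by
        intro i
        by_cases h : i < 2*m
        · rw [if_pos h]; simp [ha, h]
        · rw [if_neg h, sub_zero]; simp [ha, h]
      rw [Finset.sum_congr rfl (fun i _ => hterm i), Finset.sum_sub_distrib,
        truncsum _ (2*m) (2*k) (by omega)]
    rw [← h1, ← h2]
    exact hkey k a
  -- convergence of the projected series
  have h2k : Tendsto (fun k : ℕ => 2*k) atTop atTop :=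
    tendsto_atTop_atTop.2 fun b => ⟨b, fun a ha => by omega⟩
  have hcau : ∀ x : X, CauchySeq (fun k =>
      ∑ n ∈ Finset.range k, (coef x (2*n) - coef x (2*n+1)) • (e (2*n) - e (2*n+1))) := by
    intro x
    have hS : CauchySeq (fun j => ∑ i ∈ Finset.range j, coef x i • e i) := (hcoef x).cauchySeq
    rw [Metric.cauchySeq_iff] at hS ⊢
    intro ε hε
    obtain ⟨N, hN⟩ := hS (ε / (K+1)) (by positivity)
    refine ⟨N, fun p hp q hq => ?_⟩
    have main : ∀ u v : ℕ, N ≤ u → N ≤ v → v ≤ u →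
        dist (∑ n ∈ Finset.range u, (coef x (2*n) - coef x (2*n+1)) • (e (2*n) - e (2*n+1)))
          (∑ n ∈ Finset.range v, (coef x (2*n) - coef x (2*n+1)) • (e (2*n) - e (2*n+1))) < ε := by
      intro u v hu hv hvu
      rw [dist_eq_norm]
      have h3 := hseg x v u hvu
      have h4 := hN (2*u) (by omega) (2*v) (by omega)
      rw [dist_eq_norm] at h4
      calc ‖_ - _‖ ≤ K * ‖(∑ i ∈ Finset.range (2*u), coef x i • e i)
            - ∑ i ∈ Finset.range (2*v), coef x i • e i‖ := h3
        _ ≤ K * (ε / (K+1)) := mul_le_mul_of_nonneg_left h4.le hK0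
        _ < ε := by
            have h5 : K * (ε / (K+1)) = (K/(K+1)) * ε := by ring
            have h6 : K/(K+1) < 1 := (div_lt_one (by linarith)).2 (by linarith)
            nlinarith
    rcases le_total q p with h | h
    · exact main p q hp hq h
    · rw [dist_comm]; exact main q p hq hp h
  have hlim : ∀ x : X, ∃ y : X, Tendsto (fun k =>
      ∑ n ∈ Finset.range k, (coef x (2*n) - coef x (2*n+1)) • (e (2*n) - e (2*n+1)))
      atTop (𝓝 y) := fun x => cauchySeq_tendsto_of_complete (hcau x)
  choose Tf hTf using hlim
  -- linearity of Tf
  have Tadd : ∀ x y : X, Tf (x + y) = Tf x + Tf y := by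
    intro x y
    refine tendsto_nhds_unique (hTf (x + y)) ?_
    refine Tendsto.congr (fun k => ?_) ((hTf x).add (hTf y))
    rw [← Finset.sum_add_distrib]
    refine Finset.sum_congr rfl fun n _ => ?_
    rw [coef_add, Pi.add_apply, Pi.add_apply, ← add_smul]
    congr 1
    ring
  have Tsmul : ∀ (r : ℝ) (x : X), Tf (r • x) = r • Tf x := by
    intro r x
    refine tendsto_nhds_unique (hTf (r • x)) ?_
    refine Tendsto.congr (fun k => ?_) ((hTf x).const_smul r)
    rw [Finset.smul_sum]
    refine Finset.sum_congr rfl fun n _ => ?_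
    rw [coef_smul, Pi.smul_apply, Pi.smul_apply, smul_smul, smul_eq_mul, smul_eq_mul]
    congr 1
    ring
  have Tbound : ∀ x : X, ‖Tf x‖ ≤ K * ‖x‖ := by
    intro x
    have l1 : Tendsto (fun k => ‖∑ n ∈ Finset.range k,
        (coef x (2*n) - coef x (2*n+1)) • (e (2*n) - e (2*n+1))‖) atTop (𝓝 ‖Tf x‖) :=
      (hTf x).norm
    have l2 : Tendsto (fun k => K * ‖∑ i ∈ Finset.range (2*k), coef x i • e i‖)
        atTop (𝓝 (K * ‖x‖)) := ((hcoef x).comp h2k).norm.const_mul K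
    exact le_of_tendsto_of_tendsto' l1 l2 fun k => hkey k (coef x)
  let L : X →ₗ[ℝ] X := { toFun := Tf, map_add' := Tadd, map_smul' := Tsmul }
  let T : X →L[ℝ] X := LinearMap.mkContinuous L K Tbound
  set Y := (Submodule.span ℝ (Set.range fun n => e (2 * n) - e (2 * n + 1))).topologicalClosure
    with hY
  have hTmem : ∀ x : X, Tf x ∈ Y := by
    intro x
    rw [hY, ← SetLike.mem_coe, Submodule.topologicalClosure_coe]
    refine mem_closure_of_tendsto (hTf x) (Filter.Eventually.of_forall fun k => ?_)
    simp only [SetLike.mem_coe]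
    exact Submodule.sum_mem _ fun n _ => Submodule.smul_mem _ _ (Submodule.subset_span ⟨n, rfl⟩)
  -- generators are fixed up to a factor 2
  have hgen : ∀ m : ℕ, Tf (e (2*m) - e (2*m+1)) = (2:ℝ) • (e (2*m) - e (2*m+1)) := by
    intro m
    have hc : pairCoef m = coef (e (2*m) - e (2*m+1)) := by
      refine huniq _ _ ?_
      have heq : (fun _ : ℕ => e (2*m) - e (2*m+1)) =ᶠ[atTop]
          (fun n => ∑ i ∈ Finset.range n, pairCoef m i • e i) := by
        filter_upwards [eventually_ge_atTop (2*m+2)] with n hn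
        exact (pairCoef_sum e m n (by omega)).symm
      exact Filter.Tendsto.congr' heq tendsto_const_nhds
    have hQd : ∀ k, m < k →
        ∑ n ∈ Finset.range k, (coef (e (2*m) - e (2*m+1)) (2*n)
            - coef (e (2*m) - e (2*m+1)) (2*n+1)) • (e (2*n) - e (2*n+1))
          = (2:ℝ) • (e (2*m) - e (2*m+1)) := by
      intro k hk
      have hterm : ∀ n, (coef (e (2*m) - e (2*m+1)) (2*n)
            - coef (e (2*m) - e (2*m+1)) (2*n+1)) • (e (2*n) - e (2*n+1))
          = if n = m then (2:ℝ) • (e (2*m) - e (2*m+1)) else 0 := by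
        intro n
        rw [← hc, pairCoef_diff]
        by_cases h : n = m
        · subst h; rw [if_pos rfl, if_pos rfl]
        · rw [if_neg h, if_neg h, zero_smul]
      rw [Finset.sum_congr rfl fun n _ => hterm n,
        Finset.sum_ite_eq' (Finset.range k) m (fun _ => (2:ℝ) • (e (2*m) - e (2*m+1))),
        if_pos (Finset.mem_range.2 hk)]
    refine tendsto_nhds_unique (hTf _) ?_
    have heq2 : (fun _ : ℕ => (2:ℝ) • (e (2*m) - e (2*m+1))) =ᶠ[atTop]
        (fun k => ∑ n ∈ Finset.range k, (coef (e (2*m) - e (2*m+1)) (2*n)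
            - coef (e (2*m) - e (2*m+1)) (2*n+1)) • (e (2*n) - e (2*n+1))) := by
      filter_upwards [eventually_gt_atTop m] with k hk
      exact (hQd k hk).symm
    exact Filter.Tendsto.congr' heq2 tendsto_const_nhds
  let P : X →L[ℝ] X := (2:ℝ)⁻¹ • T
  have hPapp : ∀ x : X, P x = (2:ℝ)⁻¹ • Tf x := fun x => rfl
  have hPmem : ∀ x : X, P x ∈ Y := fun x => by
    rw [hPapp]; exact Submodule.smul_mem _ _ (hTmem x)
  have hPgen : ∀ m : ℕ, P (e (2*m) - e (2*m+1)) = e (2*m) - e (2*m+1) := by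
    intro m
    rw [hPapp, hgen, smul_smul]
    norm_num
  have hPspan : ∀ y ∈ Submodule.span ℝ (Set.range fun n => e (2 * n) - e (2 * n + 1)),
      P y = y := by
    intro y hy
    induction hy using Submodule.span_induction with
    | mem z hz => obtain ⟨m, rfl⟩ := hz; exact hPgen m
    | zero => exact map_zero P
    | add u v _ _ hu hv => rw [map_add, hu, hv]
    | smul r u _ hu => rw [map_smul, hu]
  have hPclos : ∀ y ∈ Y, P y = y := by
    intro y hy
    have hyc : y ∈ closure
        ((Submodule.span ℝ (Set.range fun n => e (2 * n) - e (2 * n + 1)) : Set X)) := by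
      rw [← Submodule.topologicalClosure_coe]; exact hy
    have hsub : closure
        ((Submodule.span ℝ (Set.range fun n => e (2 * n) - e (2 * n + 1)) : Set X))
        ⊆ {z : X | P z = z} :=
      closure_minimal (fun z hz => hPspan z hz) (isClosed_eq P.continuous continuous_id)
    exact hsub hyc
  refine ⟨P, fun x => hPclos _ (hPmem x), ?_⟩
  ext z
  simp only [LinearMap.mem_range, ContinuousLinearMap.coe_coe]
  constructor
  · rintro ⟨x, rfl⟩; exact hPmem x
  · intro hz; exact ⟨z, hPclos z hz⟩
end
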